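/- arXiv:2603.05233 — 8 statements merged into one kernel-verified Lean document; each statement's English description precedes it below -/
import Mathlib

section
/- There exists a constant c_d > 0 depending only on the dimension d such that for every d ≥ 2, every n ∈ ℕ, all points x_1, …, x_n on the unit sphere S^{d-1} of ℝ^d, and all positive reals α_1, …, α_n, one has ∫_{B^d} | Σ_{k=1}^n α_k (x_k - x)/|x_k - x|^d | dm(x) ≥ c_d · (Σ_{k=1}^n α_k^{1+2/d}) / (Σ_{k=1}^n α_k^{2/d}), where the integrand is the Euclidean norm of the vector-valued sum. -/
open MeasureTheory

namespace WeightedNewman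

open Metric Set Real Finset
open scoped NNReal ENNReal RealInnerProductSpace
set_option maxHeartbeats 1000000

variable {d n : ℕ}

lemma two_var_rpow_subadd {a b p : ℝ} (ha : 0 ≤ a) (hb : 0 ≤ b) (h0 : 0 ≤ p) (h1 : p ≤ 1) :
    (a + b) ^ p ≤ a ^ p + b ^ p := by
  have := NNReal.rpow_add_le_add_rpow a.toNNReal b.toNNReal h0 h1
  rw [← Real.toNNReal_add ha hb] at this
  have h3 := NNReal.coe_le_coe.2 this
  rw [NNReal.coe_rpow, NNReal.coe_add, NNReal.coe_rpow, NNReal.coe_rpow,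
    Real.coe_toNNReal _ (by positivity), Real.coe_toNNReal _ ha, Real.coe_toNNReal _ hb] at h3
  exact h3

lemma sum_rpow_subadd {ι : Type*} (s : Finset ι) (f : ι → ℝ) (hf : ∀ i ∈ s, 0 ≤ f i)
    {p : ℝ} (h0 : 0 < p) (h1 : p ≤ 1) :
    (∑ i ∈ s, f i) ^ p ≤ ∑ i ∈ s, f i ^ p := by
  induction s using Finset.cons_induction with
  | empty => simp [Real.zero_rpow h0.ne']
  | cons a s ha ih =>
    rw [Finset.sum_cons, Finset.sum_cons]
    have hfa := hf a (Finset.mem_cons_self a s)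
    have hfs : ∀ i ∈ s, 0 ≤ f i := fun i hi => hf i (Finset.mem_cons_of_mem hi)
    calc (f a + ∑ i ∈ s, f i) ^ p ≤ f a ^ p + (∑ i ∈ s, f i) ^ p :=
          two_var_rpow_subadd hfa (Finset.sum_nonneg hfs) h0.le h1
      _ ≤ f a ^ p + ∑ i ∈ s, f i ^ p := by gcongr; exact ih hfs


lemma finite_lintegral_riesz {d k : ℕ} (hk : 0 < k) (hkd : k < d)
    (w : EuclideanSpace ℝ (Fin d)) (R : ℝ) :
    ∫⁻ y in ball (0 : EuclideanSpace ℝ (Fin d)) R,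
      ENNReal.ofReal ((‖w - y‖ ^ k)⁻¹) < ∞ := by
  set μ : Measure (EuclideanSpace ℝ (Fin d)) := volume.restrict (ball 0 R) with hμ
  have hmeas : Measurable fun y : EuclideanSpace ℝ (Fin d) => (‖w - y‖ ^ k)⁻¹ := by fun_prop
  have hnn : ∀ y : EuclideanSpace ℝ (Fin d), 0 ≤ (‖w - y‖ ^ k)⁻¹ := fun y => by positivity
  rw [lintegral_eq_lintegral_meas_le μ (ae_of_all _ hnn) hmeas.aemeasurable]
  have hball : volume (ball (0 : EuclideanSpace ℝ (Fin d)) R) < ∞ := measure_ball_lt_top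
  have hsub : ∀ t : ℝ, 1 < t →
      {a : EuclideanSpace ℝ (Fin d) | t ≤ (‖w - a‖ ^ k)⁻¹} ⊆
        closedBall w (t ^ (-(k:ℝ)⁻¹)) := by
    intro t ht a hta
    simp only [mem_setOf_eq] at hta
    have ht0 : (0:ℝ) < t := by linarith
    have hx : ‖w - a‖ ^ k ≤ t⁻¹ := by
      have h2 := inv_anti₀ ht0 hta
      rwa [inv_inv] at h2
    have h1 : (‖w - a‖ ^ k) ^ ((k:ℝ)⁻¹) ≤ (t⁻¹) ^ ((k:ℝ)⁻¹) :=
      Real.rpow_le_rpow (by positivity) hx (by positivity)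
    rw [Real.pow_rpow_inv_natCast (norm_nonneg _) hk.ne', Real.inv_rpow ht0.le,
      ← Real.rpow_neg ht0.le] at h1
    rw [mem_closedBall, dist_comm, dist_eq_norm]
    exact h1
  calc ∫⁻ t in Ioi (0:ℝ), μ {a | t ≤ (‖w - a‖ ^ k)⁻¹}
      ≤ ∫⁻ t in Ioc (0:ℝ) 1 ∪ Ioi 1, μ {a | t ≤ (‖w - a‖ ^ k)⁻¹} :=
        lintegral_mono_set Ioi_subset_Ioc_union_Ioi
    _ ≤ (∫⁻ t in Ioc (0:ℝ) 1, μ {a | t ≤ (‖w - a‖ ^ k)⁻¹})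
        + ∫⁻ t in Ioi (1:ℝ), μ {a | t ≤ (‖w - a‖ ^ k)⁻¹} := lintegral_union_le _ _ _
    _ < ∞ := by
        refine ENNReal.add_lt_top.2 ⟨?_, ?_⟩
        · calc ∫⁻ t in Ioc (0:ℝ) 1, μ {a | t ≤ (‖w - a‖ ^ k)⁻¹}
              ≤ ∫⁻ _ in Ioc (0:ℝ) 1, volume (ball (0 : EuclideanSpace ℝ (Fin d)) R) := by
                refine setLIntegral_mono' measurableSet_Ioc fun t _ => ?_
                calc μ {a | t ≤ (‖w - a‖ ^ k)⁻¹} ≤ μ univ := measure_mono (subset_univ _)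
                  _ = volume (ball (0 : EuclideanSpace ℝ (Fin d)) R) := by
                      rw [hμ, Measure.restrict_apply_univ]
            _ = volume (ball (0 : EuclideanSpace ℝ (Fin d)) R) * volume (Ioc (0:ℝ) 1) :=
                setLIntegral_const _ _
            _ < ∞ := by
                refine ENNReal.mul_lt_top hball ?_
                simp [Real.volume_Ioc]
        · have hd1 : (-(d:ℝ)/(k:ℝ)) < -1 := by
            rw [neg_div, neg_lt_neg_iff]
            rw [lt_div_iff₀ (by exact_mod_cast hk)]
            rw [one_mul]
            exact_mod_cast hkd
          have hint := (integrableOn_Ioi_rpow_of_lt hd1 one_pos).setLIntegral_lt_top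
          calc ∫⁻ t in Ioi (1:ℝ), μ {a | t ≤ (‖w - a‖ ^ k)⁻¹}
              ≤ ∫⁻ t in Ioi (1:ℝ), ENNReal.ofReal (t ^ (-(d:ℝ)/(k:ℝ)))
                  * volume (ball (0 : EuclideanSpace ℝ (Fin d)) 1) := by
                refine setLIntegral_mono' measurableSet_Ioi fun t ht => ?_
                have ht1 : (1:ℝ) < t := ht
                have ht0 : (0:ℝ) < t := by linarith
                calc μ {a | t ≤ (‖w - a‖ ^ k)⁻¹}
                    ≤ μ (closedBall w (t ^ (-(k:ℝ)⁻¹))) := measure_mono (hsub t ht1)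
                  _ ≤ volume (closedBall w (t ^ (-(k:ℝ)⁻¹))) :=
                      Measure.restrict_le_self _
                  _ = ENNReal.ofReal ((t ^ (-(k:ℝ)⁻¹)) ^ (Module.finrank ℝ (EuclideanSpace ℝ (Fin d))))
                        * volume (ball (0 : EuclideanSpace ℝ (Fin d)) 1) :=
                      Measure.addHaar_closedBall _ _ (Real.rpow_nonneg ht0.le _)
                  _ = ENNReal.ofReal (t ^ (-(d:ℝ)/(k:ℝ)))
                        * volume (ball (0 : EuclideanSpace ℝ (Fin d)) 1) := by
                      congr 2
                      rw [finrank_euclideanSpace_fin, ← Real.rpow_natCast (t ^ (-(k:ℝ)⁻¹)) d,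
                        ← Real.rpow_mul ht0.le]
                      congr 1
                      field_simp
            _ = (∫⁻ t in Ioi (1:ℝ), ENNReal.ofReal (t ^ (-(d:ℝ)/(k:ℝ))))
                  * volume (ball (0 : EuclideanSpace ℝ (Fin d)) 1) :=
                lintegral_mul_const' _ _ measure_ball_lt_top.ne
            _ < ∞ := ENNReal.mul_lt_top hint measure_ball_lt_top

lemma integrableOn_riesz {d k : ℕ} (hk : 0 < k) (hkd : k < d)
    (w : EuclideanSpace ℝ (Fin d)) (R : ℝ) :
    IntegrableOn (fun y : EuclideanSpace ℝ (Fin d) => (‖w - y‖ ^ k)⁻¹) (ball 0 R) := by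
  constructor
  · exact (by fun_prop :
      Measurable fun y : EuclideanSpace ℝ (Fin d) => (‖w - y‖ ^ k)⁻¹).aestronglyMeasurable
  · rw [hasFiniteIntegral_iff_norm]
    have : ∀ y : EuclideanSpace ℝ (Fin d),
        ENNReal.ofReal ‖(‖w - y‖ ^ k)⁻¹‖ = ENNReal.ofReal ((‖w - y‖ ^ k)⁻¹) := fun y => by
      rw [Real.norm_of_nonneg (by positivity)]
    simp_rw [this]
    exact finite_lintegral_riesz hk hkd w R


lemma greedy_selection {X : Type*} [PseudoMetricSpace X] {n : ℕ} (x : Fin n → X)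
    (α u : Fin n → ℝ) (hu0 : ∀ k, 0 ≤ u k) (humono : ∀ j k, α j ≤ α k → u j ≤ u k) :
    ∀ (m : ℕ) (R : Finset (Fin n)), R.card ≤ m → ∃ (S : Finset (Fin n)) (f : Fin n → Fin n),
      S ⊆ R ∧
      (∀ j ∈ R, f j ∈ S ∧ α j ≤ α (f j) ∧ dist (x j) (x (f j)) ≤ u (f j)) ∧
      (∀ k ∈ S, ∀ k' ∈ S, k ≠ k' → max (u k) (u k') < dist (x k) (x k')) := by
  intro m
  induction m with
  | zero =>
    intro R hR
    have : R = ∅ := Finset.card_eq_zero.1 (Nat.le_zero.1 hR)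
    subst this
    exact ⟨∅, id, Finset.Subset.refl _, fun j hj => absurd hj (Finset.notMem_empty j),
      fun k hk => absurd hk (Finset.notMem_empty k)⟩
  | succ m ih =>
    intro R hR
    rcases R.eq_empty_or_nonempty with rfl | hne
    · exact ⟨∅, id, Finset.Subset.refl _, fun j hj => absurd hj (Finset.notMem_empty j),
        fun k hk => absurd hk (Finset.notMem_empty k)⟩
    obtain ⟨k₀, hk₀R, hk₀max⟩ := R.exists_max_image α hne
    set C : Finset (Fin n) := R.filter (fun j => dist (x j) (x k₀) ≤ u k₀) with hC
    have hk₀C : k₀ ∈ C := by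
      rw [hC, Finset.mem_filter]
      exact ⟨hk₀R, by simp [hu0 k₀]⟩
    set R' : Finset (Fin n) := R \ C with hR'
    have hcard : R'.card ≤ m := by
      have h1 : R'.card < R.card :=
        Finset.card_lt_card ⟨Finset.sdiff_subset, fun hsub => (Finset.mem_sdiff.1 (hsub hk₀R)).2 hk₀C⟩
      omega
    obtain ⟨S', f', hS'sub, hf', hsep'⟩ := ih R' hcard
    refine ⟨insert k₀ S', fun j => if j ∈ C then k₀ else f' j, ?_, ?_, ?_⟩
    · intro k hk
      rcases Finset.mem_insert.1 hk with rfl | hk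
      · exact hk₀R
      · exact (Finset.mem_sdiff.1 (hS'sub hk)).1
    · intro j hj
      by_cases hjC : j ∈ C
      · simp only [hjC, if_pos]
        exact ⟨Finset.mem_insert_self _ _, hk₀max j hj,
          (Finset.mem_filter.1 hjC).2⟩
      · simp only [hjC, if_neg, ite_false]
        have hjR' : j ∈ R' := Finset.mem_sdiff.2 ⟨hj, hjC⟩
        obtain ⟨h1, h2, h3⟩ := hf' j hjR'
        exact ⟨Finset.mem_insert_of_mem h1, h2, h3⟩
    · intro k hk k' hk' hkk'
      rcases Finset.mem_insert.1 hk with rfl | hkS'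
      · rcases Finset.mem_insert.1 hk' with rfl | hk'S'
        · exact absurd rfl hkk'
        · have hk'R' := hS'sub hk'S'
          have hk'notC : k' ∉ C := (Finset.mem_sdiff.1 hk'R').2
          have hd : u k < dist (x k') (x k) := by
            by_contra h
            exact hk'notC (Finset.mem_filter.2 ⟨(Finset.mem_sdiff.1 hk'R').1, not_lt.1 h⟩)
          have huk' : u k' ≤ u k := humono _ _ (hk₀max k' (Finset.mem_sdiff.1 hk'R').1)
          rw [dist_comm] at hd
          exact max_lt (by linarith) (by linarith)
      · rcases Finset.mem_insert.1 hk' with rfl | hk'S'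
        · have hkR' := hS'sub hkS'
          have hknotC : k ∉ C := (Finset.mem_sdiff.1 hkR').2
          have hd : u k' < dist (x k) (x k') := by
            by_contra h
            exact hknotC (Finset.mem_filter.2 ⟨(Finset.mem_sdiff.1 hkR').1, not_lt.1 h⟩)
          have huk : u k ≤ u k' := humono _ _ (hk₀max k (Finset.mem_sdiff.1 hkR').1)
          exact max_lt (by linarith) (by linarith)
        · exact hsep' k hkS' k' hk'S' hkk'


lemma centers_far_aux {F : Type*} [NormedAddCommGroup F] [NormedSpace ℝ F] {x x' : F} (hx : ‖x‖ = 1) (hx' : ‖x'‖ = 1)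
    {u u' : ℝ} (hu0 : 0 < u) (hu'0 : 0 < u') (hu1 : u ≤ 1/162) (hu'1 : u' ≤ 1/162)
    (huu' : u ≤ u') (hsep : u' < ‖x - x'‖) :
    u/40 + u'/40 < dist ((1 - 3/2*u) • x) ((1 - 3/2*u') • x') := by
  rw [dist_eq_norm]
  set z := (1 - 3/2*u) • x with hz
  set z' := (1 - 3/2*u') • x' with hz'
  have hnz : ‖z‖ = 1 - 3/2*u := by
    rw [hz, norm_smul, Real.norm_eq_abs, hx, mul_one, abs_of_pos (by linarith)]
  have hnz' : ‖z'‖ = 1 - 3/2*u' := by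
    rw [hz', norm_smul, Real.norm_eq_abs, hx', mul_one, abs_of_pos (by linarith)]
  rcases le_or_gt (2*u) u' with h2 | h2
  · have h3 : ‖z‖ - ‖z'‖ ≤ ‖z - z'‖ := norm_sub_norm_le z z'
    rw [hnz, hnz'] at h3
    linarith
  · have hid : z - z' = (1 - 3/2*u) • (x - x') + ((3/2*u' - 3/2*u)) • x' := by
      rw [hz, hz', smul_sub]
      module
    have h4 : ‖(1 - 3/2*u) • (x - x')‖ - ‖((3/2*u' - 3/2*u)) • x'‖ ≤ ‖z - z'‖ := by
      rw [hid]
      set a := (1 - 3/2*u) • (x - x')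
      set b := ((3/2*u' - 3/2*u)) • x'
      have h5 : ‖a‖ ≤ ‖a + b‖ + ‖b‖ := by
        calc ‖a‖ = ‖(a + b) + (-b)‖ := by rw [add_neg_cancel_right]
          _ ≤ ‖a + b‖ + ‖-b‖ := norm_add_le _ _
          _ = ‖a + b‖ + ‖b‖ := by rw [norm_neg]
      linarith
    have h5 : ‖(1 - 3/2*u) • (x - x')‖ = (1 - 3/2*u) * ‖x - x'‖ := by
      rw [norm_smul, Real.norm_eq_abs, abs_of_pos (by linarith)]
    have h6 : ‖((3/2*u' - 3/2*u)) • x'‖ = 3/2*u' - 3/2*u := by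
      rw [norm_smul, Real.norm_eq_abs, hx', mul_one, abs_of_nonneg (by linarith)]
    have h7 : (1 - 3/2*u) * u' ≤ (1 - 3/2*u) * ‖x - x'‖ := by
      apply mul_le_mul_of_nonneg_left hsep.le (by linarith)
    rw [h5, h6] at h4
    nlinarith [h4, h7]

lemma newman_balls_disjoint {F : Type*} [NormedAddCommGroup F] [NormedSpace ℝ F] {x x' : F} (hx : ‖x‖ = 1) (hx' : ‖x'‖ = 1)
    {u u' : ℝ} (hu0 : 0 < u) (hu'0 : 0 < u') (hu1 : u ≤ 1/162) (hu'1 : u' ≤ 1/162)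
    (hsep : max u u' < ‖x - x'‖) :
    Disjoint (closedBall ((1 - 3/2*u) • x) (u/40)) (closedBall ((1 - 3/2*u') • x') (u'/40)) := by
  apply closedBall_disjoint_closedBall
  rcases le_total u u' with h | h
  · have h1 : u' < ‖x - x'‖ := lt_of_le_of_lt (le_max_right u u') hsep
    exact centers_far_aux hx hx' hu0 hu'0 hu1 hu'1 h h1
  · have h1 : u < ‖x' - x‖ := by
      rw [norm_sub_rev]; exact lt_of_le_of_lt (le_max_left u u') hsep
    have := centers_far_aux hx' hx hu'0 hu0 hu'1 hu1 h h1
    rw [dist_comm] at this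
    linarith


lemma pointwise_key (hd : 2 ≤ d) (x : Fin n → EuclideanSpace ℝ (Fin d))
    (hx : ∀ j, ‖x j‖ = 1) (α : Fin n → ℝ) (hα : ∀ j, 0 < α j) (k : Fin n)
    {u : ℝ} (hu0 : 0 < u) (hu1 : u ≤ 1/162)
    {y : EuclideanSpace ℝ (Fin d)} (hy : y ∈ closedBall ((1 - 3/2*u) • x k) (u/40)) :
    (∑ j ∈ univ.filter (fun j => ‖x j - x k‖ ≤ u), α j) * (u / (2 * (3*u)^d))
      - ((3:ℝ)^d/2) * u ^ ((2-(d:ℝ))/2) * (∑ j, α j)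
    ≤ ⟪∑ j, (α j / ‖x j - y‖ ^ d) • (x j - y), x k⟫ := by
  have hyz : ‖y - (1 - 3/2*u) • x k‖ ≤ u/40 := by
    rw [← dist_eq_norm]; exact mem_closedBall.1 hy
  -- basic facts
  have hy1 : ‖y‖ ≤ 1 - 7/5*u := by
    have h1 : ‖(1 - 3/2*u) • x k‖ = 1 - 3/2*u := by
      rw [norm_smul, Real.norm_eq_abs, hx k, mul_one, abs_of_pos (by linarith)]
    calc ‖y‖ = ‖(1 - 3/2*u) • x k + (y - (1 - 3/2*u) • x k)‖ := by rw [add_sub_cancel]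
      _ ≤ ‖(1 - 3/2*u) • x k‖ + ‖y - (1 - 3/2*u) • x k‖ := norm_add_le _ _
      _ ≤ (1 - 3/2*u) + u/40 := by rw [h1]; linarith
      _ ≤ 1 - 7/5*u := by linarith
  have hyl : ∀ j, 7/5*u ≤ ‖x j - y‖ := by
    intro j
    have := norm_sub_norm_le (x j) y
    rw [hx j] at this
    linarith
  have hyl0 : ∀ j, (0:ℝ) < ‖x j - y‖ := fun j => lt_of_lt_of_le (by linarith) (hyl j)
  have hxky : ‖x k - y‖ ≤ 2*u := by
    have h2 : x k - y = (3/2*u) • x k - (y - (1 - 3/2*u) • x k) := by module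
    calc ‖x k - y‖ = ‖(3/2*u) • x k - (y - (1 - 3/2*u) • x k)‖ := by rw [h2]
      _ ≤ ‖(3/2*u) • x k‖ + ‖y - (1 - 3/2*u) • x k‖ := norm_sub_le _ _
      _ ≤ 3/2*u + u/40 := by
          rw [norm_smul, Real.norm_eq_abs, hx k, mul_one, abs_of_pos (by linarith)]
          linarith
      _ ≤ 2*u := by linarith
  have hinner : ∀ j, 7/5*u - ‖x j - x k‖^2/2 ≤ ⟪x j - y, x k⟫ := by
    intro j
    have hjk : ⟪x j, x k⟫ = 1 - ‖x j - x k‖^2/2 := by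
      have := norm_sub_sq_real (x j) (x k)
      rw [hx j, hx k] at this
      linarith
    have hyk : ⟪y, x k⟫ ≤ ‖y‖ := by
      calc ⟪y, x k⟫ ≤ ‖y‖ * ‖x k‖ := real_inner_le_norm y (x k)
        _ = ‖y‖ := by rw [hx k, mul_one]
    have : ⟪x j - y, x k⟫ = ⟪x j, x k⟫ - ⟪y, x k⟫ := by
      rw [inner_sub_left]
    rw [this, hjk]
    linarith
  -- expand inner product of sum
  rw [sum_inner]
  have hterm : ∀ j, ⟪(α j / ‖x j - y‖ ^ d) • (x j - y), x k⟫
      = (α j / ‖x j - y‖ ^ d) * ⟪x j - y, x k⟫ := fun j => real_inner_smul_left _ _ _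
  simp_rw [hterm]
  -- split into friends and enemies
  conv_rhs => rw [← Finset.sum_filter_add_sum_filter_not univ (fun j => ‖x j - x k‖ ≤ u)]
  have hfriend : ∀ j ∈ univ.filter (fun j => ‖x j - x k‖ ≤ u),
      α j * (u / (2 * (3*u)^d)) ≤ (α j / ‖x j - y‖ ^ d) * ⟪x j - y, x k⟫ := by
    intro j hj
    have hs : ‖x j - x k‖ ≤ u := (Finset.mem_filter.1 hj).2
    have hsd : ‖x j - y‖ ≤ 3*u := by
      calc ‖x j - y‖ ≤ ‖x j - x k‖ + ‖x k - y‖ := by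
            have := norm_add_le (x j - x k) (x k - y)
            rw [sub_add_sub_cancel] at this
            exact this
        _ ≤ u + 2*u := by linarith [hxky]
        _ = 3*u := by ring
    have hI : u/2 ≤ ⟪x j - y, x k⟫ := by
      have h7 := hinner j
      have hss : ‖x j - x k‖^2 ≤ u^2 := by
        nlinarith [norm_nonneg (x j - x k)]
      nlinarith [hss, hu0, hu1]
    have hDp : (0:ℝ) < ‖x j - y‖ ^ d := pow_pos (hyl0 j) d
    have hpow : ‖x j - y‖ ^ d ≤ (3*u)^d := pow_le_pow_left₀ (norm_nonneg _) hsd d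
    have h3u : (0:ℝ) < (3*u)^d := by positivity
    calc α j * (u / (2 * (3*u)^d)) = (α j / (3*u)^d) * (u/2) := by ring
      _ ≤ (α j / ‖x j - y‖ ^ d) * (u/2) := by
          have h8 : α j / (3*u)^d ≤ α j / ‖x j - y‖ ^ d :=
            div_le_div_of_nonneg_left (hα j).le hDp hpow
          exact mul_le_mul_of_nonneg_right h8 (by linarith)
      _ ≤ (α j / ‖x j - y‖ ^ d) * ⟪x j - y, x k⟫ := by
          have hc : (0:ℝ) < α j / ‖x j - y‖ ^ d := div_pos (hα j) hDp
          exact mul_le_mul_of_nonneg_left hI hc.le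
  have henemy : ∀ j ∈ univ.filter (fun j => ¬ ‖x j - x k‖ ≤ u),
      -(((3:ℝ)^d/2) * u ^ ((2-(d:ℝ))/2) * α j) ≤ (α j / ‖x j - y‖ ^ d) * ⟪x j - y, x k⟫ := by
    intro j hj
    have hs : u < ‖x j - x k‖ := not_le.1 (Finset.mem_filter.1 hj).2
    set s := ‖x j - x k‖ with hsdef
    have hs0 : 0 < s := lt_trans hu0 hs
    have hurp : (0:ℝ) ≤ u ^ ((2-(d:ℝ))/2) := Real.rpow_nonneg hu0.le _
    have hDp : (0:ℝ) < ‖x j - y‖ ^ d := pow_pos (hyl0 j) d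
    have hpos : 0 ≤ ((3:ℝ)^d/2) * u ^ ((2-(d:ℝ))/2) * α j :=
      mul_nonneg (mul_nonneg (by positivity) hurp) (hα j).le
    by_cases hI : 0 ≤ ⟪x j - y, x k⟫
    · have h9 : 0 ≤ (α j / ‖x j - y‖ ^ d) * ⟪x j - y, x k⟫ :=
        mul_nonneg (div_nonneg (hα j).le hDp.le) hI
      linarith
    · push_neg at hI
      have hs2 : u ≤ s^2/2 := by nlinarith [hinner j, hI]
      -- hence s ≥ sqrt u... we use s^2 ≥ u
      have hsu : u ≤ s^2 := by nlinarith
      have hD : s/3 ≤ ‖x j - y‖ := by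
        rcases le_or_gt s (3*u) with h | h
        · calc s/3 ≤ u := by linarith
            _ ≤ ‖x j - y‖ := le_trans (by linarith) (hyl j)
        · have : s - 2*u ≤ ‖x j - y‖ := by
            have h5 := norm_sub_norm_le (x j - x k) (x k - y)  -- wrong direction helper
            have h6 : s ≤ ‖x j - y‖ + ‖x k - y‖ := by
              have := norm_add_le (x j - y) (y - x k)
              rw [sub_add_sub_cancel] at this
              rw [← norm_neg (y - x k), neg_sub] at this
              exact this
            linarith [hxky]
          linarith
      -- term ≥ -(α j * s^2/2) / (s/3)^d
      have hterm1 : (α j / ‖x j - y‖ ^ d) * ⟪x j - y, x k⟫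
          ≥ (α j / ‖x j - y‖ ^ d) * (- s^2/2) := by
        have hc : (0:ℝ) ≤ α j / ‖x j - y‖ ^ d := div_nonneg (hα j).le hDp.le
        have h10 : - s^2/2 ≤ ⟪x j - y, x k⟫ := by
          have h11 := hinner j
          nlinarith [hu0.le]
        exact mul_le_mul_of_nonneg_left h10 hc
      have hterm2 : (α j / ‖x j - y‖ ^ d) * (- s^2/2)
          ≥ (α j / (s/3) ^ d) * (- s^2/2) := by
        have hs3p : (0:ℝ) < (s/3)^d := pow_pos (by linarith) d
        have h1 : (s/3)^d ≤ ‖x j - y‖ ^ d := pow_le_pow_left₀ (by positivity) hD d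
        have h2 : α j / ‖x j - y‖ ^ d ≤ α j / (s/3)^d :=
          div_le_div_of_nonneg_left (hα j).le hs3p h1
        nlinarith [h2, sq_nonneg s, hα j]
      have hterm3 : (α j / (s/3) ^ d) * (- s^2/2) ≥ -(((3:ℝ)^d/2) * u ^ ((2-(d:ℝ))/2) * α j) := by
        have hsd : (s/3:ℝ)^d = s^d / 3^d := div_pow s 3 d
        have hkey : s^2 / s^d ≤ u ^ ((2-(d:ℝ))/2) := by
          have e1 : s^2 / s^d = s ^ ((2:ℝ) - d) := by
            rw [← Real.rpow_natCast s 2, ← Real.rpow_natCast s d, ← Real.rpow_sub hs0]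
            norm_num
          rw [e1]
          have hsqrtu : u ^ ((1:ℝ)/2) ≤ s := by
            have h1 : (u ^ ((1:ℝ)/2))^2 ≤ s^2 := by
              rw [← Real.rpow_natCast (u ^ ((1:ℝ)/2)) 2, ← Real.rpow_mul hu0.le]
              norm_num
              exact hsu
            have h2 : 0 ≤ u ^ ((1:ℝ)/2) := Real.rpow_nonneg hu0.le _
            nlinarith [h1, h2, hs0]
          have hexp : (2:ℝ) - d ≤ 0 := by
            have : (2:ℝ) ≤ d := by exact_mod_cast hd
            linarith
          calc s ^ ((2:ℝ) - d) ≤ (u ^ ((1:ℝ)/2)) ^ ((2:ℝ) - d) := by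
                apply Real.rpow_le_rpow_of_nonpos (by positivity) hsqrtu hexp
            _ = u ^ ((2-(d:ℝ))/2) := by
                rw [← Real.rpow_mul hu0.le]
                ring_nf
        have hs3 : (0:ℝ) < s^d := pow_pos hs0 d
        -- (α j / (s^d/3^d)) * (-s^2/2) = -(3^d/2) * α j * (s^2/s^d)
        have e2 : (α j / (s/3) ^ d) * (- s^2/2) = -(((3:ℝ)^d/2) * (s^2 / s^d) * α j) := by
          rw [hsd]; field_simp
        rw [e2]
        have h3 : ((3:ℝ)^d/2) * (s^2 / s^d) * α j ≤ ((3:ℝ)^d/2) * u ^ ((2-(d:ℝ))/2) * α j := by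
          have h4 : (0:ℝ) ≤ (3:ℝ)^d/2 := by positivity
          have h5 : (0:ℝ) ≤ s^2/s^d := div_nonneg (sq_nonneg s) hs3.le
          exact mul_le_mul_of_nonneg_right (mul_le_mul_of_nonneg_left hkey h4) (hα j).le
        linarith
      linarith [hterm1, hterm2, hterm3]
  have hsum1 : (∑ j ∈ univ.filter (fun j => ‖x j - x k‖ ≤ u), α j) * (u / (2 * (3*u)^d))
      ≤ ∑ j ∈ univ.filter (fun j => ‖x j - x k‖ ≤ u),
          (α j / ‖x j - y‖ ^ d) * ⟪x j - y, x k⟫ := by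
    rw [Finset.sum_mul]
    exact Finset.sum_le_sum hfriend
  have hsum2 : -(((3:ℝ)^d/2) * u ^ ((2-(d:ℝ))/2) * (∑ j, α j))
      ≤ ∑ j ∈ univ.filter (fun j => ¬ ‖x j - x k‖ ≤ u),
          (α j / ‖x j - y‖ ^ d) * ⟪x j - y, x k⟫ := by
    calc -(((3:ℝ)^d/2) * u ^ ((2-(d:ℝ))/2) * (∑ j, α j))
        ≤ -(((3:ℝ)^d/2) * u ^ ((2-(d:ℝ))/2) * (∑ j ∈ univ.filter (fun j => ¬ ‖x j - x k‖ ≤ u), α j)) := by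
          have h1 : (∑ j ∈ univ.filter (fun j => ¬ ‖x j - x k‖ ≤ u), α j) ≤ ∑ j, α j :=
            Finset.sum_le_sum_of_subset_of_nonneg (Finset.filter_subset _ _)
              (fun j _ _ => (hα j).le)
          have h2 : (0:ℝ) ≤ ((3:ℝ)^d/2) * u ^ ((2-(d:ℝ))/2) := by positivity
          nlinarith
      _ ≤ _ := by
          have h3 := Finset.sum_le_sum henemy
          rwa [Finset.sum_neg_distrib, ← Finset.mul_sum] at h3
  linarith [hsum1, hsum2]


lemma norm_le_of_mem_newman_ball {x₀ : EuclideanSpace ℝ (Fin d)} (hx₀ : ‖x₀‖ = 1)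
    {u : ℝ} (hu0 : 0 < u) {y : EuclideanSpace ℝ (Fin d)}
    (hy : y ∈ closedBall ((1 - 3/2*u) • x₀) (u/40)) (hu2 : 3/2*u ≤ 1) :
    ‖y‖ ≤ 1 - 7/5*u := by
  have hyz : ‖y - (1 - 3/2*u) • x₀‖ ≤ u/40 := by
    rw [← dist_eq_norm]; exact mem_closedBall.1 hy
  have h1 : ‖(1 - 3/2*u) • x₀‖ = 1 - 3/2*u := by
    rw [norm_smul, Real.norm_eq_abs, hx₀, mul_one, abs_of_nonneg (by linarith)]
  calc ‖y‖ = ‖(1 - 3/2*u) • x₀ + (y - (1 - 3/2*u) • x₀)‖ := by rw [add_sub_cancel]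
    _ ≤ ‖(1 - 3/2*u) • x₀‖ + ‖y - (1 - 3/2*u) • x₀‖ := norm_add_le _ _
    _ ≤ (1 - 3/2*u) + u/40 := by rw [h1]; linarith
    _ ≤ 1 - 7/5*u := by linarith

lemma ball_integral_bound (hd : 2 ≤ d) (x : Fin n → EuclideanSpace ℝ (Fin d))
    (hx : ∀ j, ‖x j‖ = 1) (α : Fin n → ℝ) (hα : ∀ j, 0 < α j) (k : Fin n)
    {u : ℝ} (hu0 : 0 < u) (hu1 : u ≤ 1/162)
    (hukey : 2 * 9^d * u ^ ((d:ℝ)/2) * (∑ j, α j)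
      ≤ ∑ j ∈ univ.filter (fun j => ‖x j - x k‖ ≤ u), α j) :
    (volume (ball (0:EuclideanSpace ℝ (Fin d)) 1)).toReal / (4 * 120^d)
        * (u * ∑ j ∈ univ.filter (fun j => ‖x j - x k‖ ≤ u), α j)
      ≤ ∫ y in closedBall ((1 - 3/2*u) • x k) (u/40),
          ‖∑ j, (α j / ‖x j - y‖ ^ d) • (x j - y)‖ := by
  set Ak : ℝ := ∑ j ∈ univ.filter (fun j => ‖x j - x k‖ ≤ u), α j with hAk
  set A : ℝ := ∑ j, α j with hA
  set Rk : Set (EuclideanSpace ℝ (Fin d)) := closedBall ((1 - 3/2*u) • x k) (u/40) with hRk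
  have hAk0 : 0 < Ak := by
    refine Finset.sum_pos (fun j _ => hα j) ⟨k, ?_⟩
    simp [sub_self, hu0.le]
  have hA0 : 0 < A := by
    have h1 : Ak ≤ A := Finset.sum_le_sum_of_subset_of_nonneg (Finset.filter_subset _ _)
      (fun j _ _ => (hα j).le)
    linarith
  have hud : (0:ℝ) < u^d := pow_pos hu0 d
  have h9 : (9:ℝ)^d = 3^d*3^d := by rw [← mul_pow]; norm_num
  -- pointwise constant lower bound
  have hL : ∀ y ∈ Rk, Ak * (u/(4*(3*u)^d))
      ≤ ⟪∑ j, (α j / ‖x j - y‖ ^ d) • (x j - y), x k⟫ := by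
    intro y hy
    have hp := pointwise_key hd x hx α hα k hu0 hu1 hy
    have e1 : u ^ ((2-(d:ℝ))/2) = u ^ ((d:ℝ)/2) * u / u^d := by
      have e2 : (2-(d:ℝ))/2 = (d:ℝ)/2 + (1 - (d:ℝ)) := by ring
      rw [e2, Real.rpow_add hu0]
      have e3 : u ^ ((1:ℝ) - (d:ℝ)) = u / u^d := by
        rw [Real.rpow_sub hu0, Real.rpow_one, Real.rpow_natCast]
      rw [e3]; ring
    have hm : (0:ℝ) ≤ u / u^d * (1/(4*3^d)) := by positivity
    have hbr : ((3:ℝ)^d/2) * u ^ ((2-(d:ℝ))/2) * A ≤ Ak * (u/(4*(3*u)^d)) := by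
      calc ((3:ℝ)^d/2) * u ^ ((2-(d:ℝ))/2) * A
          = (2*9^d*u^((d:ℝ)/2)*A) * (u/u^d*(1/(4*3^d))) := by
            rw [e1, h9]; field_simp; ring
        _ ≤ Ak * (u/u^d*(1/(4*3^d))) := mul_le_mul_of_nonneg_right hukey hm
        _ = Ak * (u/(4*(3*u)^d)) := by rw [mul_pow]; field_simp
    have e4 : Ak * (u / (2 * (3*u)^d)) - Ak * (u/(4*(3*u)^d)) = Ak * (u/(4*(3*u)^d)) := by
      have h3u : ((3*u):ℝ)^d ≠ 0 := by positivity
      field_simp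
      ring
    linarith
  -- continuity on Rk
  have hRsub : Rk ⊆ ball (0:EuclideanSpace ℝ (Fin d)) 1 := by
    intro y hy
    rw [mem_ball_zero_iff]
    have := norm_le_of_mem_newman_ball (hx k) hu0 hy (by linarith)
    linarith
  have hnorm_pos : ∀ j, ∀ y ∈ Rk, ‖x j - y‖ ≠ 0 := by
    intro j y hy
    have h1 := norm_le_of_mem_newman_ball (hx k) hu0 hy (by linarith)
    have h2 := norm_sub_norm_le (x j) y
    rw [hx j] at h2
    intro h0
    rw [h0] at h2
    linarith
  have hFcont : ContinuousOn (fun y : EuclideanSpace ℝ (Fin d) =>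
      ∑ j, (α j / ‖x j - y‖ ^ d) • (x j - y)) Rk := by
    apply continuousOn_finset_sum
    intro j _
    apply ContinuousOn.fun_smul
    · apply ContinuousOn.div continuousOn_const
      · exact ((continuous_const.sub continuous_id).norm.pow d).continuousOn
      · intro y hy
        exact pow_ne_zero d (hnorm_pos j y hy)
    · exact (continuous_const.sub continuous_id).continuousOn
  have hcompact : IsCompact Rk := isCompact_closedBall _ _
  have hInner : IntegrableOn (fun y => ⟪∑ j, (α j / ‖x j - y‖ ^ d) • (x j - y), x k⟫) Rk :=
    (hFcont.inner continuousOn_const).integrableOn_compact hcompact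
  have hNorm : IntegrableOn (fun y => ‖∑ j, (α j / ‖x j - y‖ ^ d) • (x j - y)‖) Rk :=
    hFcont.norm.integrableOn_compact hcompact
  have hmeasRk : MeasurableSet Rk := measurableSet_closedBall
  have hstep1 : ∫ y in Rk, ⟪∑ j, (α j / ‖x j - y‖ ^ d) • (x j - y), x k⟫
      ≤ ∫ y in Rk, ‖∑ j, (α j / ‖x j - y‖ ^ d) • (x j - y)‖ := by
    refine setIntegral_mono_on hInner hNorm hmeasRk fun y _ => ?_
    calc ⟪∑ j, (α j / ‖x j - y‖ ^ d) • (x j - y), x k⟫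
        ≤ ‖∑ j, (α j / ‖x j - y‖ ^ d) • (x j - y)‖ * ‖x k‖ := real_inner_le_norm _ _
      _ = ‖∑ j, (α j / ‖x j - y‖ ^ d) • (x j - y)‖ := by rw [hx k, mul_one]
  have hstep2 : (volume Rk).toReal * (Ak * (u/(4*(3*u)^d)))
      ≤ ∫ y in Rk, ⟪∑ j, (α j / ‖x j - y‖ ^ d) • (x j - y), x k⟫ := by
    have hconst : ∫ _ in Rk, (Ak * (u/(4*(3*u)^d))) ∂volume
        = (volume Rk).toReal • (Ak * (u/(4*(3*u)^d))) := setIntegral_const _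
    calc (volume Rk).toReal * (Ak * (u/(4*(3*u)^d)))
        = ∫ _ in Rk, (Ak * (u/(4*(3*u)^d))) ∂volume := by rw [hconst, smul_eq_mul]
      _ ≤ _ := by
          refine setIntegral_mono_on ?_ hInner hmeasRk hL
          exact integrableOn_const hcompact.measure_lt_top.ne
  -- compute volume
  have hvol : (volume Rk).toReal = (u/40)^d * (volume (ball (0:EuclideanSpace ℝ (Fin d)) 1)).toReal := by
    rw [hRk, Measure.addHaar_closedBall _ _ (by positivity : (0:ℝ) ≤ u/40)]
    rw [ENNReal.toReal_mul, ENNReal.toReal_ofReal (by positivity)]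
    congr 2
    rw [finrank_euclideanSpace_fin]
  have hfinal : (volume (ball (0:EuclideanSpace ℝ (Fin d)) 1)).toReal / (4 * 120^d) * (u * Ak)
      = (volume Rk).toReal * (Ak * (u/(4*(3*u)^d))) := by
    rw [hvol]
    have h120 : (120:ℝ)^d = 3^d*40^d := by rw [← mul_pow]; norm_num
    have h40 : ((40:ℝ))^d ≠ 0 := by positivity
    have h3 : ((3:ℝ))^d ≠ 0 := by positivity
    rw [div_pow, mul_pow 3 u d, h120]
    field_simp
  rw [hfinal]
  exact le_trans hstep2 hstep1


end WeightedNewman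

open WeightedNewman Metric Set Real Finset
open scoped RealInnerProductSpace
set_option maxHeartbeats 1000000 in
/-- Weighted Newman bound on the unit ball of `ℝ^d`: there is a constant `c_d > 0`
depending only on `d` such that for all points `x k` on the unit sphere and positive
weights `α k`, the average strength of the corresponding field is bounded below by
`c_d · (∑ α_k^{1+2/d}) / (∑ α_k^{2/d})`. -/
theorem weighted_newman_bound (d : ℕ) (hd : 2 ≤ d) :
    ∃ c : ℝ, 0 < c ∧
      ∀ (n : ℕ) (x : Fin n → EuclideanSpace ℝ (Fin d)) (α : Fin n → ℝ),
        (∀ k, x k ∈ Metric.sphere (0 : EuclideanSpace ℝ (Fin d)) 1) →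
        (∀ k, 0 < α k) →
        c * ((∑ k, α k ^ ((1 : ℝ) + 2 / d)) / (∑ k, α k ^ ((2 : ℝ) / d))) ≤
          ∫ y in Metric.ball (0 : EuclideanSpace ℝ (Fin d)) 1,
            ‖∑ k, (α k / ‖x k - y‖ ^ d) • (x k - y)‖ := by
  have hd0 : (0:ℝ) < d := by positivity
  have hd2 : (2:ℝ) ≤ d := by exact_mod_cast hd
  set ω : ℝ := (volume (ball (0:EuclideanSpace ℝ (Fin d)) 1)).toReal with hω
  have hω0 : 0 < ω := by
    rw [hω]
    exact ENNReal.toReal_pos (measure_ball_pos volume 0 one_pos).ne' measure_ball_lt_top.ne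
  refine ⟨(1/162) * (ω / (4 * 120^d)), by positivity, ?_⟩
  intro n x α hxs hα
  rcases Nat.eq_zero_or_pos n with rfl | hn
  · simp
  have hx : ∀ j, ‖x j‖ = 1 := fun j => by
    have := hxs j
    rwa [mem_sphere_zero_iff_norm] at this
  set A : ℝ := ∑ j, α j with hA
  have hA0 : 0 < A := Finset.sum_pos (fun j _ => hα j) ⟨⟨0, hn⟩, Finset.mem_univ _⟩
  set T : ℝ := ∑ j, α j ^ ((2:ℝ)/d) with hT
  have hT0 : 0 < T :=
    Finset.sum_pos (fun j _ => Real.rpow_pos_of_pos (hα j) _) ⟨⟨0, hn⟩, Finset.mem_univ _⟩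
  have hAT : A ^ ((2:ℝ)/d) ≤ T := by
    rw [hA, hT]
    exact sum_rpow_subadd _ _ (fun j _ => (hα j).le) (by positivity)
      (by rw [div_le_one hd0]; exact hd2)
  -- the depth function
  set u : Fin n → ℝ := fun k => (1/162) * (α k / A) ^ ((2:ℝ)/d) with hu
  have hu0 : ∀ k, 0 < u k := fun k => by
    have : (0:ℝ) < (α k / A) ^ ((2:ℝ)/d) := Real.rpow_pos_of_pos (div_pos (hα k) hA0) _
    rw [hu]; positivity
  have hu1 : ∀ k, u k ≤ 1/162 := by
    intro k
    rw [hu]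
    have h1 : α k ≤ A := Finset.single_le_sum (fun j _ => (hα j).le) (Finset.mem_univ k)
    have h2 : (α k / A) ^ ((2:ℝ)/d) ≤ 1 :=
      Real.rpow_le_one (div_pos (hα k) hA0).le (by rw [div_le_one hA0]; exact h1)
        (by positivity)
    nlinarith
  have humono : ∀ j k, α j ≤ α k → u j ≤ u k := by
    intro j k hjk
    rw [hu]
    have : (α j / A) ^ ((2:ℝ)/d) ≤ (α k / A) ^ ((2:ℝ)/d) :=
      Real.rpow_le_rpow (div_pos (hα j) hA0).le (by gcongr) (by positivity)
    nlinarith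
  -- key smallness of u
  have hukey : ∀ k, 2 * 9^d * (u k) ^ ((d:ℝ)/2) * A ≤ α k := by
    intro k
    have hb0 : (0:ℝ) < α k / A := div_pos (hα k) hA0
    have e1 : (u k) ^ ((d:ℝ)/2)
        = ((1:ℝ)/162) ^ ((d:ℝ)/2) * (α k / A) := by
      rw [hu]
      rw [Real.mul_rpow (by norm_num) (Real.rpow_nonneg hb0.le _)]
      congr 1
      rw [← Real.rpow_mul hb0.le]
      have e2 : (2/(d:ℝ)) * ((d:ℝ)/2) = 1 := by field_simp
      rw [e2, Real.rpow_one]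
    have hγ : ((1:ℝ)/162) ^ ((d:ℝ)/2) ≤ 1/(2*9^d) := by
      have ha0 : (0:ℝ) ≤ ((1:ℝ)/162) ^ ((d:ℝ)/2) := Real.rpow_nonneg (by norm_num) _
      have hb0' : (0:ℝ) ≤ 1/(2*(9:ℝ)^d) := by positivity
      have hsq : (((1:ℝ)/162) ^ ((d:ℝ)/2))^(2:ℕ) ≤ (1/(2*(9:ℝ)^d))^(2:ℕ) := by
        have e3 : (((1:ℝ)/162) ^ ((d:ℝ)/2))^(2:ℕ) = ((1:ℝ)/162)^(d:ℕ) := by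
          rw [← Real.rpow_natCast (((1:ℝ)/162) ^ ((d:ℝ)/2)) 2, ← Real.rpow_mul (by norm_num)]
          norm_num
        rw [e3]
        have e4 : ((1:ℝ)/(2*9^d))^(2:ℕ) = 1/(4*81^d) := by
          rw [div_pow]
          norm_num
          rw [mul_pow]
          norm_num
          rw [← pow_mul, mul_comm d 2, pow_mul]
          norm_num
        rw [e4, div_pow, one_pow]
        rw [div_le_div_iff₀ (by positivity) (by positivity)]
        have e5 : (162:ℝ)^d = 2^d * 81^d := by rw [← mul_pow]; norm_num
        rw [e5]
        have h4 : (4:ℝ) ≤ 2^d := by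
          calc (4:ℝ) = 2^(2:ℕ) := by norm_num
            _ ≤ 2^d := by
              apply pow_le_pow_right₀ (by norm_num) hd
        nlinarith [pow_pos (by norm_num : (0:ℝ) < 81) d, pow_pos (by norm_num : (0:ℝ) < 2) d]
      exact (pow_le_pow_iff_left₀ ha0 hb0' (by norm_num)).1 hsq
    rw [e1]
    have e6 : 2 * (9:ℝ)^d * (((1:ℝ)/162) ^ ((d:ℝ)/2) * (α k / A)) * A
        = (2 * 9^d * ((1:ℝ)/162) ^ ((d:ℝ)/2)) * α k := by
      field_simp
    rw [e6]
    have h7 : 2 * (9:ℝ)^d * ((1:ℝ)/162) ^ ((d:ℝ)/2) ≤ 1 := by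
      have h8 : (0:ℝ) < 2*(9:ℝ)^d := by positivity
      calc 2 * (9:ℝ)^d * ((1:ℝ)/162) ^ ((d:ℝ)/2) ≤ 2*(9:ℝ)^d * (1/(2*9^d)) :=
            mul_le_mul_of_nonneg_left hγ h8.le
        _ = 1 := by field_simp
    nlinarith [hα k]
  -- selection of disjoint cluster representatives
  obtain ⟨S, f, hSsub, hf, hsep⟩ := greedy_selection x α u (fun k => (hu0 k).le) humono n
    Finset.univ (by simp)
  set Ak : Fin n → ℝ := fun k => ∑ j ∈ univ.filter (fun j => ‖x j - x k‖ ≤ u k), α j with hAkdef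
  have hAk0 : ∀ k, 0 ≤ Ak k := fun k => Finset.sum_nonneg fun j _ => (hα j).le
  -- the small balls
  have hRsub : ∀ k : Fin n, closedBall ((1 - 3/2*(u k)) • x k) ((u k)/40)
      ⊆ ball (0:EuclideanSpace ℝ (Fin d)) 1 := by
    intro k y hy
    rw [mem_ball_zero_iff]
    have h1 := norm_le_of_mem_newman_ball (hx k) (hu0 k) hy (by linarith [hu1 k, hu0 k])
    linarith [hu0 k]
  -- global integrability of the field norm
  have hne0 : ∀ (j : Fin n), ∀ y ∈ ball (0:EuclideanSpace ℝ (Fin d)) 1,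
      (0:ℝ) < ‖x j - y‖ := by
    intro j y hy
    have h2 := norm_sub_norm_le (x j) y
    rw [hx j] at h2
    rw [mem_ball_zero_iff] at hy
    linarith
  have hFcont : ContinuousOn (fun y : EuclideanSpace ℝ (Fin d) =>
      ∑ j, (α j / ‖x j - y‖ ^ d) • (x j - y)) (ball (0:EuclideanSpace ℝ (Fin d)) 1) := by
    apply continuousOn_finset_sum
    intro j _
    apply ContinuousOn.fun_smul
    · apply ContinuousOn.div continuousOn_const
      · exact ((continuous_const.sub continuous_id).norm.pow d).continuousOn
      · intro y hy
        exact pow_ne_zero d (hne0 j y hy).ne'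
    · exact (continuous_const.sub continuous_id).continuousOn
  have hIntB : IntegrableOn (fun y : EuclideanSpace ℝ (Fin d) =>
      ‖∑ j, (α j / ‖x j - y‖ ^ d) • (x j - y)‖) (ball (0:EuclideanSpace ℝ (Fin d)) 1) := by
    have hg : IntegrableOn (fun y : EuclideanSpace ℝ (Fin d) =>
        ∑ j, α j * (‖x j - y‖ ^ (d-1))⁻¹) (ball (0:EuclideanSpace ℝ (Fin d)) 1) :=
      integrable_finset_sum _ (fun j _ =>
        ((integrableOn_riesz (by omega) (by omega) (x j) 1).const_mul (α j)))
    apply hg.mono' (hFcont.norm.aestronglyMeasurable measurableSet_ball)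
    rw [ae_restrict_iff' measurableSet_ball]
    apply ae_of_all
    intro y hy
    rw [Real.norm_of_nonneg (norm_nonneg _)]
    calc ‖∑ j, (α j / ‖x j - y‖ ^ d) • (x j - y)‖
        ≤ ∑ j, ‖(α j / ‖x j - y‖ ^ d) • (x j - y)‖ := norm_sum_le _ _
      _ = ∑ j, α j * (‖x j - y‖ ^ (d-1))⁻¹ := by
          refine Finset.sum_congr rfl fun j _ => ?_
          have hD := hne0 j y hy
          have hDd : (0:ℝ) < ‖x j - y‖ ^ d := pow_pos hD d
          rw [norm_smul, Real.norm_eq_abs, abs_of_nonneg (div_nonneg (hα j).le hDd.le)]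
          have hsucc : (d - 1) + 1 = d := by omega
          have e8 : ‖x j - y‖ ^ d = ‖x j - y‖ ^ (d-1) * ‖x j - y‖ := by
            rw [← pow_succ, hsucc]
          have hD1 : (0:ℝ) < ‖x j - y‖ ^ (d-1) := pow_pos hD _
          rw [e8]
          field_simp
  -- key hypothesis for each ball
  have hukey2 : ∀ k, 2 * 9^d * (u k) ^ ((d:ℝ)/2) * A ≤ Ak k := by
    intro k
    refine le_trans (hukey k) ?_
    refine Finset.single_le_sum (fun j _ => (hα j).le) ?_
    simp only [Finset.mem_filter, Finset.mem_univ, true_and, sub_self, norm_zero]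
    exact (hu0 k).le
  have hball : ∀ k : Fin n, ω / (4*120^d) * (u k * Ak k)
      ≤ ∫ y in closedBall ((1 - 3/2*(u k)) • x k) ((u k)/40),
          ‖∑ j, (α j / ‖x j - y‖ ^ d) • (x j - y)‖ :=
    fun k => ball_integral_bound hd x hx α hα k (hu0 k) (hu1 k) (hukey2 k)
  -- disjointness of selected balls
  have hdisj : (↑S : Set (Fin n)).Pairwise (Function.onFun Disjoint
      (fun k => closedBall ((1 - 3/2*(u k)) • x k) ((u k)/40))) := by
    intro k hk k' hk' hne
    have hsep' := hsep k hk k' hk' hne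
    rw [dist_eq_norm] at hsep'
    exact newman_balls_disjoint (hx k) (hx k') (hu0 k) (hu0 k') (hu1 k) (hu1 k') hsep'
  have hUnion_sub : (⋃ k ∈ S, closedBall ((1 - 3/2*(u k)) • x k) ((u k)/40))
      ⊆ ball (0:EuclideanSpace ℝ (Fin d)) 1 := iUnion₂_subset fun k _ => hRsub k
  have hsum_eq : ∫ y in (⋃ k ∈ S, closedBall ((1 - 3/2*(u k)) • x k) ((u k)/40)),
        ‖∑ j, (α j / ‖x j - y‖ ^ d) • (x j - y)‖
      = ∑ k ∈ S, ∫ y in closedBall ((1 - 3/2*(u k)) • x k) ((u k)/40),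
          ‖∑ j, (α j / ‖x j - y‖ ^ d) • (x j - y)‖ :=
    integral_biUnion_finset S (fun k _ => measurableSet_closedBall) hdisj
      (fun k _ => hIntB.mono_set (hRsub k))
  have hmono : ∫ y in (⋃ k ∈ S, closedBall ((1 - 3/2*(u k)) • x k) ((u k)/40)),
        ‖∑ j, (α j / ‖x j - y‖ ^ d) • (x j - y)‖
      ≤ ∫ y in ball (0:EuclideanSpace ℝ (Fin d)) 1,
          ‖∑ j, (α j / ‖x j - y‖ ^ d) • (x j - y)‖ :=
    setIntegral_mono_set hIntB (ae_of_all _ fun y => norm_nonneg _)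
      (HasSubset.Subset.eventuallyLE hUnion_sub)
  -- accounting
  have hQ : (∑ k, α k ^ ((1:ℝ) + 2/d)) / T = ∑ j, α j * (α j ^ ((2:ℝ)/d) / T) := by
    rw [Finset.sum_div]
    refine Finset.sum_congr rfl fun j _ => ?_
    rw [Real.rpow_add (hα j), Real.rpow_one]
    ring
  have hQ2 : ∑ j, α j * (α j ^ ((2:ℝ)/d) / T)
      = ∑ k ∈ S, ∑ j ∈ univ.filter (fun j => f j = k), α j * (α j ^ ((2:ℝ)/d) / T) :=
    (Finset.sum_fiberwise_of_maps_to (fun j _ => (hf j (Finset.mem_univ j)).1) _).symm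
  have hfiber : ∀ k ∈ S, ∑ j ∈ univ.filter (fun j => f j = k), α j * (α j ^ ((2:ℝ)/d) / T)
      ≤ (α k ^ ((2:ℝ)/d) / T) * Ak k := by
    intro k hk
    calc ∑ j ∈ univ.filter (fun j => f j = k), α j * (α j ^ ((2:ℝ)/d) / T)
        ≤ ∑ j ∈ univ.filter (fun j => f j = k), α j * (α k ^ ((2:ℝ)/d) / T) := by
          refine Finset.sum_le_sum fun j hj => ?_
          have hfj : f j = k := (Finset.mem_filter.1 hj).2
          have hαjk : α j ≤ α k := by
            have := (hf j (Finset.mem_univ j)).2.1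
            rwa [hfj] at this
          have h2 : α j ^ ((2:ℝ)/d) ≤ α k ^ ((2:ℝ)/d) :=
            Real.rpow_le_rpow (hα j).le hαjk (by positivity)
          have h3 : α j ^ ((2:ℝ)/d) / T ≤ α k ^ ((2:ℝ)/d) / T :=
            div_le_div_of_nonneg_right h2 hT0.le
          exact mul_le_mul_of_nonneg_left h3 (hα j).le
      _ = (α k ^ ((2:ℝ)/d) / T) * ∑ j ∈ univ.filter (fun j => f j = k), α j := by
          rw [← Finset.sum_mul, mul_comm]
      _ ≤ (α k ^ ((2:ℝ)/d) / T) * Ak k := by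
          refine mul_le_mul_of_nonneg_left ?_
            (div_nonneg (Real.rpow_nonneg (hα k).le _) hT0.le)
          refine Finset.sum_le_sum_of_subset_of_nonneg ?_ (fun j _ _ => (hα j).le)
          intro j hj
          have hfj : f j = k := (Finset.mem_filter.1 hj).2
          have h4 := (hf j (Finset.mem_univ j)).2.2
          rw [hfj, dist_eq_norm] at h4
          exact Finset.mem_filter.2 ⟨Finset.mem_univ j, h4⟩
  have hru : ∀ k, α k ^ ((2:ℝ)/d) / T ≤ 162 * u k := by
    intro k
    have e7 : u k = (1/162) * (α k ^ ((2:ℝ)/d) / A ^ ((2:ℝ)/d)) := by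
      have e7' : u k = 1/162 * (α k / A) ^ ((2:ℝ)/d) := rfl
      rw [e7', Real.div_rpow (hα k).le hA0.le]
    have hApow : (0:ℝ) < A ^ ((2:ℝ)/d) := Real.rpow_pos_of_pos hA0 _
    have h5 : α k ^ ((2:ℝ)/d) / T ≤ α k ^ ((2:ℝ)/d) / A ^ ((2:ℝ)/d) :=
      div_le_div_of_nonneg_left (Real.rpow_nonneg (hα k).le _) hApow hAT
    rw [e7]
    linarith
  -- final chain
  rw [hQ, hQ2]
  have hstep : ∑ k ∈ S, ∑ j ∈ univ.filter (fun j => f j = k), α j * (α j ^ ((2:ℝ)/d) / T)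
      ≤ ∑ k ∈ S, 162 * (u k * Ak k) := by
    refine Finset.sum_le_sum fun k hk => ?_
    calc ∑ j ∈ univ.filter (fun j => f j = k), α j * (α j ^ ((2:ℝ)/d) / T)
        ≤ (α k ^ ((2:ℝ)/d) / T) * Ak k := hfiber k hk
      _ ≤ (162 * u k) * Ak k := mul_le_mul_of_nonneg_right (hru k) (hAk0 k)
      _ = 162 * (u k * Ak k) := by ring
  calc 1/162 * (ω / (4 * 120^d)) * ∑ k ∈ S, ∑ j ∈ univ.filter (fun j => f j = k),
          α j * (α j ^ ((2:ℝ)/d) / T)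
      ≤ 1/162 * (ω / (4 * 120^d)) * ∑ k ∈ S, 162 * (u k * Ak k) := by
        refine mul_le_mul_of_nonneg_left hstep (by positivity)
    _ = ∑ k ∈ S, ω / (4 * 120^d) * (u k * Ak k) := by
        rw [Finset.mul_sum]
        refine Finset.sum_congr rfl fun k _ => by ring
    _ ≤ ∑ k ∈ S, ∫ y in closedBall ((1 - 3/2*(u k)) • x k) ((u k)/40),
          ‖∑ j, (α j / ‖x j - y‖ ^ d) • (x j - y)‖ :=
        Finset.sum_le_sum fun k _ => hball k
    _ = ∫ y in (⋃ k ∈ S, closedBall ((1 - 3/2*(u k)) • x k) ((u k)/40)),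
          ‖∑ j, (α j / ‖x j - y‖ ^ d) • (x j - y)‖ := hsum_eq.symm
    _ ≤ _ := hmono
end

section
/- There exists an absolute constant C > 0 such that for every n ∈ ℕ and all positive reals α_1, …, α_n, there exist points z_1, …, z_n on the unit circle T with ∫_{D} | Σ_{k=1}^n α_k/(z - z_k) | dm(z) ≤ C · (Σ_{k=1}^n α_k^2) / (Σ_{k=1}^n α_k). -/
open MeasureTheory Metric Set intervalIntegral
open scoped ENNReal NNReal
namespace WNB

noncomputable def Complex.abs : AbsoluteValue ℂ ℝ := NormedField.toAbsoluteValue ℂ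

lemma Complex.norm_eq_abs (z : ℂ) : ‖z‖ = Complex.abs z := rfl

lemma Complex.abs_exp (z : ℂ) : Complex.abs (Complex.exp z) = Real.exp z.re := Complex.norm_exp z

lemma Complex.abs_ofReal (x : ℝ) : Complex.abs (x : ℂ) = |x| :=
  (Complex.norm_real x).trans (Real.norm_eq_abs x)

lemma Complex.continuous_abs : Continuous Complex.abs := continuous_norm

noncomputable def zz (t : ℝ) : ℂ := Complex.exp (2 * Real.pi * Complex.I * t)

lemma zz_cont : Continuous zz :=
  Complex.continuous_exp.comp (continuous_const.mul Complex.continuous_ofReal)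

lemma abs_zz (t : ℝ) : Complex.abs (zz t) = 1 := by simp [zz, Complex.abs_exp]

lemma norm_two_pi_I : Complex.abs (2 * Real.pi * Complex.I) = 2 * Real.pi := by
  show ‖(2 * Real.pi * Complex.I : ℂ)‖ = _
  simp [map_mul, abs_of_nonneg Real.pi_nonneg]

lemma zz_hasDerivAt (t : ℝ) :
    HasDerivAt zz (2 * Real.pi * Complex.I * zz t) t := by
  have h1 : HasDerivAt (fun s : ℝ => 2 * Real.pi * Complex.I * (s : ℂ))
      (2 * Real.pi * Complex.I) t := by
    simpa using ((hasDerivAt_id t).ofReal_comp).const_mul (2 * Real.pi * Complex.I)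
  unfold zz
  simpa [mul_comm, mul_assoc, mul_left_comm] using h1.cexp

lemma zz_lip (x y : ℝ) : Complex.abs (zz x - zz y) ≤ 2 * Real.pi * |x - y| := by
  have := Convex.norm_image_sub_le_of_norm_hasDerivWithin_le
    (f := zz) (f' := fun t => 2 * Real.pi * Complex.I * zz t) (C := 2 * Real.pi)
    (s := Set.univ) (fun t _ => (zz_hasDerivAt t).hasDerivWithinAt)
    (fun t _ => by
      rw [Complex.norm_eq_abs, map_mul, abs_zz, norm_two_pi_I, mul_one]) convex_univ
    (Set.mem_univ y) (Set.mem_univ x)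
  simpa [Complex.norm_eq_abs, Real.norm_eq_abs] using this

lemma zz_add (x y : ℝ) : zz (x + y) = zz x * zz y := by
  rw [zz, zz, zz, ← Complex.exp_add]; push_cast; ring_nf

lemma zz_ne (z : ℂ) (hz : z ∈ ball (0:ℂ) 1) (t : ℝ) : z - zz t ≠ 0 := by
  intro h
  have h1 : z = zz t := by linear_combination h
  have h2 : Complex.abs z = 1 := by rw [h1, abs_zz]
  have := mem_ball_zero_iff.mp hz
  rw [Complex.norm_eq_abs, h2] at this
  exact lt_irrefl 1 this



lemma zz_integral (aa b : ℝ) :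
    (∫ t in aa..b, zz t) = (zz b - zz aa) / (2 * (Real.pi:ℂ) * Complex.I) := by
  have hc : (2 * (Real.pi:ℂ) * Complex.I) ≠ 0 := by
    simp [Real.pi_ne_zero, Complex.I_ne_zero]
  simpa [zz] using integral_exp_mul_complex (a := aa) (b := b) hc

lemma sin_bound (β : ℝ) (hβ : 0 < β) (hβ1 : β ≤ 1) :
    β - Real.sin (Real.pi * β) / Real.pi ≤ Real.pi ^ 2 * β ^ 3 := by
  have hπ := Real.pi_pos
  rcases le_or_gt (Real.pi * β) 1 with h | h
  · have h2 := Real.sin_gt_sub_cube (x := Real.pi * β) (by positivity)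
    have h3 : β - Real.pi ^ 2 * β ^ 3 ≤ Real.sin (Real.pi * β) / Real.pi := by
      rw [le_div_iff₀ hπ]
      nlinarith [pow_pos hπ 3, pow_pos hβ 3]
    linarith
  · have hs : 0 ≤ Real.sin (Real.pi * β) :=
      Real.sin_nonneg_of_nonneg_of_le_pi (by positivity) (by nlinarith)
    have h1 : 0 ≤ Real.sin (Real.pi * β) / Real.pi := div_nonneg hs hπ.le
    nlinarith [mul_pos (mul_pos hβ (sub_pos.mpr h))
      (by positivity : (0:ℝ) < Real.pi * β + 1)]

lemma midpoint_err (aa β : ℝ) (hβ : 0 < β) (hβ1 : β ≤ 1) :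
    Complex.abs ((∫ t in aa..(aa + β), zz t) - (β : ℂ) * zz (aa + β / 2))
      ≤ Real.pi ^ 2 * β ^ 3 := by
  have hπ := Real.pi_pos
  have e1 : zz (β / 2) = Complex.cos (Real.pi * β) + Complex.sin (Real.pi * β) * Complex.I := by
    rw [show zz (β/2) = Complex.exp ((((Real.pi * β : ℝ)):ℂ) * Complex.I) by
      rw [zz]; congr 1; push_cast; ring, Complex.exp_mul_I]
    push_cast; ring
  have e2 : zz (-(β / 2)) = Complex.cos (Real.pi * β) - Complex.sin (Real.pi * β) * Complex.I := by
    rw [show zz (-(β/2)) = Complex.exp ((-((Real.pi * β : ℝ) : ℂ)) * Complex.I) by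
      rw [zz]; congr 1; push_cast; ring, Complex.exp_mul_I, Complex.cos_neg, Complex.sin_neg]
    push_cast; ring
  have e3 : zz (aa + β) = zz (aa + β / 2) * zz (β / 2) := by
    rw [← zz_add]; congr 1; ring
  have e4 : zz aa = zz (aa + β / 2) * zz (-(β / 2)) := by
    rw [← zz_add]; congr 1; ring
  have hπne : ((Real.pi : ℂ)) ≠ 0 := by exact_mod_cast Real.pi_ne_zero
  have key : (∫ t in aa..(aa + β), zz t) - (β : ℂ) * zz (aa + β / 2)
      = zz (aa + β / 2) * ((Real.sin (Real.pi * β) / Real.pi - β : ℝ) : ℂ) := by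
    rw [zz_integral, e3, e4, e1, e2]
    push_cast
    field_simp
    ring
  rw [key, map_mul]
  have habs1 : Complex.abs (zz (aa + β / 2)) = 1 := by simp [zz, Complex.abs_exp]
  rw [habs1, one_mul, Complex.abs_ofReal]
  have hsin : Real.sin (Real.pi * β) / Real.pi - β ≤ 0 := by
    have := Real.sin_lt (show 0 < Real.pi * β by positivity)
    rw [sub_nonpos, div_le_iff₀ hπ]
    nlinarith
  rw [abs_of_nonpos hsin]
  have := sin_bound β hβ hβ1
  linarith


lemma circle_avg_zero (z : ℂ) (hz : z ∈ ball (0:ℂ) 1) :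
    (∫ t in (0:ℝ)..1, (z - zz t)⁻¹) = 0 := by
  have habs : Complex.abs z < 1 := by simpa [Complex.norm_eq_abs] using mem_ball_zero_iff.mp hz
  have h2pi : (2 * Real.pi : ℝ) ≠ 0 := by positivity
  have hstep1 : (∫ t in (0:ℝ)..1, (z - zz t)⁻¹)
      = (2 * Real.pi : ℝ)⁻¹ • ∫ θ in (0:ℝ)..(2 * Real.pi), (z - Complex.exp (θ * Complex.I))⁻¹ := by
    have := integral_comp_mul_left (a := (0:ℝ)) (b := 1)
      (f := fun θ : ℝ => (z - Complex.exp (θ * Complex.I))⁻¹) h2pi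
    rw [mul_zero, mul_one] at this
    rw [← this]
    apply intervalIntegral.integral_congr
    intro t _
    simp only [zz]
    congr 2
    push_cast
    ring
  have hI : (∫ θ in (0:ℝ)..(2 * Real.pi), (z - Complex.exp (θ * Complex.I))⁻¹) = 0 := by
    rcases eq_or_ne z 0 with rfl | hz0
    · have : ∀ θ : ℝ, ((0:ℂ) - Complex.exp (θ * Complex.I))⁻¹
          = -Complex.exp ((-Complex.I) * θ) := by
        intro θ
        rw [zero_sub, inv_neg, ← Complex.exp_neg]
        ring_nf
      rw [intervalIntegral.integral_congr (fun θ _ => this θ), intervalIntegral.integral_neg,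
        integral_exp_mul_complex (by simp [Complex.I_ne_zero] : (-Complex.I) ≠ 0)]
      have h1 : Complex.exp (-Complex.I * (2 * Real.pi : ℝ)) = 1 := by
        rw [show (-Complex.I * (2 * Real.pi : ℝ)) = -(2 * Real.pi * Complex.I) by push_cast; ring,
          Complex.exp_neg, Complex.exp_two_pi_mul_I, inv_one]
      rw [h1]
      simp
    · have hzs : z ∉ sphere (0:ℂ) |(1:ℝ)| := by
        simp only [abs_one, mem_sphere_iff_norm, sub_zero, Complex.norm_eq_abs]
        intro h; rw [h] at habs; exact lt_irrefl 1 habs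
      have hint2 : CircleIntegrable (fun w : ℂ => (w - z)⁻¹) 0 1 :=
        circleIntegrable_sub_inv_iff.mpr (Or.inr hzs)
      have h0s : (0:ℂ) ∉ sphere (0:ℂ) |(1:ℝ)| := by simp
      have hint1 : CircleIntegrable (fun w : ℂ => (w - 0)⁻¹) 0 1 :=
        circleIntegrable_sub_inv_iff.mpr (Or.inr h0s)
      -- the circle integral of g
      have hg : (∮ w in C((0:ℂ), 1), (Complex.I * z)⁻¹ * ((w - 0)⁻¹ - (w - z)⁻¹)) = 0 := by
        rw [circleIntegral.integral_const_mul,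
          circleIntegral.integral_sub hint1 hint2,
          circleIntegral.integral_sub_inv_of_mem_ball (w := z) (by simpa using hz),
          circleIntegral.integral_sub_inv_of_mem_ball (w := (0:ℂ)) (by simp)]
        simp
      rw [← hg, circleIntegral]
      apply intervalIntegral.integral_congr
      intro θ _
      simp only [deriv_circleMap, circleMap, Complex.ofReal_one, one_mul, zero_add,
        smul_eq_mul, sub_zero]
      set E := Complex.exp ((θ:ℂ) * Complex.I) with hE
      have hexp_ne : E ≠ 0 := Complex.exp_ne_zero _
      have hne2 : E - z ≠ 0 := by
        intro h
        have hzz : z = E := by linear_combination -h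
        have : Complex.abs z = 1 := by rw [hzz, hE, Complex.abs_exp]; simp
        rw [this] at habs; exact lt_irrefl 1 habs
      have h1 : (Complex.I * z) * (Complex.I * z)⁻¹ = 1 :=
        mul_inv_cancel₀ (mul_ne_zero Complex.I_ne_zero hz0)
      have h2 : E * E⁻¹ = 1 := mul_inv_cancel₀ hexp_ne
      have h3 : (E - z) * (E - z)⁻¹ = 1 := mul_inv_cancel₀ hne2
      rw [show z - E = -(E - z) by ring, inv_neg]
      linear_combination ((E - z)⁻¹) * h1 + (-(Complex.I * (Complex.I * z)⁻¹)) * h2 +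
        (Complex.I * (Complex.I * z)⁻¹) * h3
  rw [hI, smul_zero] at hstep1
  exact hstep1


lemma ennreal_pi : (NNReal.pi : ℝ≥0∞) = ENNReal.ofReal Real.pi := by
  rw [← NNReal.coe_real_pi, ENNReal.ofReal_coe_nnreal]

lemma ofReal_half : ENNReal.ofReal ((2:ℝ)⁻¹) = (2:ℝ≥0∞)⁻¹ := by
  rw [ENNReal.ofReal_inv_of_pos (by norm_num)]
  norm_num

lemma geom_sum_half (c : ℝ) (hc : 0 ≤ c) :
    (∑' j : ℕ, ENNReal.ofReal (c * (2:ℝ)⁻¹ ^ j)) = ENNReal.ofReal (2 * c) := by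
  have h1 : ∀ j : ℕ, ENNReal.ofReal (c * (2:ℝ)⁻¹ ^ j)
      = ENNReal.ofReal c * (2:ℝ≥0∞)⁻¹ ^ j := by
    intro j
    rw [ENNReal.ofReal_mul hc, ENNReal.ofReal_pow (by norm_num), ofReal_half]
  simp_rw [h1]
  rw [ENNReal.tsum_mul_left, ENNReal.tsum_geometric, ENNReal.one_sub_inv_two, inv_inv,
    show ((2:ℝ≥0∞)) = ENNReal.ofReal 2 by simp [ENNReal.ofReal_ofNat],
    ← ENNReal.ofReal_mul hc, mul_comm]

lemma lint_ball_inv (w : ℂ) (r : ℝ) (hr : 0 < r) :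
    (∫⁻ z in ball w r, ENNReal.ofReal ((Complex.abs (z - w))⁻¹))
      ≤ ENNReal.ofReal (4 * Real.pi * r) := by
  set f : ℂ → ℝ≥0∞ := fun z => ENNReal.ofReal ((Complex.abs (z - w))⁻¹) with hf
  have hae : (ball w r : Set ℂ) =ᵐ[volume] (ball w r \ {w} : Set ℂ) := by
    refine (MeasureTheory.diff_ae_eq_self.mpr ?_).symm
    exact measure_mono_null inter_subset_right (measure_singleton w)
  have hsub : (ball w r \ {w} : Set ℂ)
      ⊆ ⋃ j : ℕ, (closedBall w (r / 2 ^ j) \ ball w (r / 2 ^ (j + 1))) := by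
    rintro z ⟨hz, hzw⟩
    set d := dist z w with hd
    have hd0 : 0 < d := dist_pos.mpr (by simpa using hzw)
    have hdr : d < r := mem_ball.mp hz
    have hex : ∃ m : ℕ, r < d * 2 ^ m := by
      obtain ⟨m, hm⟩ := pow_unbounded_of_one_lt (r / d) (one_lt_two (α := ℝ))
      exact ⟨m, by rwa [div_lt_iff₀ hd0, mul_comm] at hm⟩
    classical
    set m₀ := Nat.find hex with hm₀
    have hspec : r < d * 2 ^ m₀ := Nat.find_spec hex
    have hm0ne : m₀ ≠ 0 := by
      intro h
      rw [h] at hspec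
      simp at hspec
      linarith
    obtain ⟨j, hj⟩ : ∃ j, m₀ = j + 1 :=
      ⟨m₀ - 1, (Nat.succ_pred_eq_of_pos (Nat.pos_of_ne_zero hm0ne)).symm⟩
    have hmin : ¬ r < d * 2 ^ j := Nat.find_min hex (by omega)
    rw [not_lt] at hmin
    refine mem_iUnion.mpr ⟨j, ?_, ?_⟩
    · rw [mem_closedBall, le_div_iff₀ (by positivity)]
      linarith [hmin]
    · rw [hj] at hspec
      rw [mem_ball, not_lt, div_le_iff₀ (by positivity)]
      linarith [hspec]
  calc ∫⁻ z in ball w r, f z = ∫⁻ z in ball w r \ {w}, f z := setLIntegral_congr hae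
    _ ≤ ∫⁻ z in ⋃ j : ℕ, (closedBall w (r / 2 ^ j) \ ball w (r / 2 ^ (j + 1))), f z :=
        lintegral_mono_set hsub
    _ ≤ ∑' j : ℕ, ∫⁻ z in closedBall w (r / 2 ^ j) \ ball w (r / 2 ^ (j + 1)), f z :=
        lintegral_iUnion_le _ _
    _ ≤ ∑' j : ℕ, ENNReal.ofReal ((2 * Real.pi * r) * (2:ℝ)⁻¹ ^ j) := by
        refine ENNReal.tsum_le_tsum fun j => ?_
        have hb : ∀ z ∈ closedBall w (r / 2 ^ j) \ ball w (r / 2 ^ (j + 1)),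
            f z ≤ ENNReal.ofReal (2 ^ (j+1) / r) := by
          rintro z ⟨_, hz2⟩
          rw [mem_ball, not_lt, Complex.dist_eq] at hz2
          apply ENNReal.ofReal_le_ofReal
          have h1 : (Complex.abs (z - w))⁻¹ ≤ (r / 2 ^ (j+1))⁻¹ :=
            inv_anti₀ (by positivity) hz2
          rwa [inv_div] at h1
        calc ∫⁻ z in closedBall w (r / 2 ^ j) \ ball w (r / 2 ^ (j + 1)), f z
            ≤ ∫⁻ _ in closedBall w (r / 2 ^ j) \ ball w (r / 2 ^ (j + 1)),
              ENNReal.ofReal (2 ^ (j+1) / r) :=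
              setLIntegral_mono' ((measurableSet_closedBall).diff measurableSet_ball) hb
          _ = ENNReal.ofReal (2 ^ (j+1) / r) *
              volume (closedBall w (r / 2 ^ j) \ ball w (r / 2 ^ (j + 1))) := setLIntegral_const _ _
          _ ≤ ENNReal.ofReal (2 ^ (j+1) / r) * volume (closedBall w (r / 2 ^ j)) := by
              exact mul_le_mul_right (measure_mono diff_subset) _
          _ ≤ ENNReal.ofReal ((2 * Real.pi * r) * (2:ℝ)⁻¹ ^ j) := by
              rw [Complex.volume_closedBall, ennreal_pi,
                ← ENNReal.ofReal_pow (by positivity), ← ENNReal.ofReal_mul (by positivity),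
                ← ENNReal.ofReal_mul (by positivity)]
              apply ENNReal.ofReal_le_ofReal
              apply le_of_eq
              rw [pow_succ]
              rw [inv_pow, div_pow]
              have h2j : ((2:ℝ) ^ j) ≠ 0 := by positivity
              field_simp
    _ = ENNReal.ofReal (2 * (2 * Real.pi * r)) := geom_sum_half _ (by positivity)
    _ ≤ ENNReal.ofReal (4 * Real.pi * r) := by
        apply ENNReal.ofReal_le_ofReal
        nlinarith [Real.pi_pos, hr]


lemma lint_compl_inv3 (w : ℂ) (δ : ℝ) (hδ : 0 < δ) :
    (∫⁻ z in (ball w δ)ᶜ, ENNReal.ofReal (((Complex.abs (z - w)) ^ 3)⁻¹))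
      ≤ ENNReal.ofReal (8 * Real.pi / δ) := by
  set f : ℂ → ℝ≥0∞ := fun z => ENNReal.ofReal (((Complex.abs (z - w)) ^ 3)⁻¹) with hf
  have hsub : ((ball w δ)ᶜ : Set ℂ)
      ⊆ ⋃ j : ℕ, (closedBall w (δ * 2 ^ (j + 1)) \ ball w (δ * 2 ^ j)) := by
    intro z hz
    rw [mem_compl_iff, mem_ball, not_lt] at hz
    set d := dist z w with hd
    have hd0 : 0 < d := lt_of_lt_of_le hδ hz
    have hex : ∃ m : ℕ, d < δ * 2 ^ m := by
      obtain ⟨m, hm⟩ := pow_unbounded_of_one_lt (d / δ) (one_lt_two (α := ℝ))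
      exact ⟨m, by rwa [div_lt_iff₀ hδ, mul_comm] at hm⟩
    classical
    have hspec : d < δ * 2 ^ (Nat.find hex) := Nat.find_spec hex
    have hm0ne : Nat.find hex ≠ 0 := by
      intro h
      rw [h] at hspec
      simp at hspec
      linarith
    obtain ⟨j, hj⟩ : ∃ j, Nat.find hex = j + 1 :=
      ⟨_ - 1, (Nat.succ_pred_eq_of_pos (Nat.pos_of_ne_zero hm0ne)).symm⟩
    have hmin : ¬ d < δ * 2 ^ j := Nat.find_min hex (by omega)
    rw [not_lt] at hmin
    rw [hj] at hspec
    exact mem_iUnion.mpr ⟨j, mem_closedBall.mpr hspec.le, by rwa [mem_ball, not_lt]⟩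
  calc ∫⁻ z in (ball w δ)ᶜ, f z
      ≤ ∫⁻ z in ⋃ j : ℕ, (closedBall w (δ * 2 ^ (j + 1)) \ ball w (δ * 2 ^ j)), f z :=
        lintegral_mono_set hsub
    _ ≤ ∑' j : ℕ, ∫⁻ z in closedBall w (δ * 2 ^ (j + 1)) \ ball w (δ * 2 ^ j), f z :=
        lintegral_iUnion_le _ _
    _ ≤ ∑' j : ℕ, ENNReal.ofReal ((4 * Real.pi / δ) * (2:ℝ)⁻¹ ^ j) := by
        refine ENNReal.tsum_le_tsum fun j => ?_
        have hb : ∀ z ∈ closedBall w (δ * 2 ^ (j + 1)) \ ball w (δ * 2 ^ j),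
            f z ≤ ENNReal.ofReal (((δ * 2 ^ j) ^ 3)⁻¹) := by
          rintro z ⟨_, hz2⟩
          rw [mem_ball, not_lt, Complex.dist_eq] at hz2
          apply ENNReal.ofReal_le_ofReal
          apply inv_anti₀ (by positivity)
          exact pow_le_pow_left₀ (by positivity) hz2 3
        calc ∫⁻ z in closedBall w (δ * 2 ^ (j + 1)) \ ball w (δ * 2 ^ j), f z
            ≤ ∫⁻ _ in closedBall w (δ * 2 ^ (j + 1)) \ ball w (δ * 2 ^ j),
              ENNReal.ofReal (((δ * 2 ^ j) ^ 3)⁻¹) :=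
              setLIntegral_mono' ((measurableSet_closedBall).diff measurableSet_ball) hb
          _ = ENNReal.ofReal (((δ * 2 ^ j) ^ 3)⁻¹) *
              volume (closedBall w (δ * 2 ^ (j + 1)) \ ball w (δ * 2 ^ j)) :=
              setLIntegral_const _ _
          _ ≤ ENNReal.ofReal (((δ * 2 ^ j) ^ 3)⁻¹) * volume (closedBall w (δ * 2 ^ (j + 1))) :=
              mul_le_mul_right (measure_mono diff_subset) _
          _ ≤ ENNReal.ofReal ((4 * Real.pi / δ) * (2:ℝ)⁻¹ ^ j) := by
              rw [Complex.volume_closedBall, ennreal_pi,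
                ← ENNReal.ofReal_pow (by positivity), ← ENNReal.ofReal_mul (by positivity),
                ← ENNReal.ofReal_mul (by positivity)]
              apply ENNReal.ofReal_le_ofReal
              apply le_of_eq
              have h2j : ((2:ℝ) ^ j) ≠ 0 := by positivity
              rw [inv_pow, pow_succ]
              field_simp
              ring
    _ = ENNReal.ofReal (2 * (4 * Real.pi / δ)) := geom_sum_half _ (by positivity)
    _ ≤ ENNReal.ofReal (8 * Real.pi / δ) := by
        apply ENNReal.ofReal_le_ofReal
        apply le_of_eq
        ring

noncomputable def gdom (S β aa : ℝ) (z : ℂ) : ℝ≥0∞ :=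
  if Complex.abs (z - zz (aa + β / 2)) < 2 * Real.pi * β then
    ENNReal.ofReal (S * β / Complex.abs (z - zz (aa + β / 2)))
      + ENNReal.ofReal S *
        ∫⁻ t in Set.Ioc aa (aa + β), ENNReal.ofReal ((Complex.abs (z - zz t))⁻¹)
  else ENNReal.ofReal (40 * S * β ^ 3 / (Complex.abs (z - zz (aa + β / 2))) ^ 3)

lemma absm (c : ℂ) : Measurable fun z : ℂ => Complex.abs (z - c) :=
  (Complex.continuous_abs.comp (continuous_id.sub continuous_const)).measurable

lemma Fmeas : Measurable fun p : ℂ × ℝ =>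
    ENNReal.ofReal ((Complex.abs (p.1 - zz p.2))⁻¹) := by
  apply Measurable.ennreal_ofReal
  apply Measurable.inv
  exact (Complex.continuous_abs.comp (continuous_fst.sub (zz_cont.comp continuous_snd))).measurable

lemma gdom_meas (S β aa : ℝ) : Measurable (gdom S β aa) := by
  apply Measurable.ite
  · exact measurableSet_lt (absm _) measurable_const
  · refine Measurable.add (f := fun x => ENNReal.ofReal (S * β / Complex.abs (x - zz (aa + β / 2))))
      (g := fun x => ENNReal.ofReal S *
        ∫⁻ t in Set.Ioc aa (aa + β), ENNReal.ofReal ((Complex.abs (x - zz t))⁻¹)) ?_ ?_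
    · exact ((absm _).const_div _).ennreal_ofReal
    · refine Measurable.const_mul ?_ _
      exact Measurable.lintegral_prod_right
        (f := fun (w : ℂ) (t : ℝ) => ENNReal.ofReal ((Complex.abs (w - zz t))⁻¹)) Fmeas
  · exact (((absm _).pow_const 3).const_div _).ennreal_ofReal

lemma pointwise_bound (S β aa : ℝ) (hS : 0 < S) (hβ : 0 < β) (hβ1 : β ≤ 1)
    (z : ℂ) (hz : z ∈ ball (0:ℂ) 1) :
    ENNReal.ofReal (Complex.abs
        (S • ∫ t in aa..(aa + β), ((z - zz (aa + β / 2))⁻¹ - (z - zz t)⁻¹)))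
      ≤ gdom S β aa z := by
  have hπ := Real.pi_pos
  set Z := zz (aa + β / 2) with hZ
  have hzZ : z - Z ≠ 0 := zz_ne z hz _
  have habsZ : 0 < Complex.abs (z - Z) := AbsoluteValue.pos _ hzZ
  have hcont : Continuous fun t : ℝ => (z - zz t)⁻¹ :=
    (continuous_const.sub zz_cont).inv₀ (fun t => zz_ne z hz t)
  have hInt : IntervalIntegrable (fun t : ℝ => (z - zz t)⁻¹) volume aa (aa + β) :=
    hcont.intervalIntegrable _ _
  rw [← Complex.norm_eq_abs, norm_smul, Real.norm_eq_abs, abs_of_pos hS, Complex.norm_eq_abs]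
  by_cases h : Complex.abs (z - Z) < 2 * Real.pi * β
  · -- near case
    rw [gdom, ← hZ, if_pos h]
    set L := ∫⁻ t in Set.Ioc aa (aa + β), ENNReal.ofReal ((Complex.abs (z - zz t))⁻¹) with hL
    have hJ : Complex.abs (∫ t in aa..(aa + β), ((z - Z)⁻¹ - (z - zz t)⁻¹))
        ≤ β / Complex.abs (z - Z) + L.toReal := by
      rw [intervalIntegral.integral_sub (intervalIntegrable_const) hInt,
        intervalIntegral.integral_const]
      rw [← Complex.norm_eq_abs]
      refine le_trans (norm_sub_le _ _) (add_le_add ?_ ?_)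
      · rw [norm_smul, Real.norm_eq_abs, Complex.norm_eq_abs, map_inv₀]
        rw [abs_of_nonneg (by linarith : (0:ℝ) ≤ aa + β - aa)]
        rw [div_eq_mul_inv]
        ring_nf
        exact le_refl _
      · have h1 : ‖∫ t in aa..(aa + β), (z - zz t)⁻¹‖
            ≤ ∫ t in aa..(aa + β), ‖(z - zz t)⁻¹‖ :=
          intervalIntegral.norm_integral_le_integral_norm (by linarith)
        have h2 : (∫ t in aa..(aa + β), ‖(z - zz t)⁻¹‖) = L.toReal := by
          rw [intervalIntegral.integral_of_le (by linarith)]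
          rw [MeasureTheory.integral_eq_lintegral_of_nonneg_ae
            (Filter.Eventually.of_forall fun t => norm_nonneg _)
            ((hcont.norm).aestronglyMeasurable)]
          rw [hL]
          congr 1
          apply lintegral_congr
          intro t
          rw [Complex.norm_eq_abs, map_inv₀]
        rw [Complex.norm_eq_abs] at h1
        simp only [Complex.norm_eq_abs, map_inv₀] at h1 h2
        rw [← h2]
        exact h1
    calc ENNReal.ofReal (S * Complex.abs (∫ t in aa..(aa + β), ((z - Z)⁻¹ - (z - zz t)⁻¹)))
        ≤ ENNReal.ofReal (S * β / Complex.abs (z - Z) + S * L.toReal) := by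
          apply ENNReal.ofReal_le_ofReal
          rw [mul_div_assoc]
          nlinarith [hJ, hS.le]
      _ ≤ ENNReal.ofReal (S * β / Complex.abs (z - Z)) + ENNReal.ofReal S * L := by
          rw [ENNReal.ofReal_add (by positivity) (by positivity)]
          apply add_le_add_right
          rw [ENNReal.ofReal_mul hS.le]
          exact mul_le_mul_right ENNReal.ofReal_toReal_le _
  · -- far case
    rw [gdom, ← hZ, if_neg h]
    push_neg at h
    set r := Complex.abs (z - Z) with hr
    have hr0 : 0 < r := habsZ
    have hr2 : r ≤ 2 := by
      have h1 : Complex.abs z < 1 := by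
        simpa [Complex.norm_eq_abs] using mem_ball_zero_iff.mp hz
      have h2 := norm_sub_le z Z
      rw [Complex.norm_eq_abs, Complex.norm_eq_abs, Complex.norm_eq_abs] at h2
      have h3 : Complex.abs Z = 1 := by rw [hZ, abs_zz]
      rw [hr]; linarith
    have hβr : Real.pi * β ≤ r / 2 := by linarith
    have hchord : ∀ t ∈ Set.uIoc aa (aa + β), Complex.abs (zz t - Z) ≤ Real.pi * β := by
      intro t ht
      rw [Set.uIoc_of_le (by linarith : aa ≤ aa + β)] at ht
      have h1 := zz_lip t (aa + β / 2)
      rw [hZ]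
      refine h1.trans ?_
      have h2 : |t - (aa + β / 2)| ≤ β / 2 := by
        rw [abs_le]
        constructor
        · linarith [ht.1]
        · linarith [ht.2]
      nlinarith
    have hfarz : ∀ t ∈ Set.uIoc aa (aa + β), r / 2 ≤ Complex.abs (z - zz t) := by
      intro t ht
      have h1 := hchord t ht
      have h2 : r ≤ Complex.abs (z - zz t) + Complex.abs (zz t - Z) := by
        calc r = Complex.abs ((z - zz t) + (zz t - Z)) := by rw [hr]; ring_nf
          _ ≤ _ := Complex.abs.add_le _ _
      linarith
    set c : ℂ := -(((z - Z) ^ 2)⁻¹) with hc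
    set B : ℝ → ℂ := fun t => (zz t - Z) ^ 2 * ((z - zz t)⁻¹ * ((z - Z) ^ 2)⁻¹) with hB
    have hident : (fun t : ℝ => (z - Z)⁻¹ - (z - zz t)⁻¹)
        = fun t => c • (zz t - Z) - B t := by
      funext t
      have h1 := zz_ne z hz t
      rw [hc, hB, smul_eq_mul]
      field_simp
      ring
    have hintA : IntervalIntegrable (fun t : ℝ => c • (zz t - Z)) volume aa (aa + β) :=
      (((zz_cont.sub continuous_const)).const_smul c).intervalIntegrable _ _
    have hintB : IntervalIntegrable B volume aa (aa + β) :=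
      (((zz_cont.sub continuous_const).pow 2).mul (hcont.mul continuous_const)).intervalIntegrable _ _
    have hintzz : IntervalIntegrable (fun t : ℝ => zz t - Z) volume aa (aa + β) :=
      (zz_cont.sub continuous_const).intervalIntegrable _ _
    have hsplit : (∫ t in aa..(aa + β), ((z - Z)⁻¹ - (z - zz t)⁻¹))
        = c • (∫ t in aa..(aa + β), (zz t - Z)) - ∫ t in aa..(aa + β), B t := by
      rw [hident, intervalIntegral.integral_sub hintA hintB, intervalIntegral.integral_smul]
    have hmid : Complex.abs (∫ t in aa..(aa + β), (zz t - Z))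
        ≤ Real.pi ^ 2 * β ^ 3 := by
      rw [intervalIntegral.integral_sub (zz_cont.intervalIntegrable _ _)
        (intervalIntegrable_const), intervalIntegral.integral_const]
      have hsm : (aa + β - aa) • Z = (β : ℂ) * zz (aa + β / 2) := by
        rw [show aa + β - aa = β by ring, hZ, Complex.real_smul]
      rw [hsm]
      exact midpoint_err aa β hβ hβ1
    have hBbd : Complex.abs (∫ t in aa..(aa + β), B t)
        ≤ ((Real.pi * β) ^ 2 * ((r / 2)⁻¹ * (r ^ 2)⁻¹)) * β := by
      have h1 : ∀ t ∈ Set.uIoc aa (aa + β),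
          ‖B t‖ ≤ (Real.pi * β) ^ 2 * ((r / 2)⁻¹ * (r ^ 2)⁻¹) := by
        intro t ht
        rw [hB, Complex.norm_eq_abs, map_mul, map_mul, map_pow, map_inv₀, map_inv₀, map_pow]
        have e1 : Complex.abs (zz t - Z) ^ 2 ≤ (Real.pi * β) ^ 2 :=
          pow_le_pow_left₀ (AbsoluteValue.nonneg _ _) (hchord t ht) 2
        have e2 : (Complex.abs (z - zz t))⁻¹ ≤ (r / 2)⁻¹ :=
          inv_anti₀ (by positivity) (hfarz t ht)
        have e3 : ((Complex.abs (z - Z)) ^ 2)⁻¹ = ((r:ℝ) ^ 2)⁻¹ := by rw [hr]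
        rw [e3]
        have hbpos : (0:ℝ) ≤ (Complex.abs (z - zz t))⁻¹ * ((r:ℝ) ^ 2)⁻¹ := by positivity
        apply mul_le_mul e1 (by
          apply mul_le_mul_of_nonneg_right e2 (by positivity)) hbpos (by positivity)
      have := intervalIntegral.norm_integral_le_of_norm_le_const h1
      rw [Complex.norm_eq_abs] at this
      refine this.trans ?_
      rw [show aa + β - aa = β by ring, abs_of_pos hβ]
    have habsJ : Complex.abs (∫ t in aa..(aa + β), ((z - Z)⁻¹ - (z - zz t)⁻¹))
        ≤ Real.pi ^ 2 * β ^ 3 / r ^ 2 + 2 * Real.pi ^ 2 * β ^ 3 / r ^ 3 := by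
      rw [hsplit, ← Complex.norm_eq_abs]
      refine (norm_sub_le _ _).trans ?_
      have hA : ‖c • (∫ t in aa..(aa + β), (zz t - Z))‖ ≤ Real.pi ^ 2 * β ^ 3 / r ^ 2 := by
        rw [norm_smul, Complex.norm_eq_abs, Complex.norm_eq_abs, hc, map_neg_eq_map, map_inv₀,
          map_pow, ← hr]
        rw [div_eq_mul_inv, mul_comm]
        exact mul_le_mul_of_nonneg_right hmid (by positivity)
      have heq : ((Real.pi * β) ^ 2 * ((r / 2)⁻¹ * (r ^ 2)⁻¹)) * β
          = 2 * Real.pi ^ 2 * β ^ 3 / r ^ 3 := by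
        field_simp
      rw [heq] at hBbd
      rw [Complex.norm_eq_abs]
      exact add_le_add hA hBbd
    apply ENNReal.ofReal_le_ofReal
    have hpi2 : Real.pi ^ 2 ≤ 10 := by nlinarith [Real.pi_lt_d2, Real.pi_pos]
    have hr2' : (0:ℝ) < r ^ 2 := by positivity
    have hr3' : (0:ℝ) < r ^ 3 := by positivity
    have key : Real.pi ^ 2 * β ^ 3 / r ^ 2 ≤ 2 * Real.pi ^ 2 * β ^ 3 / r ^ 3 := by
      rw [div_le_div_iff₀ hr2' hr3']
      nlinarith [mul_nonneg (mul_nonneg (mul_nonneg (sq_nonneg Real.pi) (pow_pos hβ 3).le)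
        (sq_nonneg r)) (sub_nonneg.mpr hr2)]
    have h2 : S * Complex.abs (∫ t in aa..(aa + β), ((z - Z)⁻¹ - (z - zz t)⁻¹))
        ≤ S * (4 * Real.pi ^ 2 * β ^ 3 / r ^ 3) := by
      apply mul_le_mul_of_nonneg_left _ hS.le
      have h9 := habsJ
      have h8 := key
      ring_nf at h9 h8 ⊢
      linarith
    refine h2.trans ?_
    rw [show S * (4 * Real.pi ^ 2 * β ^ 3 / r ^ 3) = 4 * Real.pi ^ 2 * S * β ^ 3 / r ^ 3 by ring,
      div_le_div_iff₀ hr3' hr3']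
    nlinarith [mul_le_mul_of_nonneg_right hpi2
      (mul_nonneg (mul_nonneg hS.le (pow_pos hβ 3).le) hr3'.le)]

lemma gdom_lint (S β aa : ℝ) (hS : 0 < S) (hβ : 0 < β) (hβ1 : β ≤ 1) :
    (∫⁻ z in ball (0:ℂ) 1, gdom S β aa z) ≤ ENNReal.ofReal (400 * S * β ^ 2) := by
  have hπ := Real.pi_pos
  set Z := zz (aa + β / 2) with hZ
  have hδ0 : (0:ℝ) < 2 * Real.pi * β := by positivity
  set D := ball (0:ℂ) 1 with hD
  set N := ball Z (2 * Real.pi * β) with hN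
  have hNmem : ∀ z : ℂ, z ∈ N ↔ Complex.abs (z - Z) < 2 * Real.pi * β := by
    intro z; rw [hN, mem_ball, Complex.dist_eq, Complex.norm_eq_abs]
  have hb1meas : Measurable fun z : ℂ =>
      ENNReal.ofReal (S * β / Complex.abs (z - Z)) :=
    ((absm Z).const_div _).ennreal_ofReal
  -- Part A
  have hA : (∫⁻ z in D ∩ N, ENNReal.ofReal (S * β / Complex.abs (z - Z)))
      ≤ ENNReal.ofReal (8 * Real.pi ^ 2 * S * β ^ 2) := by
    calc (∫⁻ z in D ∩ N, ENNReal.ofReal (S * β / Complex.abs (z - Z)))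
        ≤ ∫⁻ z in N, ENNReal.ofReal (S * β / Complex.abs (z - Z)) :=
          lintegral_mono_set inter_subset_right
      _ = ∫⁻ z in N, ENNReal.ofReal (S * β) * ENNReal.ofReal ((Complex.abs (z - Z))⁻¹) := by
          apply lintegral_congr
          intro z
          rw [div_eq_mul_inv, ENNReal.ofReal_mul (by positivity)]
      _ = ENNReal.ofReal (S * β) * ∫⁻ z in N, ENNReal.ofReal ((Complex.abs (z - Z))⁻¹) :=
          lintegral_const_mul' _ _ ENNReal.ofReal_ne_top
      _ ≤ ENNReal.ofReal (S * β) * ENNReal.ofReal (4 * Real.pi * (2 * Real.pi * β)) :=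
          mul_le_mul_right (lint_ball_inv Z _ hδ0) _
      _ = ENNReal.ofReal (S * β * (4 * Real.pi * (2 * Real.pi * β))) :=
          (ENNReal.ofReal_mul (by positivity)).symm
      _ = ENNReal.ofReal (8 * Real.pi ^ 2 * S * β ^ 2) := by congr 1; ring
  -- Part B
  have hB : (ENNReal.ofReal S * ∫⁻ z in D ∩ N,
        ∫⁻ t in Set.Ioc aa (aa + β), ENNReal.ofReal ((Complex.abs (z - zz t))⁻¹))
      ≤ ENNReal.ofReal (12 * Real.pi ^ 2 * S * β ^ 2) := by
    have hswap : (∫⁻ z in D ∩ N,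
          ∫⁻ t in Set.Ioc aa (aa + β), ENNReal.ofReal ((Complex.abs (z - zz t))⁻¹))
        = ∫⁻ t in Set.Ioc aa (aa + β),
            ∫⁻ z in D ∩ N, ENNReal.ofReal ((Complex.abs (z - zz t))⁻¹) :=
      lintegral_lintegral_swap Fmeas.aemeasurable
    rw [hswap]
    have hinner : ∀ t ∈ Set.Ioc aa (aa + β),
        (∫⁻ z in D ∩ N, ENNReal.ofReal ((Complex.abs (z - zz t))⁻¹))
          ≤ ENNReal.ofReal (12 * Real.pi ^ 2 * β) := by
      intro t ht
      have hsub : D ∩ N ⊆ ball (zz t) (3 * Real.pi * β) := by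
        intro z hz
        have h1 : Complex.abs (z - Z) < 2 * Real.pi * β := (hNmem z).mp hz.2
        have h2 : Complex.abs (Z - zz t) ≤ Real.pi * β := by
          rw [hZ]
          refine (zz_lip _ _).trans ?_
          have : |aa + β / 2 - t| ≤ β / 2 := by
            rw [abs_le]
            constructor
            · linarith [ht.2]
            · linarith [ht.1]
          nlinarith
        rw [mem_ball, Complex.dist_eq]
        calc Complex.abs (z - zz t) = Complex.abs ((z - Z) + (Z - zz t)) := by ring_nf
          _ ≤ Complex.abs (z - Z) + Complex.abs (Z - zz t) := Complex.abs.add_le _ _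
          _ < 3 * Real.pi * β := by linarith
      calc (∫⁻ z in D ∩ N, ENNReal.ofReal ((Complex.abs (z - zz t))⁻¹))
          ≤ ∫⁻ z in ball (zz t) (3 * Real.pi * β),
              ENNReal.ofReal ((Complex.abs (z - zz t))⁻¹) := lintegral_mono_set hsub
        _ ≤ ENNReal.ofReal (4 * Real.pi * (3 * Real.pi * β)) :=
            lint_ball_inv (zz t) _ (by positivity)
        _ = ENNReal.ofReal (12 * Real.pi ^ 2 * β) := by congr 1; ring
    calc ENNReal.ofReal S * ∫⁻ t in Set.Ioc aa (aa + β),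
          ∫⁻ z in D ∩ N, ENNReal.ofReal ((Complex.abs (z - zz t))⁻¹)
        ≤ ENNReal.ofReal S * ∫⁻ _ in Set.Ioc aa (aa + β),
            ENNReal.ofReal (12 * Real.pi ^ 2 * β) :=
          mul_le_mul_right (setLIntegral_mono' measurableSet_Ioc hinner) _
      _ = ENNReal.ofReal S * (ENNReal.ofReal (12 * Real.pi ^ 2 * β) * ENNReal.ofReal β) := by
          rw [setLIntegral_const, Real.volume_Ioc, show aa + β - aa = β by ring]
      _ = ENNReal.ofReal (12 * Real.pi ^ 2 * S * β ^ 2) := by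
          rw [← ENNReal.ofReal_mul (by positivity), ← ENNReal.ofReal_mul (by positivity)]
          congr 1; ring
  -- Part C
  have hC : (∫⁻ z in D \ N,
        ENNReal.ofReal (40 * S * β ^ 3 / (Complex.abs (z - Z)) ^ 3))
      ≤ ENNReal.ofReal (160 * S * β ^ 2) := by
    calc (∫⁻ z in D \ N, ENNReal.ofReal (40 * S * β ^ 3 / (Complex.abs (z - Z)) ^ 3))
        ≤ ∫⁻ z in Nᶜ, ENNReal.ofReal (40 * S * β ^ 3 / (Complex.abs (z - Z)) ^ 3) :=
          lintegral_mono_set (fun z hz => hz.2)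
      _ = ∫⁻ z in Nᶜ, ENNReal.ofReal (40 * S * β ^ 3)
            * ENNReal.ofReal (((Complex.abs (z - Z)) ^ 3)⁻¹) := by
          apply lintegral_congr
          intro z
          rw [div_eq_mul_inv, ENNReal.ofReal_mul (by positivity)]
      _ = ENNReal.ofReal (40 * S * β ^ 3)
            * ∫⁻ z in Nᶜ, ENNReal.ofReal (((Complex.abs (z - Z)) ^ 3)⁻¹) :=
          lintegral_const_mul' _ _ ENNReal.ofReal_ne_top
      _ ≤ ENNReal.ofReal (40 * S * β ^ 3) * ENNReal.ofReal (8 * Real.pi / (2 * Real.pi * β)) :=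
          mul_le_mul_right (lint_compl_inv3 Z _ hδ0) _
      _ = ENNReal.ofReal (40 * S * β ^ 3 * (8 * Real.pi / (2 * Real.pi * β))) :=
          (ENNReal.ofReal_mul (by positivity)).symm
      _ = ENNReal.ofReal (160 * S * β ^ 2) := by
          congr 1
          field_simp
          ring
  calc (∫⁻ z in D, gdom S β aa z)
      = ∫⁻ z in (D ∩ N) ∪ (D \ N), gdom S β aa z := by rw [inter_union_diff]
    _ ≤ (∫⁻ z in D ∩ N, gdom S β aa z) + ∫⁻ z in D \ N, gdom S β aa z :=
        lintegral_union_le _ _ _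
    _ ≤ (ENNReal.ofReal (8 * Real.pi ^ 2 * S * β ^ 2)
          + ENNReal.ofReal (12 * Real.pi ^ 2 * S * β ^ 2)) + ENNReal.ofReal (160 * S * β ^ 2) := by
        refine add_le_add ?_ ?_
        · have hcong : (∫⁻ z in D ∩ N, gdom S β aa z)
              = ∫⁻ z in D ∩ N, (ENNReal.ofReal (S * β / Complex.abs (z - Z))
                + ENNReal.ofReal S *
                  ∫⁻ t in Set.Ioc aa (aa + β), ENNReal.ofReal ((Complex.abs (z - zz t))⁻¹)) := by
            apply setLIntegral_congr_fun (measurableSet_ball.inter measurableSet_ball)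
            intro z hz
            rw [gdom, ← hZ, if_pos ((hNmem z).mp hz.2)]
          rw [hcong, lintegral_add_left hb1meas]
          refine add_le_add hA ?_
          rw [lintegral_const_mul' _ _ ENNReal.ofReal_ne_top]
          exact hB
        · have hcong : (∫⁻ z in D \ N, gdom S β aa z)
              = ∫⁻ z in D \ N,
                  ENNReal.ofReal (40 * S * β ^ 3 / (Complex.abs (z - Z)) ^ 3) := by
            apply setLIntegral_congr_fun (measurableSet_ball.diff measurableSet_ball)
            intro z hz
            rw [gdom, ← hZ, if_neg (fun hlt => hz.2 ((hNmem z).mpr hlt))]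
          rw [hcong]
          exact hC
    _ ≤ ENNReal.ofReal (400 * S * β ^ 2) := by
        rw [← ENNReal.ofReal_add (by positivity) (by positivity),
          ← ENNReal.ofReal_add (by positivity) (by positivity)]
        apply ENNReal.ofReal_le_ofReal
        have hpi2 : Real.pi ^ 2 ≤ 10 := by nlinarith [Real.pi_lt_d2, Real.pi_pos]
        nlinarith [mul_pos hS (pow_pos hβ 2), mul_le_mul_of_nonneg_right hpi2
          (mul_pos hS (pow_pos hβ 2)).le]

end WNB

open MeasureTheory
open WNB

/-- Sharpness of the weighted Newman bound in dimension two: for any positive weights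
`α_1, …, α_n` one can place points `z_1, …, z_n` on the unit circle so that
`∫_𝔻 |∑ α_k/(z - z_k)| dm(z) ≤ C · (∑ α_k²) / (∑ α_k)`. -/
theorem weighted_newman_bound_sharp_dim_two :
    ∃ C : ℝ, 0 < C ∧
      ∀ (n : ℕ) (α : Fin n → ℝ), (∀ k, 0 < α k) →
        ∃ z : Fin n → ℂ, (∀ k, ‖z k‖ = 1) ∧
          ∫ w in Metric.ball (0 : ℂ) 1,
              ‖∑ k, (α k : ℂ) / (w - z k)‖ ≤
            C * ((∑ k, (α k) ^ 2) / (∑ k, α k)) := by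
  classical
  refine ⟨400, by norm_num, ?_⟩
  intro n α hα
  rcases Nat.eq_zero_or_pos n with hn | hn
  · subst hn
    exact ⟨fun k => 1, fun k => k.elim0, by simp⟩
  · set S := ∑ k, α k with hSdef
    have hS : 0 < S := Finset.sum_pos (fun k _ => hα k) ⟨⟨0, hn⟩, Finset.mem_univ _⟩
    set b : ℕ → ℝ := fun j => if h : j < n then α ⟨j, h⟩ / S else 0 with hbdef
    set a : ℕ → ℝ := fun m => ∑ j ∈ Finset.range m, b j with hadef
    have hbk : ∀ k : Fin n, b k = α k / S := by
      intro k
      rw [hbdef]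
      simp only [k.isLt, dif_pos]
    have hbpos : ∀ k : Fin n, 0 < b k := fun k => by
      rw [hbk]; exact div_pos (hα k) hS
    have hb1 : ∀ k : Fin n, b k ≤ 1 := by
      intro k; rw [hbk, div_le_one hS, hSdef]
      exact Finset.single_le_sum (fun i _ => (hα i).le) (Finset.mem_univ k)
    have ha0 : a 0 = 0 := by rw [hadef]; simp
    have hak : ∀ m, a (m + 1) = a m + b m := fun m => Finset.sum_range_succ b m
    have han : a n = 1 := by
      rw [hadef]
      simp only
      rw [← Fin.sum_univ_eq_sum_range b n, Finset.sum_congr rfl fun k _ => hbk k,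
        ← Finset.sum_div, ← hSdef, div_self hS.ne']
    refine ⟨fun k => WNB.zz (a k + b k / 2), fun k => WNB.abs_zz _, ?_⟩
    beta_reduce
    have hIdent : ∀ w ∈ ball (0:ℂ) 1,
        (∑ k : Fin n, (α k : ℂ) / (w - WNB.zz (a k.val + b k.val / 2)))
        = ∑ k : Fin n, S • ∫ t in (a k.val)..(a k.val + b k.val),
            ((w - WNB.zz (a k.val + b k.val / 2))⁻¹ - (w - WNB.zz t)⁻¹) := by
      intro w hw
      have hcont : Continuous fun t : ℝ => (w - WNB.zz t)⁻¹ :=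
        (continuous_const.sub WNB.zz_cont).inv₀ (fun t => WNB.zz_ne w hw t)
      have hInt : ∀ u v : ℝ, IntervalIntegrable (fun t => (w - WNB.zz t)⁻¹) volume u v :=
        fun u v => hcont.intervalIntegrable u v
      have hsum0 : (∑ k ∈ Finset.range n, ∫ t in (a k)..(a (k + 1)), (w - WNB.zz t)⁻¹) = 0 := by
        rw [intervalIntegral.sum_integral_adjacent_intervals (fun i _ => hInt _ _), ha0, han]
        exact WNB.circle_avg_zero w hw
      have hterm : ∀ k : Fin n,
          S • (∫ t in (a k.val)..(a k.val + b k.val),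
            ((w - WNB.zz (a k.val + b k.val / 2))⁻¹ - (w - WNB.zz t)⁻¹))
          = (α k : ℂ) / (w - WNB.zz (a k.val + b k.val / 2))
            - S • ∫ t in (a k.val)..(a (k.val + 1)), (w - WNB.zz t)⁻¹ := by
        intro k
        rw [intervalIntegral.integral_sub intervalIntegrable_const (hInt _ _),
          intervalIntegral.integral_const, smul_sub]
        congr 1
        · rw [show a k.val + b k.val - a k.val = b k.val by ring, hbk k, smul_smul,
            show S * (α k / S) = α k by field_simp, Complex.real_smul]
          exact (div_eq_mul_inv _ _).symm
        · rw [hak k.val]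
      rw [Finset.sum_congr rfl (fun k _ => hterm k), Finset.sum_sub_distrib]
      have h2 : (∑ k : Fin n, S • ∫ t in (a k.val)..(a (k.val + 1)), (w - WNB.zz t)⁻¹)
          = (0:ℂ) := by
        rw [← Finset.smul_sum,
          Fin.sum_univ_eq_sum_range (fun k => ∫ t in (a k)..(a (k + 1)), (w - WNB.zz t)⁻¹) n,
          hsum0, smul_zero]
      rw [h2, sub_zero]
    have hfc : ContinuousOn
        (fun w : ℂ => ∑ k : Fin n, (α k : ℂ) / (w - WNB.zz (a k.val + b k.val / 2)))
        (ball (0:ℂ) 1) := by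
      apply continuousOn_finset_sum
      intro k _
      exact continuousOn_const.div ((continuous_id.sub continuous_const).continuousOn)
        (fun w hw => WNB.zz_ne w hw _)
    have hfmeas : AEStronglyMeasurable
        (fun w : ℂ => Complex.abs (∑ k : Fin n, (α k : ℂ) / (w - WNB.zz (a k.val + b k.val / 2))))
        (volume.restrict (ball (0:ℂ) 1)) :=
      (Complex.continuous_abs.comp_continuousOn hfc).aestronglyMeasurable measurableSet_ball
    simp only [Complex.norm_eq_abs]
    rw [MeasureTheory.integral_eq_lintegral_of_nonneg_ae
      (Filter.Eventually.of_forall fun w => AbsoluteValue.nonneg _ _) hfmeas]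
    have hRHS0 : 0 ≤ 400 * ((∑ k, (α k) ^ 2) / S) :=
      mul_nonneg (by norm_num)
        (div_nonneg (Finset.sum_nonneg fun k _ => sq_nonneg _) hS.le)
    apply ENNReal.toReal_le_of_le_ofReal hRHS0
    calc (∫⁻ w in ball (0:ℂ) 1, ENNReal.ofReal
          (Complex.abs (∑ k : Fin n, (α k : ℂ) / (w - WNB.zz (a k.val + b k.val / 2)))))
        ≤ ∫⁻ w in ball (0:ℂ) 1, ∑ k : Fin n, WNB.gdom S (b k.val) (a k.val) w := by
          apply setLIntegral_mono' measurableSet_ball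
          intro w hw
          rw [hIdent w hw]
          calc ENNReal.ofReal (Complex.abs (∑ k : Fin n,
                S • ∫ t in (a k.val)..(a k.val + b k.val),
                  ((w - WNB.zz (a k.val + b k.val / 2))⁻¹ - (w - WNB.zz t)⁻¹)))
              ≤ ENNReal.ofReal (∑ k : Fin n, Complex.abs
                  (S • ∫ t in (a k.val)..(a k.val + b k.val),
                    ((w - WNB.zz (a k.val + b k.val / 2))⁻¹ - (w - WNB.zz t)⁻¹))) :=
                ENNReal.ofReal_le_ofReal (Complex.abs.sum_le _ _)
            _ = ∑ k : Fin n, ENNReal.ofReal (Complex.abs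
                  (S • ∫ t in (a k.val)..(a k.val + b k.val),
                    ((w - WNB.zz (a k.val + b k.val / 2))⁻¹ - (w - WNB.zz t)⁻¹))) :=
                ENNReal.ofReal_sum_of_nonneg (fun k _ => AbsoluteValue.nonneg _ _)
            _ ≤ ∑ k : Fin n, WNB.gdom S (b k.val) (a k.val) w :=
                Finset.sum_le_sum fun k _ =>
                  WNB.pointwise_bound S (b k.val) (a k.val) hS (hbpos k) (hb1 k) w hw
      _ = ∑ k : Fin n, ∫⁻ w in ball (0:ℂ) 1, WNB.gdom S (b k.val) (a k.val) w :=
          lintegral_finset_sum _ (fun k _ => WNB.gdom_meas _ _ _)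
      _ ≤ ∑ k : Fin n, ENNReal.ofReal (400 * S * (b k.val) ^ 2) :=
          Finset.sum_le_sum fun k _ => WNB.gdom_lint S _ _ hS (hbpos k) (hb1 k)
      _ = ENNReal.ofReal (∑ k : Fin n, 400 * S * (b k.val) ^ 2) :=
          (ENNReal.ofReal_sum_of_nonneg (fun k _ => by positivity)).symm
      _ ≤ ENNReal.ofReal (400 * ((∑ k, (α k) ^ 2) / S)) := by
          apply ENNReal.ofReal_le_ofReal
          apply le_of_eq
          have hterm2 : ∀ k : Fin n, 400 * S * (b k.val) ^ 2 = 400 * (α k) ^ 2 / S := by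
            intro k
            rw [hbk k]
            field_simp
          rw [Finset.sum_congr rfl fun k _ => hterm2 k, ← Finset.sum_div, ← Finset.mul_sum,
            mul_div_assoc]
end

section
/- There exists an absolute constant C > 0 such that for all points a, b in the closed unit disc of ℂ with δ := |a - b| ≤ 1 (and δ > 0), one has ∫_{D} | 1/(z - a) - 1/(z - b) | dm(z) ≤ C · (δ + δ·log(1/δ)). -/
open MeasureTheory

open MeasureTheory Measure Set Metric
open scoped ENNReal NNReal

lemma radial_lintegral (f : ℝ → ℝ≥0∞) (hf : Measurable f) :
    ∫⁻ z : ℂ, f ‖z‖ = 2 * volume (Metric.ball (0:ℂ) 1) *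
      ∫⁻ r in Set.Ioi (0:ℝ), (ENNReal.ofReal r) * f r := by
  have hdim : Module.finrank ℝ ℂ = 2 := Complex.finrank_real_complex
  have hinner : ∫⁻ r : Ioi (0:ℝ), f r ∂(Measure.volumeIoiPow (Module.finrank ℝ ℂ - 1))
      = ∫⁻ r in Set.Ioi (0:ℝ), (ENNReal.ofReal r) * f r := by
    calc ∫⁻ r : Ioi (0:ℝ), f r ∂(Measure.volumeIoiPow (Module.finrank ℝ ℂ - 1))
        = ∫⁻ a : Ioi (0:ℝ), ENNReal.ofReal (↑a ^ (Module.finrank ℝ ℂ - 1)) * f ↑a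
            ∂(comap Subtype.val volume) := by
          rw [Measure.volumeIoiPow,
            lintegral_withDensity_eq_lintegral_mul _
              ((measurable_subtype_coe.pow_const _).ennreal_ofReal)
              (show Measurable fun r : Ioi (0:ℝ) => f ↑r from hf.comp measurable_subtype_coe)]
          rfl
      _ = ∫⁻ r in Set.Ioi (0:ℝ), ENNReal.ofReal (r ^ (Module.finrank ℝ ℂ - 1)) * f r :=
          lintegral_subtype_comap measurableSet_Ioi
            (fun r => ENNReal.ofReal (r ^ (Module.finrank ℝ ℂ - 1)) * f r)
      _ = ∫⁻ r in Set.Ioi (0:ℝ), (ENNReal.ofReal r) * f r := by simp [hdim]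
  calc ∫⁻ z : ℂ, f ‖z‖
      = ∫⁻ x : ({0}ᶜ : Set ℂ), f ‖(x : ℂ)‖ ∂(volume.comap Subtype.val) := by
        rw [lintegral_subtype_comap (measurableSet_singleton (0:ℂ)).compl
          (fun z => f ‖z‖), MeasureTheory.restrict_compl_singleton]
    _ = ∫⁻ p : sphere (0:ℂ) 1 × Ioi (0:ℝ), f p.2
          ∂((volume : Measure ℂ).toSphere.prod
            (Measure.volumeIoiPow (Module.finrank ℝ ℂ - 1))) :=
        by simpa [homeomorphUnitSphereProd] using
          (volume : Measure ℂ).measurePreserving_homeomorphUnitSphereProd.lintegral_comp_emb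
            (Homeomorph.measurableEmbedding _) (fun p => f p.2)
    _ = ((volume : Measure ℂ).toSphere univ) *
          ∫⁻ r : Ioi (0:ℝ), f r ∂(Measure.volumeIoiPow (Module.finrank ℝ ℂ - 1)) := by
        have := lintegral_prod_mul (μ := (volume : Measure ℂ).toSphere)
          (ν := Measure.volumeIoiPow (Module.finrank ℝ ℂ - 1))
          (f := fun _ : sphere (0:ℂ) 1 => (1 : ℝ≥0∞))
          (g := fun r : Ioi (0:ℝ) => f r)
          aemeasurable_const ((hf.comp measurable_subtype_coe).aemeasurable)
        simpa [lintegral_one] using this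
    _ = 2 * volume (Metric.ball (0:ℂ) 1) * ∫⁻ r in Set.Ioi (0:ℝ), (ENNReal.ofReal r) * f r := by
        rw [Measure.toSphere_apply_univ, hinner, hdim]
        norm_num

example : True := trivial

lemma lint_translate (h : ℝ → ℝ≥0∞) (c : ℂ) :
    ∫⁻ z : ℂ, h ‖z - c‖ = ∫⁻ z : ℂ, h ‖z‖ := by
  simpa [sub_eq_add_neg] using lintegral_add_right_eq_self (fun z : ℂ => h ‖z‖) (-c)

lemma phi_lintegral (R : ℝ) (hR : 0 < R) :
    ∫⁻ r in Set.Ioi (0:ℝ), ENNReal.ofReal r *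
        (Set.Ioc (0:ℝ) R).indicator (fun s => ENNReal.ofReal (2 / s)) r
      = ENNReal.ofReal (2 * R) := by
  have hcong : ∀ r ∈ Set.Ioi (0:ℝ), ENNReal.ofReal r *
      (Set.Ioc (0:ℝ) R).indicator (fun s => ENNReal.ofReal (2 / s)) r
      = (Set.Ioc (0:ℝ) R).indicator (fun _ => ENNReal.ofReal 2) r := by
    intro r hr
    by_cases hmem : r ∈ Set.Ioc (0:ℝ) R
    · rw [Set.indicator_of_mem hmem, Set.indicator_of_mem hmem,
        ← ENNReal.ofReal_mul (le_of_lt hr)]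
      congr 1
      field_simp
      exact div_self (ne_of_gt (Set.mem_Ioi.mp hr))
    · rw [Set.indicator_of_notMem hmem, Set.indicator_of_notMem hmem, mul_zero]
  rw [setLIntegral_congr_fun measurableSet_Ioi hcong,
    lintegral_indicator measurableSet_Ioc,
    Measure.restrict_restrict measurableSet_Ioc,
    Set.inter_eq_self_of_subset_left Set.Ioc_subset_Ioi_self,
    setLIntegral_const, Real.volume_Ioc, ← ENNReal.ofReal_mul (by norm_num)]
  norm_num

lemma psi_lintegral (c R : ℝ) (hc : 0 ≤ c) (hR : 0 < R) (hR2 : R ≤ 2) :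
    ∫⁻ r in Set.Ioi (0:ℝ), ENNReal.ofReal r *
        (Set.Ioc R 2).indicator (fun s => ENNReal.ofReal (c / s ^ 2)) r
      = ENNReal.ofReal (c * Real.log (2 / R)) := by
  have hcong : ∀ r ∈ Set.Ioi (0:ℝ), ENNReal.ofReal r *
      (Set.Ioc R 2).indicator (fun s => ENNReal.ofReal (c / s ^ 2)) r
      = (Set.Ioc R 2).indicator (fun s => ENNReal.ofReal (c / s)) r := by
    intro r hr
    by_cases hmem : r ∈ Set.Ioc R 2
    · rw [Set.indicator_of_mem hmem, Set.indicator_of_mem hmem,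
        ← ENNReal.ofReal_mul (le_of_lt hr)]
      congr 1
      have hrne : r ≠ 0 := ne_of_gt (Set.mem_Ioi.mp hr)
      field_simp
    · rw [Set.indicator_of_notMem hmem, Set.indicator_of_notMem hmem, mul_zero]
  have hsub : Set.Ioc R 2 ⊆ Set.Ioi (0:ℝ) := fun x hx => lt_trans hR hx.1
  rw [setLIntegral_congr_fun measurableSet_Ioi hcong,
    lintegral_indicator measurableSet_Ioc,
    Measure.restrict_restrict measurableSet_Ioc,
    Set.inter_eq_self_of_subset_left hsub]
  have hint : IntegrableOn (fun s : ℝ => c / s) (Set.Ioc R 2) volume := by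
    rw [← intervalIntegrable_iff_integrableOn_Ioc_of_le hR2]
    apply ContinuousOn.intervalIntegrable
    apply ContinuousOn.div continuousOn_const continuousOn_id
    intro x hx
    rw [Set.uIcc_of_le hR2] at hx
    exact ne_of_gt (lt_of_lt_of_le hR hx.1)
  have hnn : 0 ≤ᵐ[volume.restrict (Set.Ioc R 2)] fun s : ℝ => c / s := by
    filter_upwards [ae_restrict_mem measurableSet_Ioc] with s hs
    have : 0 < s := lt_trans hR hs.1
    positivity
  rw [← MeasureTheory.ofReal_integral_eq_lintegral_ofReal hint hnn]
  congr 1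
  rw [← intervalIntegral.integral_of_le hR2]
  simp_rw [div_eq_mul_inv]
  rw [intervalIntegral.integral_const_mul, integral_inv_of_pos hR (by norm_num : (0:ℝ) < 2)]
  rw [div_eq_mul_inv]


/-- If `a, b` lie in the closed unit disc and `δ = |a - b|` satisfies `0 < δ ≤ 1`, then
`∫_𝔻 |1/(z-a) - 1/(z-b)| dm(z) ≤ C · (δ + δ·log(1/δ))` for an absolute constant `C`. -/
theorem difference_of_cauchy_kernels_bound :
    ∃ C : ℝ, 0 < C ∧
      ∀ a b : ℂ, ‖a‖ ≤ 1 → ‖b‖ ≤ 1 →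
        a ≠ b → ‖a - b‖ ≤ 1 →
        ∫ z in Metric.ball (0 : ℂ) 1,
            ‖(z - a)⁻¹ - (z - b)⁻¹‖ ≤
          C * (‖a - b‖ +
            ‖a - b‖ * Real.log (1 / ‖a - b‖)) := by
  refine ⟨50, by norm_num, fun a b ha hb hab hd1 => ?_⟩
  set δ : ℝ := ‖a - b‖ with hδdef
  have hδ0 : 0 < δ := norm_pos_iff.mpr (sub_ne_zero.mpr hab)
  have hδ1 : δ ≤ 1 := hd1
  have hR0 : 0 < δ / 2 := by positivity
  have hR2 : δ / 2 ≤ 2 := by linarith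
  set φ : ℝ → ℝ≥0∞ :=
    fun r => (Set.Ioc (0:ℝ) (δ/2)).indicator (fun s => ENNReal.ofReal (2 / s)) r with hφdef
  set ψ : ℝ → ℝ≥0∞ :=
    fun r => (Set.Ioc (δ/2) 2).indicator (fun s => ENNReal.ofReal (δ/2 / s ^ 2)) r with hψdef
  have hφm : Measurable φ :=
    Measurable.indicator ((measurable_const.div measurable_id).ennreal_ofReal) measurableSet_Ioc
  have hψm : Measurable ψ :=
    Measurable.indicator ((measurable_const.div (measurable_id.pow_const 2)).ennreal_ofReal)
      measurableSet_Ioc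
  have hgm : Measurable fun z : ℂ => ‖(z - a)⁻¹ - (z - b)⁻¹‖ :=
    ((measurable_id.sub_const a).inv.sub ((measurable_id.sub_const b).inv)).norm
  rw [MeasureTheory.integral_eq_lintegral_of_nonneg_ae
    (Filter.Eventually.of_forall fun z => norm_nonneg _) hgm.aestronglyMeasurable]
  -- pointwise bound
  have key : ∀ᵐ z ∂(volume.restrict (Metric.ball (0:ℂ) 1)),
      ENNReal.ofReal ‖(z - a)⁻¹ - (z - b)⁻¹‖
        ≤ φ ‖z - a‖ + φ ‖z - b‖ + ψ ‖z - a‖ + ψ ‖z - b‖ := by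
    have hA : ∀ᵐ z : ℂ ∂volume, z ≠ a := by
      rw [ae_iff]
      simp only [ne_eq, not_not, Set.setOf_eq_eq_singleton]
      exact measure_singleton a
    have hB : ∀ᵐ z : ℂ ∂volume, z ≠ b := by
      rw [ae_iff]
      simp only [ne_eq, not_not, Set.setOf_eq_eq_singleton]
      exact measure_singleton b
    filter_upwards [ae_restrict_mem measurableSet_ball, ae_restrict_of_ae hA,
      ae_restrict_of_ae hB] with z hz hza hzb
    have hx0 : 0 < ‖z - a‖ := norm_pos_iff.mpr (sub_ne_zero.mpr hza)
    have hy0 : 0 < ‖z - b‖ := norm_pos_iff.mpr (sub_ne_zero.mpr hzb)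
    have hg : ‖(z - a)⁻¹ - (z - b)⁻¹‖ = δ / (‖z - a‖ * ‖z - b‖) := by
      have h1 : (z - a)⁻¹ - (z - b)⁻¹ = (a - b) / ((z - a) * (z - b)) := by
        rw [inv_sub_inv (sub_ne_zero.mpr hza) (sub_ne_zero.mpr hzb),
          show z - b - (z - a) = a - b by ring]
      rw [h1, norm_div, norm_mul]
    have hsum : δ ≤ ‖z - a‖ + ‖z - b‖ := by
      have h := norm_add_le (a - z) (z - b)
      rw [show a - z + (z - b) = a - b by ring, norm_sub_rev a z] at h
      exact h
    have hz1 : ‖z‖ < 1 := mem_ball_zero_iff.mp hz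
    have hz2a : ‖z - a‖ ≤ 2 := by
      have := norm_sub_le z a
      linarith
    have hz2b : ‖z - b‖ ≤ 2 := by
      have := norm_sub_le z b
      linarith
    rw [hg]
    by_cases hxR : ‖z - a‖ ≤ δ / 2
    · have hyR : δ / 2 ≤ ‖z - b‖ := by linarith
      have hreal : δ / (‖z - a‖ * ‖z - b‖) ≤ 2 / ‖z - a‖ := by
        rw [div_le_div_iff₀ (by positivity) hx0]
        nlinarith [mul_le_mul_of_nonneg_left hyR hx0.le]
      have hφx : φ ‖z - a‖ = ENNReal.ofReal (2 / ‖z - a‖) := by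
        have hm : ‖z - a‖ ∈ Set.Ioc (0:ℝ) (δ/2) := ⟨hx0, hxR⟩
        simp only [hφdef]
        exact Set.indicator_of_mem hm _
      calc ENNReal.ofReal (δ / (‖z - a‖ * ‖z - b‖))
          ≤ ENNReal.ofReal (2 / ‖z - a‖) := ENNReal.ofReal_le_ofReal hreal
        _ = φ ‖z - a‖ := hφx.symm
        _ ≤ φ ‖z - a‖ + φ ‖z - b‖ + ψ ‖z - a‖ + ψ ‖z - b‖ :=
            le_add_right (le_add_right (le_add_right le_rfl))
    · by_cases hyR : ‖z - b‖ ≤ δ / 2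
      · have hxR' : δ / 2 ≤ ‖z - a‖ := by linarith
        have hreal : δ / (‖z - a‖ * ‖z - b‖) ≤ 2 / ‖z - b‖ := by
          rw [div_le_div_iff₀ (by positivity) hy0]
          nlinarith [mul_le_mul_of_nonneg_left hxR' hy0.le]
        have hφy : φ ‖z - b‖ = ENNReal.ofReal (2 / ‖z - b‖) := by
          have hm : ‖z - b‖ ∈ Set.Ioc (0:ℝ) (δ/2) := ⟨hy0, hyR⟩
          simp only [hφdef]
          exact Set.indicator_of_mem hm _
        calc ENNReal.ofReal (δ / (‖z - a‖ * ‖z - b‖))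
            ≤ ENNReal.ofReal (2 / ‖z - b‖) := ENNReal.ofReal_le_ofReal hreal
          _ = φ ‖z - b‖ := hφy.symm
          _ ≤ φ ‖z - a‖ + φ ‖z - b‖ + ψ ‖z - a‖ + ψ ‖z - b‖ :=
              le_add_right (le_add_right (le_add_left le_rfl))
      · push_neg at hxR hyR
        have hreal : δ / (‖z - a‖ * ‖z - b‖)
            ≤ δ / 2 / ‖z - a‖ ^ 2 + δ / 2 / ‖z - b‖ ^ 2 := by
          rw [div_add_div _ _ (by positivity : (‖z - a‖:ℝ) ^ 2 ≠ 0)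
            (by positivity : (‖z - b‖:ℝ) ^ 2 ≠ 0),
            div_le_div_iff₀ (by positivity) (by positivity)]
          nlinarith [mul_nonneg (mul_nonneg hδ0.le (mul_pos hx0 hy0).le)
            (sq_nonneg (‖z - a‖ - ‖z - b‖))]
        have hψx : ψ ‖z - a‖ = ENNReal.ofReal (δ / 2 / ‖z - a‖ ^ 2) := by
          have hm : ‖z - a‖ ∈ Set.Ioc (δ/2) 2 := ⟨hxR, hz2a⟩
          simp only [hψdef]
          exact Set.indicator_of_mem hm _
        have hψy : ψ ‖z - b‖ = ENNReal.ofReal (δ / 2 / ‖z - b‖ ^ 2) := by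
          have hm : ‖z - b‖ ∈ Set.Ioc (δ/2) 2 := ⟨hyR, hz2b⟩
          simp only [hψdef]
          exact Set.indicator_of_mem hm _
        calc ENNReal.ofReal (δ / (‖z - a‖ * ‖z - b‖))
            ≤ ENNReal.ofReal (δ / 2 / ‖z - a‖ ^ 2 + δ / 2 / ‖z - b‖ ^ 2) :=
              ENNReal.ofReal_le_ofReal hreal
          _ ≤ ENNReal.ofReal (δ / 2 / ‖z - a‖ ^ 2) + ENNReal.ofReal (δ / 2 / ‖z - b‖ ^ 2) :=
              ENNReal.ofReal_add_le
          _ = ψ ‖z - a‖ + ψ ‖z - b‖ := by rw [hψx, hψy]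
          _ ≤ φ ‖z - a‖ + φ ‖z - b‖ + ψ ‖z - a‖ + ψ ‖z - b‖ :=
              add_le_add (le_add_self) le_rfl
  -- measurabilities of composed functions
  have hφa : Measurable fun z : ℂ => φ ‖z - a‖ := hφm.comp (measurable_id.sub_const a).norm
  have hφb : Measurable fun z : ℂ => φ ‖z - b‖ := hφm.comp (measurable_id.sub_const b).norm
  have hψa : Measurable fun z : ℂ => ψ ‖z - a‖ := hψm.comp (measurable_id.sub_const a).norm
  have hlogRnn : 0 ≤ Real.log (4 / δ) := Real.log_nonneg (by rw [le_div_iff₀ hδ0]; linarith)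
  have hV : volume (Metric.ball (0:ℂ) 1) ≤ ENNReal.ofReal 4 := by
    rw [Complex.volume_ball]
    simp only [ENNReal.ofReal_one, one_pow, one_mul]
    have hpi : (NNReal.pi : ℝ≥0) ≤ (4:ℝ≥0) := by
      rw [← NNReal.coe_le_coe, NNReal.coe_real_pi]
      norm_num
      exact Real.pi_le_four
    calc (NNReal.pi : ℝ≥0∞) ≤ ((4:ℝ≥0) : ℝ≥0∞) := ENNReal.coe_le_coe.mpr hpi
      _ = ENNReal.ofReal 4 := by simp [ENNReal.ofReal_ofNat]
  have hterm : ∀ t : ℝ, 0 ≤ t →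
      2 * volume (Metric.ball (0:ℂ) 1) * ENNReal.ofReal t ≤ ENNReal.ofReal (8 * t) := by
    intro t ht
    calc 2 * volume (Metric.ball (0:ℂ) 1) * ENNReal.ofReal t
        ≤ 2 * ENNReal.ofReal 4 * ENNReal.ofReal t := by gcongr
      _ = ENNReal.ofReal (8 * t) := by
          rw [← ENNReal.ofReal_ofNat 2, ← ENNReal.ofReal_mul (by norm_num),
            ← ENNReal.ofReal_mul (by norm_num)]
          norm_num
  have e1 : ∫⁻ z : ℂ, φ ‖z - a‖
      = 2 * volume (Metric.ball (0:ℂ) 1) * ENNReal.ofReal (2 * (δ / 2)) := by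
    rw [lint_translate φ a, radial_lintegral φ hφm]
    congr 1
    simp only [hφdef]
    exact phi_lintegral (δ/2) hR0
  have e2 : ∫⁻ z : ℂ, φ ‖z - b‖
      = 2 * volume (Metric.ball (0:ℂ) 1) * ENNReal.ofReal (2 * (δ / 2)) := by
    rw [lint_translate φ b, radial_lintegral φ hφm]
    congr 1
    simp only [hφdef]
    exact phi_lintegral (δ/2) hR0
  have e3 : ∫⁻ z : ℂ, ψ ‖z - a‖
      = 2 * volume (Metric.ball (0:ℂ) 1) * ENNReal.ofReal (δ/2 * Real.log (2 / (δ/2))) := by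
    rw [lint_translate ψ a, radial_lintegral ψ hψm]
    congr 1
    simp only [hψdef]
    exact psi_lintegral (δ/2) (δ/2) hR0.le hR0 hR2
  have e4 : ∫⁻ z : ℂ, ψ ‖z - b‖
      = 2 * volume (Metric.ball (0:ℂ) 1) * ENNReal.ofReal (δ/2 * Real.log (2 / (δ/2))) := by
    rw [lint_translate ψ b, radial_lintegral ψ hψm]
    congr 1
    simp only [hψdef]
    exact psi_lintegral (δ/2) (δ/2) hR0.le hR0 hR2
  have hlogeq : Real.log (2 / (δ/2)) = Real.log (4 / δ) := by
    congr 1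
    field_simp
    ring
  have hbound : (∫⁻ z in Metric.ball (0:ℂ) 1, ENNReal.ofReal ‖(z - a)⁻¹ - (z - b)⁻¹‖)
      ≤ ENNReal.ofReal (16 * δ + 8 * δ * Real.log (4 / δ)) := by
    calc (∫⁻ z in Metric.ball (0:ℂ) 1, ENNReal.ofReal ‖(z - a)⁻¹ - (z - b)⁻¹‖)
        ≤ ∫⁻ z in Metric.ball (0:ℂ) 1,
            (φ ‖z - a‖ + φ ‖z - b‖ + ψ ‖z - a‖ + ψ ‖z - b‖) := lintegral_mono_ae key
      _ ≤ ∫⁻ z : ℂ, (φ ‖z - a‖ + φ ‖z - b‖ + ψ ‖z - a‖ + ψ ‖z - b‖) :=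
          setLIntegral_le_lintegral _ _
      _ = (∫⁻ z : ℂ, φ ‖z - a‖) + (∫⁻ z : ℂ, φ ‖z - b‖)
            + (∫⁻ z : ℂ, ψ ‖z - a‖) + (∫⁻ z : ℂ, ψ ‖z - b‖) := by
          rw [lintegral_add_left (show Measurable fun z : ℂ => φ ‖z - a‖ + φ ‖z - b‖ + ψ ‖z - a‖
              from (hφa.add hφb).add hψa),
            lintegral_add_left (show Measurable fun z : ℂ => φ ‖z - a‖ + φ ‖z - b‖
              from hφa.add hφb), lintegral_add_left hφa]
      _ ≤ ENNReal.ofReal (8 * (2 * (δ/2))) + ENNReal.ofReal (8 * (2 * (δ/2)))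
            + ENNReal.ofReal (8 * (δ/2 * Real.log (4/δ)))
            + ENNReal.ofReal (8 * (δ/2 * Real.log (4/δ))) := by
          rw [e1, e2, e3, e4, hlogeq]
          have h1 := hterm (2 * (δ/2)) (by positivity)
          have h2 := hterm (δ/2 * Real.log (4/δ)) (by positivity)
          exact add_le_add (add_le_add (add_le_add h1 h1) h2) h2
      _ = ENNReal.ofReal (16 * δ + 8 * δ * Real.log (4 / δ)) := by
          rw [← ENNReal.ofReal_add (by positivity) (by positivity),
            ← ENNReal.ofReal_add (by positivity) (by positivity),
            ← ENNReal.ofReal_add (by positivity) (by positivity)]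
          congr 1
          ring
  have hnn : 0 ≤ 16 * δ + 8 * δ * Real.log (4 / δ) := by positivity
  have hL1 : 0 ≤ Real.log (1 / δ) := Real.log_nonneg (by rw [le_div_iff₀ hδ0]; linarith)
  have hfinal : 16 * δ + 8 * δ * Real.log (4 / δ) ≤ 50 * (δ + δ * Real.log (1 / δ)) := by
    have hlog4 : Real.log 4 ≤ 3 := by
      nlinarith [Real.log_le_sub_one_of_pos (show (0:ℝ) < 4 by norm_num)]
    have hsplit : Real.log (4 / δ) = Real.log 4 + Real.log (1 / δ) := by
      rw [Real.log_div (by norm_num) hδ0.ne', Real.log_div one_ne_zero hδ0.ne', Real.log_one]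
      ring
    nlinarith [mul_nonneg hδ0.le hL1, mul_le_mul_of_nonneg_left hlog4 hδ0.le]
  calc (∫⁻ z in Metric.ball (0:ℂ) 1, ENNReal.ofReal ‖(z - a)⁻¹ - (z - b)⁻¹‖).toReal
      ≤ (ENNReal.ofReal (16 * δ + 8 * δ * Real.log (4 / δ))).toReal :=
        ENNReal.toReal_mono ENNReal.ofReal_ne_top hbound
    _ = 16 * δ + 8 * δ * Real.log (4 / δ) := ENNReal.toReal_ofReal hnn
    _ ≤ 50 * (δ + δ * Real.log (1 / δ)) := hfinal
end

section
/- Let d ≥ 2, let y ∈ S^{d-1}, let 0 < r < 1/2, and let Q be the open ball of radius r tangent from inside to S^{d-1} at y, i.e. Q = {x ∈ ℝ^d : |x - (1-r)y| < r}. Then for every x ∈ Q with x ≠ y one has ⟨(y - x)/|y - x|^d, x⟩ + 1/(2·|y - x|^{d-2}) ≥ ((1 - r)/(2r)) · 1/|y - x|^{d-2}. -/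
open scoped RealInnerProductSpace

/-- For `y` on the unit sphere of `ℝ^d` (`d ≥ 2`), `0 < r < 1/2`, and `x ≠ y` in the open
ball of radius `r` tangent from inside to the sphere at `y` (i.e. centered at `(1-r)y`),
`⟨(y - x)/|y - x|^d, x⟩ + 1/(2|y - x|^{d-2}) ≥ ((1-r)/(2r)) · 1/|y - x|^{d-2}`. -/
theorem inner_field_lower_bound_tangent_ball (d : ℕ) (hd : 2 ≤ d)
    (y : EuclideanSpace ℝ (Fin d))
    (hy : y ∈ Metric.sphere (0 : EuclideanSpace ℝ (Fin d)) 1)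
    (r : ℝ) (hr0 : 0 < r) (hr1 : r < 1 / 2)
    (x : EuclideanSpace ℝ (Fin d))
    (hx : x ∈ Metric.ball ((1 - r) • y) r)
    (hxy : x ≠ y) :
    ((1 - r) / (2 * r)) * (1 / ‖y - x‖ ^ (d - 2)) ≤
      ⟪(‖y - x‖ ^ d)⁻¹ • (y - x), x⟫ + 1 / (2 * ‖y - x‖ ^ (d - 2)) := by
  obtain ⟨n, rfl⟩ : ∃ n, d = n + 2 := ⟨d - 2, by omega⟩
  have hny : ‖y‖ = 1 := by simpa using hy
  have ht : (0 : ℝ) < ‖y - x‖ := by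
    rw [norm_pos_iff, sub_ne_zero]; exact (Ne.symm hxy)
  set t : ℝ := ‖y - x‖ with htdef
  have hball : ‖x - (1 - r) • y‖ < r := by
    rw [Metric.mem_ball, dist_eq_norm] at hx; exact hx
  have hball2 : ‖x - (1 - r) • y‖ ^ 2 < r ^ 2 := by
    have := norm_nonneg (x - (1 - r) • y)
    nlinarith
  have hexp1 : ‖x - (1 - r) • y‖ ^ 2
      = ‖x‖ ^ 2 - 2 * ((1 - r) * ⟪x, y⟫) + (1 - r) ^ 2 * ‖y‖ ^ 2 := by
    rw [norm_sub_sq_real, real_inner_smul_right, norm_smul]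
    ring_nf
    rw [Real.norm_eq_abs, sq_abs]
    ring
  have hexp2 : t ^ 2 = ‖y‖ ^ 2 - 2 * ⟪y, x⟫ + ‖x‖ ^ 2 := norm_sub_sq_real y x
  have hIx : ⟪y - x, x⟫ = ⟪y, x⟫ - ‖x‖ ^ 2 := by
    rw [inner_sub_left, real_inner_self_eq_norm_sq]
  have hsym : ⟪x, y⟫ = ⟪y, x⟫ := real_inner_comm y x
  -- key inequality: (1-r) t² ≤ r (1 - ‖x‖²)
  have hK : (1 - r) * t ^ 2 ≤ r * (1 - ‖x‖ ^ 2) := by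
    rw [hexp1, hsym, hny] at hball2
    have h5 : (1 - r) * t ^ 2
        = (1 - r) - 2 * ((1 - r) * ⟪y, x⟫) + (1 - r) * ‖x‖ ^ 2 := by
      rw [hexp2, hny]; ring
    nlinarith [hball2, h5]
  have hI2 : 2 * ⟪y - x, x⟫ + t ^ 2 = 1 - ‖x‖ ^ 2 := by
    rw [hIx, hexp2, hny]; ring
  have htn : (0 : ℝ) < t ^ n := pow_pos ht n
  have ht2 : (0 : ℝ) < t ^ 2 := pow_pos ht 2
  have hdpow : t ^ (n + 2) = t ^ n * t ^ 2 := pow_add t n 2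
  rw [real_inner_smul_left]
  have hsimp : (n + 2) - 2 = n := by omega
  rw [hsimp, hdpow]
  have hRHS : (t ^ n * t ^ 2)⁻¹ * ⟪y - x, x⟫ + 1 / (2 * t ^ n)
      = (1 - ‖x‖ ^ 2) / (2 * (t ^ n * t ^ 2)) := by
    rw [← hI2]
    field_simp
  have hL : (1 - r) / (2 * r) * (1 / t ^ n) = (1 - r) / (2 * r * t ^ n) := by
    field_simp
  rw [hRHS, hL, div_le_div_iff₀ (by positivity) (by positivity)]
  nlinarith [mul_le_mul_of_nonneg_left hK htn.le, htn.le]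
end

section
/- Let d ≥ 2, let y_1, y_2 ∈ S^{d-1}, and let 0 < r_1, r_2 < 1/2. Let B_i (i = 1, 2) denote the open ball of radius r_i tangent from inside to S^{d-1} at y_i, i.e. B_i = {x : |x - (1 - r_i)y_i| < r_i}. If x ∈ B_1 and x ∉ B_2, then |x - y_1| / |x - y_2| ≤ ( (r_1/r_2) · ((1 - r_2)/(1 - r_1)) )^{1/2}. -/
lemma tangent_key {d : ℕ} (x y : EuclideanSpace ℝ (Fin d)) (r : ℝ) (hy : ‖y‖ = 1) :
    ‖x - (1 - r) • y‖ ^ 2 - r ^ 2 = (1 - r) * ‖x - y‖ ^ 2 - r * (1 - ‖x‖ ^ 2) := by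
  have h1 : ‖x - (1 - r) • y‖ ^ 2
      = ‖x‖ ^ 2 - 2 * inner ℝ x ((1 - r) • y) + ‖(1 - r) • y‖ ^ 2 :=
    norm_sub_sq_real x ((1 - r) • y)
  have h2 : ‖x - y‖ ^ 2 = ‖x‖ ^ 2 - 2 * inner ℝ x y + ‖y‖ ^ 2 := norm_sub_sq_real x y
  have h3 : (inner ℝ x ((1 - r) • y) : ℝ) = (1 - r) * inner ℝ x y := real_inner_smul_right x y _
  have h4 : ‖(1 - r) • y‖ ^ 2 = (1 - r) ^ 2 := by
    rw [norm_smul, hy]; simp [abs_eq_self, sq_abs]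
  rw [h1, h3, h4, h2, hy]; ring

/-- Geometric lemma: if `B_i` is the open ball of radius `r_i` tangent from inside to the
unit sphere of `ℝ^d` at `y_i` (i.e. centered at `(1-r_i)y_i`), `0 < r_i < 1/2`, and
`x ∈ B_1`, `x ∉ B_2`, then `|x - y_1|/|x - y_2| ≤ ((r_1/r_2)·((1-r_2)/(1-r_1)))^{1/2}`. -/
theorem tangent_balls_distance_ratio (d : ℕ) (hd : 2 ≤ d)
    (y₁ y₂ : EuclideanSpace ℝ (Fin d))
    (hy₁ : y₁ ∈ Metric.sphere (0 : EuclideanSpace ℝ (Fin d)) 1)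
    (hy₂ : y₂ ∈ Metric.sphere (0 : EuclideanSpace ℝ (Fin d)) 1)
    (r₁ r₂ : ℝ) (hr₁0 : 0 < r₁) (hr₁1 : r₁ < 1 / 2)
    (hr₂0 : 0 < r₂) (hr₂1 : r₂ < 1 / 2)
    (x : EuclideanSpace ℝ (Fin d))
    (hx₁ : x ∈ Metric.ball ((1 - r₁) • y₁) r₁)
    (hx₂ : x ∉ Metric.ball ((1 - r₂) • y₂) r₂) :
    ‖x - y₁‖ / ‖x - y₂‖ ≤ Real.sqrt ((r₁ / r₂) * ((1 - r₂) / (1 - r₁))) := by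
  have hy1 : ‖y₁‖ = 1 := by simpa using hy₁
  have hy2 : ‖y₂‖ = 1 := by simpa using hy₂
  have h1 : ‖x - (1 - r₁) • y₁‖ < r₁ := by
    rw [Metric.mem_ball, dist_eq_norm] at hx₁; exact hx₁
  have h2 : r₂ ≤ ‖x - (1 - r₂) • y₂‖ := by
    rw [Metric.mem_ball, dist_eq_norm, not_lt] at hx₂; exact hx₂
  have h1sq : ‖x - (1 - r₁) • y₁‖ ^ 2 < r₁ ^ 2 := by
    apply sq_lt_sq' _ h1
    linarith [norm_nonneg (x - (1 - r₁) • y₁)]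
  have h2sq : r₂ ^ 2 ≤ ‖x - (1 - r₂) • y₂‖ ^ 2 := by
    apply sq_le_sq' _ h2
    linarith [norm_nonneg (x - (1 - r₂) • y₂)]
  have k1 := tangent_key x y₁ r₁ hy1
  have k2 := tangent_key x y₂ r₂ hy2
  set t := 1 - ‖x‖ ^ 2 with ht
  have H1 : (1 - r₁) * ‖x - y₁‖ ^ 2 < r₁ * t := by nlinarith
  have H2 : r₂ * t ≤ (1 - r₂) * ‖x - y₂‖ ^ 2 := by nlinarith
  have ht0 : 0 < t := by nlinarith [sq_nonneg ‖x - y₁‖]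
  have hb : 0 < ‖x - y₂‖ := by
    rcases (norm_nonneg (x - y₂)).lt_or_eq with h | h
    · exact h
    · exfalso; nlinarith
  have ha : 0 ≤ ‖x - y₁‖ := norm_nonneg _
  rw [show Real.sqrt ((r₁ / r₂) * ((1 - r₂) / (1 - r₁)))
      = Real.sqrt ((r₁ / r₂) * ((1 - r₂) / (1 - r₁))) from rfl]
  have hfrac : (‖x - y₁‖ / ‖x - y₂‖) ^ 2 ≤ (r₁ / r₂) * ((1 - r₂) / (1 - r₁)) := by
    rw [div_pow, div_le_iff₀ (by positivity)]
    rw [div_mul_div_comm, div_mul_eq_mul_div, le_div_iff₀ (by nlinarith)]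
    nlinarith [sq_nonneg ‖x - y₂‖, mul_le_mul_of_nonneg_left H2 hr₁0.le,
      mul_lt_mul_of_pos_left H1 hr₂0]
  calc ‖x - y₁‖ / ‖x - y₂‖ = Real.sqrt ((‖x - y₁‖ / ‖x - y₂‖) ^ 2) := by
        rw [Real.sqrt_sq (by positivity)]
    _ ≤ _ := Real.sqrt_le_sqrt hfrac
end

section
/- There exists an absolute constant C > 0 such that for every interval I ⊂ [-π, π) of length l > 0 with midpoint θ_0, setting w = e^{iθ_0}, one has ∫_{D} | 1/(z - w) - (1/l)·∫_{I} 1/(z - e^{iθ}) dθ | dm(z) ≤ C·l. -/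
open MeasureTheory Set Metric Filter
open scoped ENNReal NNReal


lemma lintegral_inv_norm_ball (c : ℂ) {R : ℝ} (hR : 0 < R) :
    ∫⁻ z in ball c R, ENNReal.ofReal ‖z - c‖⁻¹ ≤ ENNReal.ofReal (2 * Real.pi * R) := by
  rw [lintegral_eq_lintegral_meas_le _ (Eventually.of_forall fun z => by positivity)
    (by fun_prop)]
  have key : ∀ t ∈ Ioi (0:ℝ), (volume.restrict (ball c R)) {z : ℂ | t ≤ ‖z - c‖⁻¹}
      ≤ volume (closedBall c (min R t⁻¹)) := by
    intro t ht
    rw [Measure.restrict_apply (measurableSet_le measurable_const (by fun_prop))]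
    refine measure_mono ?_
    rintro z ⟨hz1, hz2⟩
    simp only [mem_setOf_eq] at hz1
    simp only [mem_ball] at hz2
    have hzc : z ≠ c := by
      rintro rfl
      simp at hz1; linarith [ht.out]
    have h1 : 0 < ‖z - c‖ := by simpa [sub_eq_zero] using hzc
    have h2 : ‖z - c‖ ≤ t⁻¹ := by
      rw [← inv_inv ‖z - c‖]
      exact inv_anti₀ ht.out hz1
    rw [mem_closedBall, dist_eq_norm]
    exact le_min (by simpa [dist_eq_norm] using hz2.le) h2
  calc ∫⁻ t in Ioi (0:ℝ), (volume.restrict (ball c R)) {z : ℂ | t ≤ ‖z - c‖⁻¹}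
      ≤ ∫⁻ t in Ioi (0:ℝ), volume (closedBall c (min R t⁻¹)) := by
        refine lintegral_mono_ae ?_
        filter_upwards [ae_restrict_mem measurableSet_Ioi] using key
    _ ≤ ENNReal.ofReal (Real.pi * R) + ENNReal.ofReal (Real.pi * R) := by
        rw [← Ioc_union_Ioi_eq_Ioi (le_of_lt (inv_pos.2 hR))]
        refine le_trans (lintegral_union_le _ _ _) (add_le_add ?_ ?_)
        · calc ∫⁻ t in Ioc (0:ℝ) R⁻¹, volume (closedBall c (min R t⁻¹))
              ≤ ∫⁻ _t in Ioc (0:ℝ) R⁻¹, ENNReal.ofReal (Real.pi * R^2) := by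
                refine lintegral_mono fun t => ?_
                rw [Complex.volume_closedBall]
                calc ENNReal.ofReal (min R t⁻¹) ^ 2 * NNReal.pi
                    ≤ ENNReal.ofReal R ^ 2 * NNReal.pi := by
                      gcongr; exact min_le_left _ _
                  _ = ENNReal.ofReal (Real.pi * R^2) := by
                      rw [← ENNReal.ofReal_pow hR.le, ← ENNReal.ofReal_coe_nnreal]
                      rw [← ENNReal.ofReal_mul (by positivity)]
                      rw [mul_comm]
                      norm_num
            _ ≤ ENNReal.ofReal (Real.pi * R) := by
                rw [setLIntegral_const, Real.volume_Ioc]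
                rw [← ENNReal.ofReal_mul (by positivity)]
                refine ENNReal.ofReal_le_ofReal ?_
                have : R⁻¹ - 0 = R⁻¹ := by ring
                rw [this]
                rw [mul_comm Real.pi (R^2), mul_assoc]
                calc R^2 * (Real.pi * R⁻¹) = Real.pi * R * (R * R⁻¹) := by ring
                  _ ≤ Real.pi * R := by
                      rw [mul_inv_cancel₀ hR.ne', mul_one]
        · have hpt : ∀ t ∈ Ioi R⁻¹, volume (closedBall c (min R t⁻¹))
              ≤ ENNReal.ofReal (Real.pi * t ^ (-2:ℝ)) := by
            intro t ht
            have ht0 : 0 < t := lt_trans (inv_pos.2 hR) ht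
            rw [Complex.volume_closedBall]
            calc ENNReal.ofReal (min R t⁻¹) ^ 2 * NNReal.pi
                ≤ ENNReal.ofReal t⁻¹ ^ 2 * NNReal.pi := by
                  gcongr; exact min_le_right _ _
              _ = ENNReal.ofReal (Real.pi * t ^ (-2:ℝ)) := by
                  rw [← ENNReal.ofReal_pow (by positivity), ← ENNReal.ofReal_coe_nnreal,
                    ← ENNReal.ofReal_mul (by positivity)]
                  congr 1
                  rw [Real.rpow_neg ht0.le, mul_comm]
                  norm_num
          calc ∫⁻ t in Ioi R⁻¹, volume (closedBall c (min R t⁻¹))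
              ≤ ∫⁻ t in Ioi R⁻¹, ENNReal.ofReal (Real.pi * t ^ (-2:ℝ)) := by
                refine lintegral_mono_ae ?_
                filter_upwards [ae_restrict_mem measurableSet_Ioi] using hpt
            _ = ENNReal.ofReal (∫ t in Ioi R⁻¹, Real.pi * t ^ (-2:ℝ)) := by
                rw [← ofReal_integral_eq_lintegral_ofReal]
                · exact (integrableOn_Ioi_rpow_of_lt (by norm_num) (inv_pos.2 hR)).const_mul _
                · filter_upwards [ae_restrict_mem measurableSet_Ioi] with t ht
                  have : (0:ℝ) < t := lt_trans (inv_pos.2 hR) ht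
                  positivity
            _ = ENNReal.ofReal (Real.pi * R) := by
                congr 1
                rw [MeasureTheory.integral_const_mul, integral_Ioi_rpow_of_lt (by norm_num)
                  (inv_pos.2 hR)]
                rw [show (-2:ℝ) + 1 = -1 by norm_num, Real.rpow_neg_one, inv_inv]
                ring
    _ = ENNReal.ofReal (2 * Real.pi * R) := by
        rw [← ENNReal.ofReal_add (by positivity) (by positivity)]; ring_nf

lemma lintegral_inv_norm_cube_compl (c : ℂ) {r : ℝ} (hr : 0 < r) :
    ∫⁻ z in {z : ℂ | r ≤ dist z c}, ENNReal.ofReal (‖z - c‖⁻¹ ^ 3)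
      ≤ ENNReal.ofReal (3 * Real.pi * r⁻¹) := by
  have hS : MeasurableSet {z : ℂ | r ≤ dist z c} :=
    measurableSet_le measurable_const (by fun_prop)
  have key := lintegral_comp_eq_lintegral_meas_le_mul (volume.restrict {z : ℂ | r ≤ dist z c})
    (f := fun z => ‖z - c‖⁻¹) (g := fun t => 3 * t ^ 2)
    (Eventually.of_forall fun z => by positivity) (by fun_prop)
    (fun t _ => ((continuous_const.mul (continuous_pow 2)).intervalIntegrable 0 t))
    (Eventually.of_forall fun t => by positivity)
  have hcomp : ∀ x : ℝ, (∫ t in (0:ℝ)..x, 3 * t ^ 2) = x ^ 3 := by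
    intro x
    rw [intervalIntegral.integral_const_mul, integral_pow]
    norm_num
    ring
  simp_rw [hcomp] at key
  rw [key]
  have hempty : ∀ t ∈ Ioi r⁻¹,
      (volume.restrict {z : ℂ | r ≤ dist z c}) {z : ℂ | t ≤ ‖z - c‖⁻¹}
        * ENNReal.ofReal (3 * t ^ 2) = 0 := by
    intro t ht
    have h0 : (volume.restrict {z : ℂ | r ≤ dist z c}) {z : ℂ | t ≤ ‖z - c‖⁻¹} = 0 := by
      rw [Measure.restrict_apply (measurableSet_le measurable_const (by fun_prop))]
      convert measure_empty (μ := (volume : Measure ℂ))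
      rw [eq_empty_iff_forall_notMem]
      rintro z ⟨hz1, hz2⟩
      simp only [mem_setOf_eq] at hz1 hz2
      rw [dist_eq_norm] at hz2
      have h1 : 0 < ‖z - c‖ := lt_of_lt_of_le hr hz2
      have : ‖z - c‖⁻¹ ≤ r⁻¹ := inv_anti₀ hr hz2
      have : t ≤ r⁻¹ := le_trans hz1 this
      exact absurd this (not_le.2 ht.out)
    rw [h0, zero_mul]
  have hbound : ∀ t ∈ Ioc 0 r⁻¹,
      (volume.restrict {z : ℂ | r ≤ dist z c}) {z : ℂ | t ≤ ‖z - c‖⁻¹}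
        * ENNReal.ofReal (3 * t ^ 2) ≤ ENNReal.ofReal (3 * Real.pi) := by
    intro t ht
    have ht0 : (0:ℝ) < t := ht.1
    have hsub : (volume.restrict {z : ℂ | r ≤ dist z c}) {z : ℂ | t ≤ ‖z - c‖⁻¹}
        ≤ volume (closedBall c t⁻¹) := by
      rw [Measure.restrict_apply (measurableSet_le measurable_const (by fun_prop))]
      refine measure_mono ?_
      rintro z ⟨hz1, _⟩
      simp only [mem_setOf_eq] at hz1
      have hzc : z ≠ c := by
        rintro rfl; simp at hz1; linarith
      have h1 : 0 < ‖z - c‖ := by simpa [sub_eq_zero] using hzc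
      rw [mem_closedBall, dist_eq_norm, ← inv_inv ‖z - c‖]
      exact inv_anti₀ ht0 hz1
    calc (volume.restrict {z : ℂ | r ≤ dist z c}) {z : ℂ | t ≤ ‖z - c‖⁻¹}
          * ENNReal.ofReal (3 * t ^ 2)
        ≤ volume (closedBall c t⁻¹) * ENNReal.ofReal (3 * t ^ 2) := by gcongr
      _ = ENNReal.ofReal (Real.pi * t⁻¹ ^ 2 * (3 * t ^ 2)) := by
          rw [Complex.volume_closedBall, ← ENNReal.ofReal_pow (by positivity),
            ← ENNReal.ofReal_coe_nnreal, ← ENNReal.ofReal_mul (by positivity),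
            ← ENNReal.ofReal_mul (by positivity)]
          ring_nf
          rw [NNReal.coe_real_pi]
      _ = ENNReal.ofReal (3 * Real.pi) := by
          congr 1
          field_simp
  calc ∫⁻ t in Ioi (0:ℝ), (volume.restrict {z : ℂ | r ≤ dist z c}) {z : ℂ | t ≤ ‖z - c‖⁻¹}
        * ENNReal.ofReal (3 * t ^ 2)
      ≤ (∫⁻ t in Ioc (0:ℝ) r⁻¹, (volume.restrict {z : ℂ | r ≤ dist z c})
          {z : ℂ | t ≤ ‖z - c‖⁻¹} * ENNReal.ofReal (3 * t ^ 2))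
        + ∫⁻ t in Ioi r⁻¹, (volume.restrict {z : ℂ | r ≤ dist z c})
          {z : ℂ | t ≤ ‖z - c‖⁻¹} * ENNReal.ofReal (3 * t ^ 2) := by
        rw [← Ioc_union_Ioi_eq_Ioi (le_of_lt (inv_pos.2 hr))]
        exact lintegral_union_le _ _ _
    _ ≤ ENNReal.ofReal (3 * Real.pi) * ENNReal.ofReal r⁻¹ + 0 := by
        refine add_le_add ?_ ?_
        · calc _ ≤ ∫⁻ _t in Ioc (0:ℝ) r⁻¹, ENNReal.ofReal (3 * Real.pi) := by
                refine lintegral_mono_ae ?_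
                filter_upwards [ae_restrict_mem measurableSet_Ioc] using hbound
            _ = ENNReal.ofReal (3 * Real.pi) * ENNReal.ofReal r⁻¹ := by
                rw [setLIntegral_const, Real.volume_Ioc, sub_zero]
        · refine le_of_eq ?_
          rw [← lintegral_zero (μ := volume.restrict (Ioi r⁻¹))]
          refine lintegral_congr_ae ?_
          filter_upwards [ae_restrict_mem measurableSet_Ioi] using hempty
    _ ≤ ENNReal.ofReal (3 * Real.pi * r⁻¹) := by
        rw [add_zero, ← ENNReal.ofReal_mul (by positivity)]

lemma abs_exp_mul_I_sub_one_le (x : ℝ) :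
    ‖Complex.exp ((x:ℂ) * Complex.I) - 1‖ ≤ |x| := by
  have hid : Complex.exp ((x:ℂ) * Complex.I) - 1
      = Complex.ofReal (Real.cos x - 1) + Complex.ofReal (Real.sin x) * Complex.I := by
    rw [Complex.exp_mul_I]
    push_cast
    ring
  have hsq : ‖Complex.exp ((x:ℂ) * Complex.I) - 1‖ ^ 2 = 2 - 2 * Real.cos x := by
    rw [hid, Complex.sq_norm, Complex.normSq_add_mul_I]
    nlinarith [Real.sin_sq_add_cos_sq x]
  have hb : ‖Complex.exp ((x:ℂ) * Complex.I) - 1‖ ^ 2 ≤ |x| ^ 2 := by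
    rw [hsq, sq_abs]
    nlinarith [Real.one_sub_sq_div_two_le_cos (x := x)]
  exact pow_le_pow_iff_left₀ (norm_nonneg _) (abs_nonneg x) two_ne_zero |>.1 hb

lemma abs_exp_pair_le (x : ℝ) :
    ‖Complex.exp ((x:ℂ) * Complex.I) + Complex.exp ((-x:ℝ) * Complex.I) - 2‖
      ≤ x ^ 2 := by
  have hid : Complex.exp ((x:ℂ) * Complex.I) + Complex.exp (((-x:ℝ):ℂ) * Complex.I) - 2
      = Complex.ofReal (2 * Real.cos x - 2) := by
    rw [Complex.exp_mul_I, Complex.exp_mul_I]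
    push_cast
    rw [Complex.cos_neg, Complex.sin_neg]
    ring
  rw [hid, Complex.norm_real, Real.norm_eq_abs, abs_le]
  constructor
  · nlinarith [Real.one_sub_sq_div_two_le_cos (x := x)]
  · nlinarith [Real.cos_le_one x]

set_option maxHeartbeats 1000000 in
lemma theta_est {a b : ℝ} (hab : a < b) {θ : ℝ} (hθ : θ ∈ Set.Ioc a b) :
    ∫⁻ z in ball (0:ℂ) 1,
      ENNReal.ofReal ‖2 * (z - Complex.exp ((((a+b)/2 : ℝ):ℂ) * Complex.I))⁻¹
        - (z - Complex.exp ((θ:ℂ) * Complex.I))⁻¹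
        - (z - Complex.exp (((a+b-θ : ℝ):ℂ) * Complex.I))⁻¹‖
      ≤ ENNReal.ofReal (27 * Real.pi * (b - a)) := by
  set l : ℝ := b - a with hl_def
  have hl : 0 < l := sub_pos.2 hab
  set θ₀ : ℝ := (a+b)/2 with hθ₀_def
  set s : ℝ := θ - θ₀ with hs_def
  obtain ⟨hθ1, hθ2⟩ := hθ
  have hs : |s| ≤ l / 2 := by
    rw [abs_le]
    constructor <;> simp only [hs_def, hθ₀_def, hl_def] <;> linarith
  -- basic points
  set w : ℂ := Complex.exp ((θ₀:ℂ) * Complex.I) with hw_def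
  set ζ : ℂ := Complex.exp ((θ:ℂ) * Complex.I) with hζ_def
  set ζ' : ℂ := Complex.exp (((a+b-θ : ℝ):ℂ) * Complex.I) with hζ'_def
  set u : ℂ := ζ - w with hu_def
  set v : ℂ := ζ' - w with hv_def
  have habs_w : ‖w‖ = 1 := Complex.norm_exp_ofReal_mul_I θ₀
  have hζw : ζ = w * Complex.exp ((s:ℂ) * Complex.I) := by
    rw [hζ_def, hw_def, ← Complex.exp_add]
    congr 1
    push_cast [hs_def]
    ring
  have hζ'w : ζ' = w * Complex.exp (((-s:ℝ):ℂ) * Complex.I) := by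
    rw [hζ'_def, hw_def, ← Complex.exp_add]
    congr 1
    push_cast [hs_def, hθ₀_def]
    ring
  have hu_abs : ‖u‖ ≤ l / 2 := by
    have : u = w * (Complex.exp ((s:ℂ) * Complex.I) - 1) := by
      rw [hu_def, hζw]; ring
    rw [this, norm_mul, habs_w, one_mul]
    exact le_trans (abs_exp_mul_I_sub_one_le s) hs
  have hv_abs : ‖v‖ ≤ l / 2 := by
    have : v = w * (Complex.exp (((-s:ℝ):ℂ) * Complex.I) - 1) := by
      rw [hv_def, hζ'w]; ring
    rw [this, norm_mul, habs_w, one_mul]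
    calc ‖Complex.exp (((-s:ℝ):ℂ) * Complex.I) - 1‖ ≤ |(-s:ℝ)| :=
          abs_exp_mul_I_sub_one_le (-s)
      _ ≤ l / 2 := by rwa [abs_neg]
  have huv_abs : ‖u + v‖ ≤ s ^ 2 := by
    have : u + v = w * (Complex.exp ((s:ℂ) * Complex.I)
        + Complex.exp (((-s:ℝ):ℂ) * Complex.I) - 2) := by
      rw [hu_def, hv_def, hζw, hζ'w]; ring
    rw [this, norm_mul, habs_w, one_mul]
    exact abs_exp_pair_le s
  have hs2 : s ^ 2 ≤ (l/2) ^ 2 := by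
    nlinarith [hs, abs_nonneg s, sq_abs s]
  clear_value l θ₀ s w ζ ζ' u v
  set g : ℂ → ℝ≥0∞ := fun z =>
    ENNReal.ofReal ‖2 * (z - w)⁻¹ - (z - ζ)⁻¹ - (z - ζ')⁻¹‖ with hg_def
  have hnear : ∫⁻ z in ball (0:ℂ) 1 ∩ ball w (2*l), g z
      ≤ ENNReal.ofReal (24 * Real.pi * l) := by
    have hpt : ∀ z : ℂ, g z ≤ 2 * ENNReal.ofReal ‖z - w‖⁻¹ + ENNReal.ofReal ‖z - ζ‖⁻¹
        + ENNReal.ofReal ‖z - ζ'‖⁻¹ := by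
      intro z
      have h1 : ‖2 * (z - w)⁻¹ - (z - ζ)⁻¹ - (z - ζ')⁻¹‖
          ≤ 2 * ‖z - w‖⁻¹ + ‖z - ζ‖⁻¹ + ‖z - ζ'‖⁻¹ := by
        calc ‖2 * (z - w)⁻¹ - (z - ζ)⁻¹ - (z - ζ')⁻¹‖
            ≤ ‖2 * (z - w)⁻¹ - (z - ζ)⁻¹‖ + ‖(z - ζ')⁻¹‖ := norm_sub_le _ _
          _ ≤ ‖2 * (z - w)⁻¹‖ + ‖(z - ζ)⁻¹‖ + ‖(z - ζ')⁻¹‖ := by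
              gcongr
              exact norm_sub_le _ _
          _ = 2 * ‖z - w‖⁻¹ + ‖z - ζ‖⁻¹ + ‖z - ζ'‖⁻¹ := by
              rw [norm_mul, norm_inv, norm_inv, norm_inv]
              norm_num
      calc g z ≤ ENNReal.ofReal (2 * ‖z - w‖⁻¹ + ‖z - ζ‖⁻¹ + ‖z - ζ'‖⁻¹) :=
            ENNReal.ofReal_le_ofReal h1
        _ ≤ ENNReal.ofReal (2 * ‖z - w‖⁻¹ + ‖z - ζ‖⁻¹) + ENNReal.ofReal ‖z - ζ'‖⁻¹ :=
            ENNReal.ofReal_add_le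
        _ ≤ ENNReal.ofReal (2 * ‖z - w‖⁻¹) + ENNReal.ofReal ‖z - ζ‖⁻¹
            + ENNReal.ofReal ‖z - ζ'‖⁻¹ := by
            gcongr
            exact ENNReal.ofReal_add_le
        _ = 2 * ENNReal.ofReal ‖z - w‖⁻¹ + ENNReal.ofReal ‖z - ζ‖⁻¹
            + ENNReal.ofReal ‖z - ζ'‖⁻¹ := by
            rw [ENNReal.ofReal_mul (by norm_num)]
            norm_num
    have hsub : ∀ c : ℂ, ‖c - w‖ ≤ l/2 →
        ∫⁻ z in ball (0:ℂ) 1 ∩ ball w (2*l), ENNReal.ofReal ‖z - c‖⁻¹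
          ≤ ENNReal.ofReal (6 * Real.pi * l) := by
      intro c hc
      calc ∫⁻ z in ball (0:ℂ) 1 ∩ ball w (2*l), ENNReal.ofReal ‖z - c‖⁻¹
          ≤ ∫⁻ z in ball c (3*l), ENNReal.ofReal ‖z - c‖⁻¹ := by
            refine lintegral_mono_set fun z hz => ?_
            have h1 : dist z w < 2*l := hz.2
            have h2 : dist w c ≤ l/2 := by
              rw [dist_comm, dist_eq_norm]
              exact hc
            rw [mem_ball]
            calc dist z c ≤ dist z w + dist w c := dist_triangle _ _ _
              _ < 3*l := by linarith
        _ ≤ ENNReal.ofReal (2 * Real.pi * (3*l)) := lintegral_inv_norm_ball c (by positivity)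
        _ = ENNReal.ofReal (6 * Real.pi * l) := by ring_nf
    calc ∫⁻ z in ball (0:ℂ) 1 ∩ ball w (2*l), g z
        ≤ ∫⁻ z in ball (0:ℂ) 1 ∩ ball w (2*l), (2 * ENNReal.ofReal ‖z - w‖⁻¹
          + ENNReal.ofReal ‖z - ζ‖⁻¹ + ENNReal.ofReal ‖z - ζ'‖⁻¹) := lintegral_mono hpt
      _ = (∫⁻ z in ball (0:ℂ) 1 ∩ ball w (2*l), 2 * ENNReal.ofReal ‖z - w‖⁻¹)
          + (∫⁻ z in ball (0:ℂ) 1 ∩ ball w (2*l), ENNReal.ofReal ‖z - ζ‖⁻¹)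
          + ∫⁻ z in ball (0:ℂ) 1 ∩ ball w (2*l), ENNReal.ofReal ‖z - ζ'‖⁻¹ := by
          rw [lintegral_add_left (by fun_prop), lintegral_add_left (by fun_prop)]
      _ ≤ 2 * ENNReal.ofReal (6 * Real.pi * l) + ENNReal.ofReal (6 * Real.pi * l)
          + ENNReal.ofReal (6 * Real.pi * l) := by
          have h0 : ‖w - w‖ ≤ l/2 := by rw [sub_self, norm_zero]; linarith
          have hζc : ‖ζ - w‖ ≤ l/2 := hu_def ▸ hu_abs
          have hζ'c : ‖ζ' - w‖ ≤ l/2 := hv_def ▸ hv_abs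
          gcongr ?_ + ?_ + ?_
          · rw [lintegral_const_mul' _ _ (by norm_num)]
            gcongr
            exact hsub w h0
          · exact hsub ζ hζc
          · exact hsub ζ' hζ'c
      _ = ENNReal.ofReal (24 * Real.pi * l) := by
          rw [show (2:ℝ≥0∞) = ENNReal.ofReal (2:ℝ) by norm_num,
            ← ENNReal.ofReal_mul (by norm_num),
            ← ENNReal.ofReal_add (by positivity) (by positivity),
            ← ENNReal.ofReal_add (by positivity) (by positivity)]
          ring_nf
  have hfar : ∫⁻ z in ball (0:ℂ) 1 \ ball w (2*l), g z
      ≤ ENNReal.ofReal (3 * Real.pi * l) := by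
    have hpt : ∀ z ∈ ball (0:ℂ) 1 \ ball w (2*l),
        g z ≤ ENNReal.ofReal (2*l^2) * ENNReal.ofReal (‖z - w‖⁻¹ ^ 3) := by
      intro z hz
      obtain ⟨hz1, hz2⟩ := hz
      rw [mem_ball, not_lt] at hz2
      have hZ1 : 2*l ≤ ‖z - w‖ := by rwa [dist_eq_norm] at hz2
      have hZ2 : ‖z - w‖ < 2 := by
        have h1 : ‖z‖ < 1 := mem_ball_zero_iff.1 hz1
        have h2 : ‖w‖ = 1 := by exact habs_w
        calc ‖z - w‖ ≤ ‖z‖ + ‖w‖ := norm_sub_le _ _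
          _ < 2 := by rw [h2]; linarith
      have hZpos : 0 < ‖z - w‖ := lt_of_lt_of_le (by positivity) hZ1
      have hZne : z - w ≠ 0 := norm_pos_iff.1 hZpos
      have hu_small : ‖u‖ ≤ (1/4) * ‖z - w‖ := by
        nlinarith [hu_abs]
      have hv_small : ‖v‖ ≤ (1/4) * ‖z - w‖ := by
        nlinarith [hv_abs]
      have hZu : (3/4) * ‖z - w‖ ≤ ‖z - w - u‖ := by
        have := norm_sub_norm_le (z - w) u
        linarith
      have hZv : (3/4) * ‖z - w‖ ≤ ‖z - w - v‖ := by
        have := norm_sub_norm_le (z - w) v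
        linarith
      have hZu_pos : 0 < ‖z - w - u‖ := lt_of_lt_of_le (by positivity) hZu
      have hZv_pos : 0 < ‖z - w - v‖ := lt_of_lt_of_le (by positivity) hZv
      have hZu_ne : z - w - u ≠ 0 := norm_pos_iff.1 hZu_pos
      have hZv_ne : z - w - v ≠ 0 := norm_pos_iff.1 hZv_pos
      have hζz : z - ζ = z - w - u := by rw [hu_def]; ring
      have hζ'z : z - ζ' = z - w - v := by rw [hv_def]; ring
      have hid : 2 * (z - w)⁻¹ - (z - ζ)⁻¹ - (z - ζ')⁻¹
          = (2*u*v - (z - w)*(u + v)) / ((z - w) * (z - w - u) * (z - w - v)) := by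
        rw [hζz, hζ'z]
        field_simp
        ring
      have hnum : ‖2*u*v - (z - w)*(u + v)‖ ≤ l^2 := by
        have e1 : ‖(2:ℂ)*u*v‖ = 2 * (‖u‖ * ‖v‖) := by
          rw [norm_mul, norm_mul]
          norm_num
          ring
        have e2 : ‖(z - w)*(u + v)‖ = ‖z - w‖ * ‖u + v‖ := norm_mul _ _
        have h3 : ‖u + v‖ ≤ s^2 := by exact huv_abs
        have h4 : ‖u‖ ≤ l/2 := by exact hu_abs
        have h5 : ‖v‖ ≤ l/2 := by exact hv_abs
        calc ‖2*u*v - (z - w)*(u + v)‖ ≤ ‖(2:ℂ)*u*v‖ + ‖(z - w)*(u + v)‖ := norm_sub_le _ _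
          _ = 2 * (‖u‖ * ‖v‖) + ‖z - w‖ * ‖u + v‖ := by rw [e1, e2]
          _ ≤ 2 * ((l/2) * (l/2)) + 2 * s^2 := by
              have m1 : ‖u‖ * ‖v‖ ≤ (l/2) * (l/2) :=
                mul_le_mul h4 h5 (norm_nonneg v) (by positivity)
              have m2 : ‖z - w‖ * ‖u + v‖ ≤ 2 * s^2 :=
                mul_le_mul hZ2.le h3 (norm_nonneg _) (by norm_num)
              linarith
          _ ≤ l^2 := by nlinarith
      have hden : (9/16) * ‖z - w‖^3 ≤ ‖(z - w) * (z - w - u) * (z - w - v)‖ := by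
        rw [norm_mul, norm_mul]
        calc (9/16) * ‖z - w‖^3 = ‖z - w‖ * ((3/4) * ‖z - w‖) * ((3/4) * ‖z - w‖) := by ring
          _ ≤ ‖z - w‖ * ‖z - w - u‖ * ‖z - w - v‖ := by
              gcongr
              all_goals positivity
      have hfrac : ‖(2*u*v - (z - w)*(u + v)) / ((z - w) * (z - w - u) * (z - w - v))‖
          ≤ 2 * l^2 * (‖z - w‖⁻¹ ^ 3) := by
        rw [norm_div]
        have hdpos : (0:ℝ) < (9/16) * ‖z - w‖^3 := by positivity
        calc ‖2*u*v - (z - w)*(u + v)‖ / ‖(z - w) * (z - w - u) * (z - w - v)‖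
            ≤ l^2 / ((9/16) * ‖z - w‖^3) := by
              apply div_le_div₀ (by positivity) hnum hdpos hden
          _ ≤ 2 * l^2 * (‖z - w‖⁻¹ ^ 3) := by
              rw [inv_pow, div_eq_mul_inv, mul_inv]
              calc l^2 * (((9:ℝ)/16)⁻¹ * (‖z - w‖^3)⁻¹)
                  ≤ l^2 * (2 * (‖z - w‖^3)⁻¹) := by
                    gcongr
                    norm_num
                _ = 2 * l^2 * (‖z - w‖^3)⁻¹ := by ring
      calc g z = ENNReal.ofReal ‖(2*u*v - (z - w)*(u + v))
            / ((z - w) * (z - w - u) * (z - w - v))‖ := by rw [hg_def]; simp only []; rw [hid]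
        _ ≤ ENNReal.ofReal (2 * l^2 * (‖z - w‖⁻¹ ^ 3)) := ENNReal.ofReal_le_ofReal hfrac
        _ = ENNReal.ofReal (2*l^2) * ENNReal.ofReal (‖z - w‖⁻¹ ^ 3) :=
            ENNReal.ofReal_mul (by positivity)
    calc ∫⁻ z in ball (0:ℂ) 1 \ ball w (2*l), g z
        ≤ ∫⁻ z in ball (0:ℂ) 1 \ ball w (2*l),
            ENNReal.ofReal (2*l^2) * ENNReal.ofReal (‖z - w‖⁻¹ ^ 3) := by
          refine lintegral_mono_ae ?_
          filter_upwards [ae_restrict_mem (measurableSet_ball.diff measurableSet_ball)] using hpt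
      _ = ENNReal.ofReal (2*l^2) * ∫⁻ z in ball (0:ℂ) 1 \ ball w (2*l),
            ENNReal.ofReal (‖z - w‖⁻¹ ^ 3) := lintegral_const_mul' _ _ ENNReal.ofReal_ne_top
      _ ≤ ENNReal.ofReal (2*l^2) * ENNReal.ofReal (3 * Real.pi * (2*l)⁻¹) := by
          gcongr
          refine le_trans (lintegral_mono_set ?_) (lintegral_inv_norm_cube_compl w (by positivity))
          rintro z ⟨_, hz2⟩
          rw [mem_ball, not_lt] at hz2
          exact hz2
      _ = ENNReal.ofReal (3 * Real.pi * l) := by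
          rw [← ENNReal.ofReal_mul (by positivity)]
          congr 1
          field_simp
  calc ∫⁻ z in ball (0:ℂ) 1, g z
      ≤ (∫⁻ z in ball (0:ℂ) 1 ∩ ball w (2*l), g z)
        + ∫⁻ z in ball (0:ℂ) 1 \ ball w (2*l), g z := by
        conv_lhs => rw [← Set.inter_union_diff (ball (0:ℂ) 1) (ball w (2*l))]
        exact lintegral_union_le _ _ _
    _ ≤ ENNReal.ofReal (24 * Real.pi * l) + ENNReal.ofReal (3 * Real.pi * l) :=
        add_le_add hnear hfar
    _ = ENNReal.ofReal (27 * Real.pi * l) := by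
        rw [← ENNReal.ofReal_add (by positivity) (by positivity)]
        ring_nf

set_option maxHeartbeats 1000000 in
/-- For a half-open interval `I = [a, b) ⊆ [-π, π)` of length `l = b - a`, with midpoint
`θ₀ = (a+b)/2` and `w = e^{iθ₀}`, one has
`∫_𝔻 |1/(z - w) - (1/l)∫_I dθ/(z - e^{iθ})| dm(z) ≤ C·l`. -/
theorem single_fraction_estimate :
    ∃ C : ℝ, 0 < C ∧
      ∀ a b : ℝ, -Real.pi ≤ a → b ≤ Real.pi → a < b →
        ∫ z in Metric.ball (0 : ℂ) 1,
            ‖((z - Complex.exp ((((a + b) / 2 : ℝ) : ℂ) * Complex.I))⁻¹ -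
              ((b - a : ℝ) : ℂ)⁻¹ *
                ∫ θ in a..b, (z - Complex.exp ((θ : ℂ) * Complex.I))⁻¹)‖ ≤
          C * (b - a) := by
  refine ⟨27 * Real.pi, by positivity, ?_⟩
  intro a b _ha _hb hab
  have hl : 0 < b - a := sub_pos.2 hab
  set w : ℂ := Complex.exp ((((a + b) / 2 : ℝ) : ℂ) * Complex.I) with hw_def
  set f : ℂ → ℝ := fun z => ‖(z - w)⁻¹ -
      ((b - a : ℝ) : ℂ)⁻¹ * ∫ θ in a..b, (z - Complex.exp ((θ : ℂ) * Complex.I))⁻¹‖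
    with hf_def
  -- continuity of the θ-integrand for z in the ball
  have hcont : ∀ z ∈ ball (0:ℂ) 1,
      Continuous fun θ : ℝ => (z - Complex.exp ((θ:ℂ) * Complex.I))⁻¹ := by
    intro z hz
    apply Continuous.inv₀ (by fun_prop)
    intro θ h
    have h1 : ‖z‖ < 1 := mem_ball_zero_iff.1 hz
    rw [sub_eq_zero] at h
    rw [h, Complex.norm_exp_ofReal_mul_I] at h1
    exact lt_irrefl 1 h1
  -- the key pointwise identity
  have hkey : ∀ z ∈ ball (0:ℂ) 1,
      (z - w)⁻¹ - ((b - a : ℝ) : ℂ)⁻¹ *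
          (∫ θ in a..b, (z - Complex.exp ((θ:ℂ) * Complex.I))⁻¹)
        = (((2*(b-a) : ℝ)) : ℂ)⁻¹ * ∫ θ in Ioc a b,
            (2 * (z - w)⁻¹ - (z - Complex.exp ((θ:ℂ) * Complex.I))⁻¹
              - (z - Complex.exp (((a+b-θ : ℝ):ℂ) * Complex.I))⁻¹) := by
    intro z hz
    have hc := hcont z hz
    have hc' : Continuous fun θ : ℝ =>
        (z - Complex.exp (((a+b-θ : ℝ):ℂ) * Complex.I))⁻¹ :=
      hc.comp (continuous_const.sub continuous_id)
    have i1 : IntervalIntegrable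
        (fun θ : ℝ => (z - Complex.exp ((θ:ℂ) * Complex.I))⁻¹) volume a b :=
      hc.intervalIntegrable a b
    have i2 : IntervalIntegrable
        (fun θ : ℝ => (z - Complex.exp (((a+b-θ : ℝ):ℂ) * Complex.I))⁻¹) volume a b :=
      hc'.intervalIntegrable a b
    have hrefl : (∫ θ in a..b, (z - Complex.exp (((a+b-θ : ℝ):ℂ) * Complex.I))⁻¹)
        = ∫ θ in a..b, (z - Complex.exp ((θ:ℂ) * Complex.I))⁻¹ := by
      have h := intervalIntegral.integral_comp_sub_left
        (fun t : ℝ => (z - Complex.exp ((t:ℂ) * Complex.I))⁻¹) (a+b) (a := a) (b := b)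
      simpa using h
    rw [← intervalIntegral.integral_of_le hab.le,
      intervalIntegral.integral_sub ((intervalIntegrable_const).sub i1) i2,
      intervalIntegral.integral_sub (intervalIntegrable_const) i1,
      intervalIntegral.integral_const, hrefl]
    set G := ∫ θ in a..b, (z - Complex.exp ((θ:ℂ) * Complex.I))⁻¹
    have h2l : ((2*(b-a) : ℝ) : ℂ) ≠ 0 := by
      simp only [ne_eq, Complex.ofReal_eq_zero]
      positivity
    have hlc : ((b - a : ℝ) : ℂ) ≠ 0 := by
      simp only [ne_eq, Complex.ofReal_eq_zero]
      positivity
    have hcast : (((2*(b-a) : ℝ)) : ℂ) = 2 * ((b - a : ℝ) : ℂ) := by push_cast; ring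
    rw [Complex.real_smul, hcast]
    generalize ((b - a : ℝ) : ℂ) = L at hlc ⊢
    field_simp
    ring
  -- measurability of f on the ball
  have hmeasf : AEStronglyMeasurable f (volume.restrict (ball (0:ℂ) 1)) := by
    have h1 : StronglyMeasurable fun z : ℂ =>
        ∫ θ in Ioc a b, (z - Complex.exp ((θ:ℂ) * Complex.I))⁻¹ := by
      apply StronglyMeasurable.integral_prod_right'
        (f := fun q : ℂ × ℝ => (q.1 - Complex.exp ((q.2:ℂ) * Complex.I))⁻¹)
      exact (Measurable.stronglyMeasurable (by fun_prop))
    have h2 : Measurable fun z : ℂ => (z - w)⁻¹ -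
        ((b - a : ℝ) : ℂ)⁻¹ * ∫ θ in Ioc a b, (z - Complex.exp ((θ:ℂ) * Complex.I))⁻¹ := by
      exact ((by fun_prop : Measurable fun z : ℂ => (z - w)⁻¹).sub
        (h1.measurable.const_mul _))
    have hfeq : f = fun z => ‖(z - w)⁻¹ -
        ((b - a : ℝ) : ℂ)⁻¹ * ∫ θ in Ioc a b, (z - Complex.exp ((θ:ℂ) * Complex.I))⁻¹‖ := by
      funext z
      rw [hf_def]
      simp only [intervalIntegral.integral_of_le hab.le]
    rw [hfeq]
    exact h2.norm.aestronglyMeasurable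
  have hnn : 0 ≤ᵐ[volume.restrict (ball (0:ℂ) 1)] f :=
    Eventually.of_forall fun z => norm_nonneg _
  have hgoal_eq : (∫ z in ball (0:ℂ) 1, f z)
      = (∫⁻ z in ball (0:ℂ) 1, ENNReal.ofReal (f z)).toReal :=
    integral_eq_lintegral_of_nonneg_ae hnn hmeasf
  have hb1 : (∫⁻ z in ball (0:ℂ) 1, ENNReal.ofReal (f z))
      ≤ ENNReal.ofReal ((2*(b-a))⁻¹)
        * (ENNReal.ofReal (27*Real.pi*(b-a)) * ENNReal.ofReal (b-a)) := by
    calc ∫⁻ z in ball (0:ℂ) 1, ENNReal.ofReal (f z)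
        ≤ ∫⁻ z in ball (0:ℂ) 1, ENNReal.ofReal ((2*(b-a))⁻¹)
            * ∫⁻ θ in Ioc a b, ENNReal.ofReal
              ‖2 * (z - w)⁻¹ - (z - Complex.exp ((θ:ℂ) * Complex.I))⁻¹
                - (z - Complex.exp (((a+b-θ : ℝ):ℂ) * Complex.I))⁻¹‖ := by
          refine lintegral_mono_ae ?_
          filter_upwards [ae_restrict_mem measurableSet_ball] with z hz
          rw [hf_def]
          simp only [hkey z hz]
          rw [norm_mul]
          have e1 : ‖(((2*(b-a) : ℝ)) : ℂ)⁻¹‖ = (2*(b-a))⁻¹ := by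
            rw [norm_inv, Complex.norm_real, Real.norm_eq_abs, abs_of_pos (by positivity)]
          rw [e1, ENNReal.ofReal_mul (by positivity)]
          refine mul_le_mul_right ?_ _
          rw [ofReal_norm]
          refine le_trans (enorm_integral_le_lintegral_enorm _) ?_
          refine lintegral_mono fun θ => ?_
          rw [ofReal_norm]
      _ = ENNReal.ofReal ((2*(b-a))⁻¹) * ∫⁻ z in ball (0:ℂ) 1,
            ∫⁻ θ in Ioc a b, ENNReal.ofReal
              ‖2 * (z - w)⁻¹ - (z - Complex.exp ((θ:ℂ) * Complex.I))⁻¹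
                - (z - Complex.exp (((a+b-θ : ℝ):ℂ) * Complex.I))⁻¹‖ :=
          lintegral_const_mul' _ _ ENNReal.ofReal_ne_top
      _ = ENNReal.ofReal ((2*(b-a))⁻¹) * ∫⁻ θ in Ioc a b,
            ∫⁻ z in ball (0:ℂ) 1, ENNReal.ofReal
              ‖2 * (z - w)⁻¹ - (z - Complex.exp ((θ:ℂ) * Complex.I))⁻¹
                - (z - Complex.exp (((a+b-θ : ℝ):ℂ) * Complex.I))⁻¹‖ := by
          rw [lintegral_lintegral_swap (by fun_prop)]
      _ ≤ ENNReal.ofReal ((2*(b-a))⁻¹)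
          * (ENNReal.ofReal (27*Real.pi*(b-a)) * ENNReal.ofReal (b-a)) := by
          refine mul_le_mul_right ?_ _
          calc ∫⁻ θ in Ioc a b, ∫⁻ z in ball (0:ℂ) 1, ENNReal.ofReal
                ‖2 * (z - w)⁻¹ - (z - Complex.exp ((θ:ℂ) * Complex.I))⁻¹
                  - (z - Complex.exp (((a+b-θ : ℝ):ℂ) * Complex.I))⁻¹‖
              ≤ ∫⁻ _θ in Ioc a b, ENNReal.ofReal (27*Real.pi*(b-a)) := by
                refine lintegral_mono_ae ?_
                filter_upwards [ae_restrict_mem measurableSet_Ioc] with θ hθ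
                exact theta_est hab hθ
            _ = ENNReal.ofReal (27*Real.pi*(b-a)) * ENNReal.ofReal (b-a) := by
                rw [setLIntegral_const, Real.volume_Ioc]
  rw [hgoal_eq]
  have hne : ENNReal.ofReal ((2*(b-a))⁻¹)
      * (ENNReal.ofReal (27*Real.pi*(b-a)) * ENNReal.ofReal (b-a)) ≠ ⊤ :=
    ENNReal.mul_ne_top ENNReal.ofReal_ne_top
      (ENNReal.mul_ne_top ENNReal.ofReal_ne_top ENNReal.ofReal_ne_top)
  calc (∫⁻ z in ball (0:ℂ) 1, ENNReal.ofReal (f z)).toReal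
      ≤ (ENNReal.ofReal ((2*(b-a))⁻¹)
        * (ENNReal.ofReal (27*Real.pi*(b-a)) * ENNReal.ofReal (b-a))).toReal :=
        ENNReal.toReal_mono hne hb1
    _ = (2*(b-a))⁻¹ * (27*Real.pi*(b-a) * (b-a)) := by
        rw [ENNReal.toReal_mul, ENNReal.toReal_mul, ENNReal.toReal_ofReal (by positivity),
          ENNReal.toReal_ofReal (by positivity), ENNReal.toReal_ofReal (by positivity)]
    _ ≤ 27 * Real.pi * (b - a) := by
        rw [show (2*(b-a))⁻¹ * (27*Real.pi*(b-a) * (b-a))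
          = 27*Real.pi*(b-a) * ((b-a) * (2*(b-a))⁻¹) by ring]
        have : (b-a) * (2*(b-a))⁻¹ = 1/2 := by
          field_simp
        rw [this]
        nlinarith [Real.pi_pos, hl]
end

section
/- There exists an absolute constant C > 0 such that for every l with 0 < l ≤ 2π, one has ∫_{z ∈ D, |z - 1| ≤ 4l} | 1/(z - 1) - (1/l)·∫_{-l/2}^{l/2} 1/(z - e^{iθ}) dθ | dm(z) ≤ C·l. -/
open MeasureTheory Metric Set
open scoped NNReal ENNReal


lemma key_lintegral (c : ℂ) {R : ℝ} (hR : 0 < R) :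
    ∫⁻ z in Metric.ball c R, (‖(z - c)⁻¹‖₊ : ENNReal) ≤ ENNReal.ofReal (4 * Real.pi * R) := by
  classical
  set A : ℕ → Set ℂ := fun n => Metric.ball c (R / 2 ^ n) \ Metric.ball c (R / 2 ^ (n + 1)) with hA
  have hcover : Metric.ball c R ⊆ {c} ∪ ⋃ n, A n := by
    intro z hz
    rcases eq_or_ne z c with h | h
    · exact Or.inl h
    · right
      have hd : 0 < dist z c := dist_pos.2 h
      have hex : ∃ n : ℕ, R / 2 ^ (n + 1) ≤ dist z c := by
        obtain ⟨n, hn⟩ := pow_unbounded_of_one_lt (R / dist z c) one_lt_two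
        refine ⟨n, ?_⟩
        have h2 : R < dist z c * 2 ^ n := by
          have := (div_lt_iff₀ hd).1 hn; linarith
        rw [div_le_iff₀ (by positivity)]
        calc R ≤ dist z c * 2 ^ n := h2.le
          _ ≤ dist z c * 2 ^ (n + 1) := by
              have : (2:ℝ) ^ n ≤ 2 ^ (n + 1) := by
                apply pow_le_pow_right₀ one_le_two; omega
              nlinarith
      set m := Nat.find hex with hm
      refine mem_iUnion.2 ⟨m, ?_, fun hz' => absurd (mem_ball.1 hz') (not_lt.2 ?_)⟩
      · simp only [mem_ball]
        rcases Nat.eq_zero_or_pos m with hm0 | hm0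
        · simpa [hm0] using hz
        · have hmin := Nat.find_min hex (m := m - 1) (by omega)
          push_neg at hmin
          calc dist z c < R / 2 ^ (m - 1 + 1) := hmin
            _ = R / 2 ^ m := by congr 2; omega
      · exact Nat.find_spec hex
  calc ∫⁻ z in Metric.ball c R, (‖(z - c)⁻¹‖₊ : ENNReal)
      ≤ ∫⁻ z in {c} ∪ ⋃ n, A n, (‖(z - c)⁻¹‖₊ : ENNReal) := lintegral_mono_set hcover
    _ ≤ (∫⁻ z in {c}, (‖(z - c)⁻¹‖₊ : ENNReal))
        + ∫⁻ z in ⋃ n, A n, (‖(z - c)⁻¹‖₊ : ENNReal) := lintegral_union_le _ _ _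
    _ ≤ 0 + ∑' n, ∫⁻ z in A n, (‖(z - c)⁻¹‖₊ : ENNReal) := by
        gcongr
        · rw [setLIntegral_measure_zero _ _ (by simp)]
        · exact lintegral_iUnion_le _ _
    _ = ∑' n, ∫⁻ z in A n, (‖(z - c)⁻¹‖₊ : ENNReal) := by rw [zero_add]
    _ ≤ ∑' n : ℕ, ENNReal.ofReal (2 * Real.pi * R) * (ENNReal.ofReal 2⁻¹) ^ n := by
        gcongr with n
        have hb : ∀ z ∈ A n, (‖(z - c)⁻¹‖₊ : ENNReal) ≤ ENNReal.ofReal (2 ^ (n+1) / R) := by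
          intro z hz
          have h1 : R / 2 ^ (n + 1) ≤ ‖z - c‖ := by
            have := hz.2
            simpa [mem_ball, dist_eq_norm] using this
          have h2 : ‖(z - c)⁻¹‖ ≤ 2 ^ (n+1) / R := by
            rw [norm_inv]
            have hp : (0:ℝ) < R / 2 ^ (n + 1) := by positivity
            calc ‖z - c‖⁻¹ ≤ (R / 2 ^ (n + 1))⁻¹ := by
                  apply inv_anti₀ hp h1
              _ = 2 ^ (n+1) / R := by field_simp
          calc (‖(z - c)⁻¹‖₊ : ENNReal) = ENNReal.ofReal ‖(z - c)⁻¹‖ := by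
                rw [ofReal_norm_eq_enorm, enorm_eq_nnnorm]
            _ ≤ ENNReal.ofReal (2 ^ (n+1) / R) := ENNReal.ofReal_le_ofReal h2
        calc ∫⁻ z in A n, (‖(z - c)⁻¹‖₊ : ENNReal)
            ≤ ∫⁻ _ in A n, ENNReal.ofReal (2 ^ (n+1) / R) :=
              setLIntegral_mono measurable_const hb
          _ = ENNReal.ofReal (2 ^ (n+1) / R) * volume (A n) := setLIntegral_const _ _
          _ ≤ ENNReal.ofReal (2 ^ (n+1) / R) * volume (Metric.ball c (R / 2 ^ n)) := by
              gcongr; exact diff_subset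
          _ = ENNReal.ofReal (2 ^ (n+1) / R) * (ENNReal.ofReal (R / 2 ^ n) ^ 2 * NNReal.pi) := by
              rw [Complex.volume_ball]
          _ ≤ ENNReal.ofReal (2 * Real.pi * R) * (ENNReal.ofReal 2⁻¹) ^ n := by
              rw [← ENNReal.ofReal_pow (by positivity), ← ENNReal.ofReal_pow (by positivity),
                ← ENNReal.ofReal_coe_nnreal]
              rw [← ENNReal.ofReal_mul (by positivity), ← ENNReal.ofReal_mul (by positivity),
                ← ENNReal.ofReal_mul (by positivity)]
              apply ENNReal.ofReal_le_ofReal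
              rw [show ((NNReal.pi : ℝ≥0) : ℝ) = Real.pi from rfl]
              have h2n : (0:ℝ) < 2 ^ n := by positivity
              have : (2:ℝ) ^ (n+1) / R * ((R / 2 ^ n) ^ 2 * Real.pi)
                  = 2 * Real.pi * R * (2⁻¹) ^ n := by
                rw [inv_pow]
                field_simp
                ring
              rw [this]
    _ = ENNReal.ofReal (2 * Real.pi * R) * ∑' n : ℕ, (ENNReal.ofReal 2⁻¹) ^ n := by
        rw [ENNReal.tsum_mul_left]
    _ = ENNReal.ofReal (2 * Real.pi * R) * 2 := by
        rw [ENNReal.tsum_geometric]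
        congr 1
        rw [ENNReal.ofReal_inv_of_pos zero_lt_two]
        norm_num [ENNReal.one_sub_inv_two]
    _ = ENNReal.ofReal (4 * Real.pi * R) := by
        rw [show ((2:ℝ≥0∞)) = ENNReal.ofReal 2 by norm_num,
          ← ENNReal.ofReal_mul (by positivity)]
        congr 1; ring

/-- Estimate near the pole: for `0 < l ≤ 2π`,
`∫_{z ∈ 𝔻, |z-1| ≤ 4l} |1/(z-1) - (1/l)∫_{-l/2}^{l/2} dθ/(z - e^{iθ})| dm(z) ≤ C·l`. -/
theorem single_fraction_estimate_near_pole :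
    ∃ C : ℝ, 0 < C ∧
      ∀ l : ℝ, 0 < l → l ≤ 2 * Real.pi →
        ∫ z in Metric.ball (0 : ℂ) 1 ∩ {z : ℂ | ‖z - 1‖ ≤ 4 * l},
            ‖((z - 1)⁻¹ -
              ((l : ℝ) : ℂ)⁻¹ *
                ∫ θ in (-(l / 2))..(l / 2),
                  (z - Complex.exp ((θ : ℂ) * Complex.I))⁻¹)‖ ≤
          C * l := by
  refine ⟨48 * Real.pi, by positivity, fun l hl hl2 => ?_⟩
  have hle : -(l / 2) ≤ l / 2 := by linarith
  set S : Set ℂ := Metric.ball (0 : ℂ) 1 ∩ {z : ℂ | ‖z - 1‖ ≤ 4 * l} with hS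
  set T : Set ℝ := Set.Ioc (-(l / 2)) (l / 2) with hT
  -- measurability facts
  have hF : Measurable fun p : ℂ × ℝ => (p.1 - Complex.exp ((p.2 : ℂ) * Complex.I))⁻¹ := by
    apply Measurable.inv
    fun_prop
  set I : ℂ → ℂ := fun z => ∫ θ in T, (z - Complex.exp ((θ : ℂ) * Complex.I))⁻¹ with hI
  have hI_meas : Measurable I :=
    (hF.stronglyMeasurable.integral_prod_right').measurable
  set g : ℂ → ℂ := fun z => (z - 1)⁻¹ - ((l : ℝ) : ℂ)⁻¹ * I z with hg
  have hg_meas : Measurable g :=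
    ((measurable_id.sub measurable_const).inv).sub (measurable_const.mul hI_meas)
  have hrw : ∀ z : ℂ, ‖((z - 1)⁻¹ -
      ((l : ℝ) : ℂ)⁻¹ * ∫ θ in (-(l / 2))..(l / 2),
        (z - Complex.exp ((θ : ℂ) * Complex.I))⁻¹)‖ = ‖g z‖ := by
    intro z
    rw [intervalIntegral.integral_of_le hle]
  simp only [hrw]
  -- pass to lintegral
  rw [integral_eq_lintegral_of_nonneg_ae (Filter.Eventually.of_forall fun z => norm_nonneg _)
    hg_meas.norm.aestronglyMeasurable]
  have hbound : ∫⁻ z in S, ENNReal.ofReal ‖g z‖ ≤ ENNReal.ofReal (48 * Real.pi * l) := by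
    simp only [ofReal_norm_eq_enorm, enorm_eq_nnnorm]
    have hl6 : (0:ℝ) < 6 * l := by linarith
    have term1 : ∫⁻ z in S, (‖(z - 1)⁻¹‖₊ : ℝ≥0∞) ≤ ENNReal.ofReal (24 * Real.pi * l) := by
      have hsub : S ⊆ Metric.ball (1 : ℂ) (6 * l) := by
        intro z hz
        have := hz.2
        simp only [Set.mem_setOf_eq] at this
        rw [mem_ball, dist_eq_norm] at *
        calc ‖z - 1‖ ≤ 4 * l := this
          _ < 6 * l := by linarith
      calc ∫⁻ z in S, (‖(z - 1)⁻¹‖₊ : ℝ≥0∞)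
          ≤ ∫⁻ z in Metric.ball (1:ℂ) (6 * l), (‖(z - 1)⁻¹‖₊ : ℝ≥0∞) := lintegral_mono_set hsub
        _ ≤ ENNReal.ofReal (4 * Real.pi * (6 * l)) := key_lintegral 1 hl6
        _ = ENNReal.ofReal (24 * Real.pi * l) := by congr 1; ring
    have hSsub : ∀ θ ∈ T, S ⊆ Metric.ball (Complex.exp ((θ : ℂ) * Complex.I)) (6 * l) := by
      intro θ hθ z hz
      have hθabs : |θ| ≤ l / 2 := by
        rw [abs_le]; exact ⟨hθ.1.le, hθ.2⟩
      have habsθ : ‖(θ : ℂ) * Complex.I‖ = |θ| := by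
        simp
      have hexp1 : ‖(Complex.exp ((θ : ℂ) * Complex.I) - 1)‖ ≤ 2 * |θ| := by
        rcases le_or_gt (|θ|) 1 with h1 | h1
        · have := Complex.norm_exp_sub_one_le (x := (θ : ℂ) * Complex.I)
            (by rw [habsθ]; exact h1)
          rwa [habsθ] at this
        · have h2 : ‖Complex.exp ((θ : ℂ) * Complex.I) - 1‖ ≤ 1 + 1 := by
            refine (norm_sub_le _ _).trans ?_
            rw [Complex.norm_exp_ofReal_mul_I]
            simp
          linarith
      have hz2 := hz.2
      simp only [Set.mem_setOf_eq] at hz2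
      rw [mem_ball, dist_eq_norm]
      calc ‖z - Complex.exp ((θ : ℂ) * Complex.I)‖
          ≤ ‖z - 1‖ + ‖(1 : ℂ) - Complex.exp ((θ : ℂ) * Complex.I)‖ := by
            have : z - Complex.exp ((θ : ℂ) * Complex.I) = (z - 1) + (1 - Complex.exp ((θ : ℂ) * Complex.I)) := by ring
            rw [this]; exact norm_add_le _ _
        _ ≤ 4 * l + 2 * |θ| := by
            apply add_le_add
            · exact hz2
            · rw [norm_sub_rev]; exact hexp1
        _ ≤ 4 * l + 2 * (l / 2) := by linarith
        _ < 6 * l := by linarith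
    have term2 : ∫⁻ z in S, (‖((l : ℝ) : ℂ)⁻¹ * I z‖₊ : ℝ≥0∞)
        ≤ ENNReal.ofReal (24 * Real.pi * l) := by
      have hlnorm : (‖((l : ℝ) : ℂ)⁻¹‖₊ : ℝ≥0∞) = ENNReal.ofReal l⁻¹ := by
        rw [← enorm_eq_nnnorm, ← ofReal_norm_eq_enorm, norm_inv, Complex.norm_real, Real.norm_eq_abs,
          abs_of_pos hl]
      calc ∫⁻ z in S, (‖((l : ℝ) : ℂ)⁻¹ * I z‖₊ : ℝ≥0∞)
          = ∫⁻ z in S, (‖((l : ℝ) : ℂ)⁻¹‖₊ : ℝ≥0∞) * (‖I z‖₊ : ℝ≥0∞) := by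
            simp [nnnorm_mul, ENNReal.coe_mul]
        _ = (‖((l : ℝ) : ℂ)⁻¹‖₊ : ℝ≥0∞) * ∫⁻ z in S, (‖I z‖₊ : ℝ≥0∞) :=
            lintegral_const_mul _ hI_meas.enorm
        _ ≤ (‖((l : ℝ) : ℂ)⁻¹‖₊ : ℝ≥0∞) * (ENNReal.ofReal (24 * Real.pi * l) * ENNReal.ofReal l) := by
            gcongr
            calc ∫⁻ z in S, (‖I z‖₊ : ℝ≥0∞)
                ≤ ∫⁻ z in S, ∫⁻ θ in T, (‖(z - Complex.exp ((θ : ℂ) * Complex.I))⁻¹‖₊ : ℝ≥0∞) :=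
                  lintegral_mono fun z => enorm_integral_le_lintegral_enorm _
              _ = ∫⁻ θ in T, ∫⁻ z in S, (‖(z - Complex.exp ((θ : ℂ) * Complex.I))⁻¹‖₊ : ℝ≥0∞) :=
                  lintegral_lintegral_swap hF.enorm.aemeasurable
              _ ≤ ∫⁻ _ in T, ENNReal.ofReal (24 * Real.pi * l) := by
                  apply setLIntegral_mono' measurableSet_Ioc
                  intro θ hθ
                  calc ∫⁻ z in S, (‖(z - Complex.exp ((θ : ℂ) * Complex.I))⁻¹‖₊ : ℝ≥0∞)
                      ≤ ∫⁻ z in Metric.ball (Complex.exp ((θ : ℂ) * Complex.I)) (6 * l),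
                          (‖(z - Complex.exp ((θ : ℂ) * Complex.I))⁻¹‖₊ : ℝ≥0∞) :=
                        lintegral_mono_set (hSsub θ hθ)
                    _ ≤ ENNReal.ofReal (4 * Real.pi * (6 * l)) := key_lintegral _ hl6
                    _ = ENNReal.ofReal (24 * Real.pi * l) := by congr 1; ring
              _ = ENNReal.ofReal (24 * Real.pi * l) * volume T := setLIntegral_const _ _
              _ = ENNReal.ofReal (24 * Real.pi * l) * ENNReal.ofReal l := by
                  rw [hT, Real.volume_Ioc]
                  ring_nf
        _ = ENNReal.ofReal (24 * Real.pi * l) := by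
            rw [hlnorm, ← mul_assoc, ← ENNReal.ofReal_mul (by positivity),
              ← ENNReal.ofReal_mul (by positivity)]
            congr 1
            field_simp
    calc ∫⁻ z in S, (‖g z‖₊ : ℝ≥0∞)
        ≤ ∫⁻ z in S, ((‖(z - 1)⁻¹‖₊ : ℝ≥0∞) + (‖((l : ℝ) : ℂ)⁻¹ * I z‖₊ : ℝ≥0∞)) := by
          apply lintegral_mono
          intro z
          exact ENNReal.coe_le_coe.2 (nnnorm_sub_le _ _)
      _ = (∫⁻ z in S, (‖(z - 1)⁻¹‖₊ : ℝ≥0∞)) + ∫⁻ z in S, (‖((l : ℝ) : ℂ)⁻¹ * I z‖₊ : ℝ≥0∞) :=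
          lintegral_add_left ((measurable_id.sub measurable_const).inv).enorm _
      _ ≤ ENNReal.ofReal (24 * Real.pi * l) + ENNReal.ofReal (24 * Real.pi * l) :=
          add_le_add term1 term2
      _ = ENNReal.ofReal (48 * Real.pi * l) := by
          rw [← ENNReal.ofReal_add (by positivity) (by positivity)]
          congr 1; ring
  calc (∫⁻ z in S, ENNReal.ofReal ‖g z‖).toReal
      ≤ (ENNReal.ofReal (48 * Real.pi * l)).toReal :=
        ENNReal.toReal_mono ENNReal.ofReal_ne_top hbound
    _ = 48 * Real.pi * l := ENNReal.toReal_ofReal (by positivity)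
end

section
/- There exists an absolute constant C > 0 such that for every l with 0 < l ≤ 2π and every z ∈ D with |z - 1| ≥ 4l, one has | 1/(z - 1) - (1/l)·∫_{-l/2}^{l/2} 1/(z - e^{iθ}) dθ | ≤ C·l^2/|z - 1|^3. -/
lemma aux_sin_lb {x : ℝ} (hx : 0 ≤ x) : x - x ^ 3 / 6 ≤ Real.sin x := by
  have h1 : Real.sin x = ∫ t in (0:ℝ)..x, Real.cos t := by simp
  have h2 : (x - x ^ 3 / 6) = ∫ t in (0:ℝ)..x, (1 - t ^ 2 / 2) := by
    rw [intervalIntegral.integral_sub intervalIntegrable_const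
      (((continuous_pow 2).div_const 2).intervalIntegrable _ _)]
    simp [intervalIntegral.integral_div]
    ring
  rw [h1, h2]
  apply intervalIntegral.integral_mono_on hx
  · exact ((continuous_const.sub ((continuous_pow 2).div_const 2)).intervalIntegrable _ _)
  · exact Real.continuous_cos.intervalIntegrable _ _
  · intro t _; exact Real.one_sub_sq_div_two_le_cos

lemma aux_exp_sub_one (θ : ℝ) : ‖Complex.exp (θ * Complex.I) - 1‖ ≤ |θ| := by
  have hrw : Complex.exp (θ * Complex.I) - 1
      = Complex.ofReal (Real.cos θ - 1) + Complex.ofReal (Real.sin θ) * Complex.I := by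
    rw [Complex.exp_mul_I, ← Complex.ofReal_cos, ← Complex.ofReal_sin]
    push_cast; ring
  have h : ‖Complex.exp (θ * Complex.I) - 1‖ ^ 2 ≤ |θ| ^ 2 := by
    rw [Complex.sq_norm, hrw, Complex.normSq_add_mul_I]
    have hc : 1 - θ ^ 2 / 2 ≤ Real.cos θ := Real.one_sub_sq_div_two_le_cos
    have hs := Real.sin_sq_add_cos_sq θ
    nlinarith [sq_abs θ]
  calc ‖Complex.exp (θ * Complex.I) - 1‖
      = Real.sqrt (‖Complex.exp (θ * Complex.I) - 1‖ ^ 2) :=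
        (Real.sqrt_sq (norm_nonneg _)).symm
    _ ≤ Real.sqrt (|θ| ^ 2) := Real.sqrt_le_sqrt h
    _ = |θ| := Real.sqrt_sq (abs_nonneg θ)

/-- Pointwise estimate away from the pole: for `0 < l ≤ 2π` and `z ∈ 𝔻` with
`|z - 1| ≥ 4l`, `|1/(z-1) - (1/l)∫_{-l/2}^{l/2} dθ/(z - e^{iθ})| ≤ C·l²/|z-1|³`. -/
theorem single_fraction_pointwise_estimate :
    ∃ C : ℝ, 0 < C ∧
      ∀ l : ℝ, 0 < l → l ≤ 2 * Real.pi →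
        ∀ z ∈ Metric.ball (0 : ℂ) 1, 4 * l ≤ ‖z - 1‖ →
          ‖(z - 1)⁻¹ -
              ((l : ℝ) : ℂ)⁻¹ *
                ∫ θ in (-(l / 2))..(l / 2),
                  (z - Complex.exp ((θ : ℂ) * Complex.I))⁻¹‖ ≤
            C * l ^ 2 / ‖z - 1‖ ^ 3 := by
  refine ⟨1, one_pos, ?_⟩
  intro l hl hl2 z hz h4
  set r := ‖z - 1‖ with hr
  have hr0 : 0 < r := lt_of_lt_of_le (by linarith) h4
  have hw : z - 1 ≠ 0 := fun h => by simp [hr, h] at hr0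
  have hzlt : ‖z‖ < 1 := by
    simpa [Complex.dist_eq] using hz
  have hr2 : r < 2 := by
    have h := norm_sub_le z 1
    simp only [hr]
    calc ‖z - 1‖ ≤ ‖z‖ + ‖(1:ℂ)‖ := h
    _ < 2 := by simp; linarith
  set E : ℝ → ℂ := fun θ => Complex.exp ((θ : ℂ) * Complex.I) with hE
  have habs : ∀ θ : ℝ, |θ| ≤ l / 2 → ‖E θ - 1‖ ≤ l / 2 :=
    fun θ hθ => (aux_exp_sub_one θ).trans hθ
  have hlow : ∀ θ : ℝ, |θ| ≤ l / 2 → 7 / 8 * r ≤ ‖z - E θ‖ := by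
    intro θ hθ
    have h1 : r ≤ ‖z - E θ‖ + ‖E θ - 1‖ := by
      calc r = ‖(z - E θ) + (E θ - 1)‖ := by rw [hr]; congr 1; ring
      _ ≤ _ := norm_add_le _ _
    have := habs θ hθ
    linarith
  have hne : ∀ θ : ℝ, |θ| ≤ l / 2 → z - E θ ≠ 0 := by
    intro θ hθ h
    have := hlow θ hθ
    rw [h] at this; simp at this; linarith
  have huIcc : Set.uIcc (-(l/2)) (l/2) = Set.Icc (-(l/2)) (l/2) :=
    Set.uIcc_of_le (by linarith)
  have hmem : ∀ θ ∈ Set.uIcc (-(l/2)) (l/2), |θ| ≤ l / 2 := by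
    intro θ hθ
    rw [huIcc, Set.mem_Icc] at hθ
    exact abs_le.2 ⟨hθ.1, hθ.2⟩
  have contE : Continuous E := Complex.continuous_exp.comp (Complex.continuous_ofReal.mul continuous_const)
  have cont1 : ContinuousOn (fun θ : ℝ => (z - E θ)⁻¹) (Set.uIcc (-(l/2)) (l/2)) :=
    ((continuous_const.sub contE).continuousOn).inv₀ (fun θ hθ => hne θ (hmem θ hθ))
  have contq : ContinuousOn (fun θ : ℝ => (E θ - 1) ^ 2 * (z - E θ)⁻¹) (Set.uIcc (-(l/2)) (l/2)) :=
    (((contE.sub continuous_const).pow 2).continuousOn).mul cont1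
  set A : ℂ := (z - 1)⁻¹ with hA
  set S : ℂ := ∫ θ in (-(l/2))..(l/2), (E θ - 1) with hS
  set Q : ℂ := ∫ θ in (-(l/2))..(l/2), (E θ - 1) ^ 2 * (z - E θ)⁻¹ with hQ
  -- value of S
  have hEint : (∫ θ in (-(l/2))..(l/2), E θ) = 2 * (Real.sin (l/2) : ℂ) := by
    have hcongr : ∀ θ ∈ Set.uIcc (-(l/2)) (l/2), E θ = Complex.exp (Complex.I * θ) := by
      intro θ _; rw [hE]; ring_nf
    rw [intervalIntegral.integral_congr hcongr,
      integral_exp_mul_complex Complex.I_ne_zero, div_eq_iff Complex.I_ne_zero]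
    rw [mul_comm Complex.I ((l/2 : ℝ) : ℂ), mul_comm Complex.I ((-(l/2) : ℝ) : ℂ),
      Complex.exp_mul_I, Complex.exp_mul_I]
    push_cast
    rw [Complex.cos_neg, Complex.sin_neg]
    ring
  have hSval : S = ((2 * Real.sin (l/2) - l : ℝ) : ℂ) := by
    rw [hS, intervalIntegral.integral_sub (contE.intervalIntegrable _ _) intervalIntegrable_const,
      hEint, intervalIntegral.integral_const]
    push_cast
    ring_nf
    simp [Complex.real_smul]
    ring
  have hSb : ‖S‖ ≤ l ^ 3 / 24 := by
    rw [hSval, Complex.norm_real, Real.norm_eq_abs]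
    have h1 := aux_sin_lb (x := l/2) (by linarith)
    have h2 := Real.sin_lt (x := l/2) (by linarith)
    rw [abs_le]
    constructor <;> nlinarith
  have hQb : ‖Q‖ * r ≤ 2 * l ^ 3 / 7 := by
    have hb : ∀ θ ∈ Set.uIoc (-(l/2)) (l/2),
        ‖(E θ - 1) ^ 2 * (z - E θ)⁻¹‖ ≤ (l/2)^2 * (7/8 * r)⁻¹ := by
      intro θ hθ
      have hθ' : |θ| ≤ l / 2 := hmem θ (Set.uIoc_subset_uIcc hθ)
      rw [norm_mul, norm_pow, norm_inv]
      have h1 : ‖E θ - 1‖ ^ 2 ≤ (l/2)^2 := pow_le_pow_left₀ (norm_nonneg _) (habs θ hθ') 2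
      have h2 : ‖z - E θ‖⁻¹ ≤ (7/8*r)⁻¹ := inv_anti₀ (by positivity) (hlow θ hθ')
      exact mul_le_mul h1 h2 (by positivity) (by positivity)
    have h := intervalIntegral.norm_integral_le_of_norm_le_const hb
    have hlen : |l/2 - (-(l/2))| = l := by rw [abs_of_pos (by linarith)]; ring
    rw [hlen] at h
    calc ‖Q‖ * r ≤ (l/2)^2 * (7/8*r)⁻¹ * l * r :=
          mul_le_mul_of_nonneg_right h hr0.le
      _ = 2 * l^3 / 7 := by
          rw [show (l/2)^2 * (7/8*r)⁻¹ * l * r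
              = 2 * l^3 / 7 * ((7/8 * r) * (7/8*r)⁻¹) * (7/8) / (7/8) by ring,
            mul_inv_cancel₀ (by positivity : (7:ℝ)/8 * r ≠ 0)]
          ring
  -- main identity
  have hl0 : ((l:ℝ):ℂ) ≠ 0 := Complex.ofReal_ne_zero.2 hl.ne'
  have hpt : ∀ θ ∈ Set.uIcc (-(l/2)) (l/2),
      (z - E θ)⁻¹ = A + (E θ - 1) * A^2 + (E θ - 1)^2 * (z - E θ)⁻¹ * A^2 := by
    intro θ hθ
    have h1 := hne θ (hmem θ hθ)
    rw [hA]
    field_simp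
    ring
  have hJ : (∫ θ in (-(l/2))..(l/2), (z - E θ)⁻¹)
      = (l : ℂ) * A + S * A^2 + Q * A^2 := by
    rw [intervalIntegral.integral_congr hpt]
    have i1 : IntervalIntegrable (fun _ : ℝ => A) MeasureTheory.volume (-(l/2)) (l/2) :=
      intervalIntegrable_const
    have i2 : IntervalIntegrable (fun θ : ℝ => (E θ - 1) * A^2) MeasureTheory.volume (-(l/2)) (l/2) :=
      (((contE.sub continuous_const).mul continuous_const).intervalIntegrable _ _)
    have i3 : IntervalIntegrable (fun θ : ℝ => (E θ - 1)^2 * (z - E θ)⁻¹ * A^2) MeasureTheory.volume (-(l/2)) (l/2) :=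
      (contq.mul continuousOn_const).intervalIntegrable
    rw [intervalIntegral.integral_add (i1.add i2) i3, intervalIntegral.integral_add i1 i2,
      intervalIntegral.integral_const, intervalIntegral.integral_mul_const,
      intervalIntegral.integral_mul_const, ← hS, ← hQ]
    have : (l/2 - -(l/2)) • A = (l : ℂ) * A := by
      rw [Complex.real_smul]
      norm_num
    rw [this]
  have hkey : (z - 1)⁻¹ - ((l:ℝ):ℂ)⁻¹ * (∫ θ in (-(l/2))..(l/2), (z - E θ)⁻¹)
      = -(((l:ℝ):ℂ)⁻¹ * ((S + Q) * A^2)) := by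
    rw [hJ, ← hA]
    field_simp
    ring
  have hgoal : ‖(z - 1)⁻¹ -
      ((l:ℝ):ℂ)⁻¹ * ∫ θ in (-(l/2))..(l/2), (z - Complex.exp ((θ:ℂ) * Complex.I))⁻¹‖
      = ‖-(((l:ℝ):ℂ)⁻¹ * ((S + Q) * A^2))‖ := by
    rw [← hkey]
  rw [hgoal, norm_neg, norm_mul, norm_mul, norm_pow, norm_inv, Complex.norm_real, Real.norm_eq_abs,
    abs_of_pos hl]
  have hAabs : ‖A‖ = r⁻¹ := by rw [hA, norm_inv, hr]
  rw [hAabs]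
  have hSQ : ‖S + Q‖ ≤ l^3/24 + ‖Q‖ :=
    (norm_add_le S Q).trans (by linarith)
  have step : l⁻¹ * ((‖S + Q‖) * (r⁻¹)^2) = ‖S + Q‖ / (l * r^2) := by
    field_simp
  rw [one_mul, step, div_le_div_iff₀ (by positivity) (by positivity)]
  have hQ0 := norm_nonneg Q
  nlinarith [mul_le_mul_of_nonneg_right hSQ (by positivity : (0:ℝ) ≤ r^3),
    mul_le_mul_of_nonneg_right hQb (by positivity : (0:ℝ) ≤ r^2),
    mul_nonneg (mul_nonneg (pow_pos hl 3).le (sq_nonneg r)) (by linarith : (0:ℝ) ≤ 2 - r)]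
end
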